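/- arXiv:math/0206225 — 3 statements merged into one kernel-verified Lean document; each statement's English description precedes it below -/
import Mathlib

section
/- Let α and β be partitions complementary relative to the rectangle □(n,m). If the partition μ has empty 2-core and 2-quotient (α, β), then μ is (n,m)-balanced. -/
open scoped BigOperators

/-- A partition, represented canonically as the multiset of its (positive) parts. -/
structure Ptn where
  parts : Multiset ℕ
  pos : ∀ x ∈ parts, 0 < x

namespace Ptn

/-- Build a partition from an arbitrary multiset of naturals by discarding zero parts. -/
def of (s : Multiset ℕ) : Ptn :=
  ⟨s.filter (fun x => 0 < x), fun _ hx => (Multiset.mem_filter.mp hx).2⟩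

/-- The empty partition. -/
def empty : Ptn := ⟨0, by simp⟩

/-- The `i`-th largest part (`0`-indexed); `0` if `i` is at least the number of parts. -/
def part (l : Ptn) (i : ℕ) : ℕ :=
  ((l.parts.sort (· ≤ ·)).reverse).getD i 0

/-- The number of (positive) parts. -/
def length (l : Ptn) : ℕ := Multiset.card l.parts

/-- The size `|λ|`, i.e. the number being partitioned. -/
def size (l : Ptn) : ℕ := l.parts.sum

/-- A partition is strict if all its parts are distinct. -/
def Strict (l : Ptn) : Prop := l.parts.Nodup

/-- The conjugate partition. -/
def conj (l : Ptn) : Ptn :=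
  of ((Multiset.range (l.part 0)).map
    (fun j => Multiset.card (l.parts.filter (fun x => j < x))))

end Ptn

/-- The rectangular partition `□(n,m)` with `n` rows of length `m`. -/
def rect (n m : ℕ) : Ptn := Ptn.of (Multiset.replicate n m)

/-- The partition obtained by multiplying every part by `r`. -/
def scaleP (r : ℕ) (l : Ptn) : Ptn := Ptn.of (l.parts.map (fun a => r * a))

/-- Diagram containment: every part of `small` is at most the corresponding part of `big`. -/
def Contains (big small : Ptn) : Prop := ∀ i, small.part i ≤ big.part i

/-- The beta-set (first-column hook lengths) `{λ_i + m - 1 - i : i < m}` of `l`,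
computed with `m` beads (`m` at least the number of parts). -/
def betaSet (l : Ptn) (m : ℕ) : Finset ℕ :=
  (Finset.range m).image (fun i => l.part i + (m - 1 - i))

/-- The partition encoded by a finite set of bead positions: each bead contributes a part
equal to the number of empty positions (holes) below it. -/
def ptnOfBeads (B : Finset ℕ) : Ptn :=
  Ptn.of (B.val.map (fun p => p - (B.filter (fun q => q < p)).card))

/-- Levels of the beads on runner `k` of the `r`-abacus of `l`,
drawn with `r * l.length` beads (a multiple of `r`). -/
def runnerLevels (r : ℕ) (l : Ptn) (k : ℕ) : Finset ℕ :=
  (Finset.range (l.part 0 + r * l.length + 1)).filter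
    (fun s => r * s + k ∈ betaSet l (r * l.length))

/-- The `k`-th component `λ[k]` of the `r`-quotient of `l`. -/
def quotP (r : ℕ) (l : Ptn) (k : ℕ) : Ptn := ptnOfBeads (runnerLevels r l k)

/-- The `r`-core of `l`: push all beads of the `r`-abacus down as far as possible. -/
def coreP (r : ℕ) (l : Ptn) : Ptn :=
  ptnOfBeads ((Finset.range r).biUnion
    (fun k => (Finset.range (runnerLevels r l k).card).image (fun s => r * s + k)))

/-- The key of the bead at position `p` for the `r`-numbering of the beads `B`:
a bead which is the `j`-th lowest bead on runner `k` gets key `r * j + k`. -/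
def rKey (r : ℕ) (B : Finset ℕ) (p : ℕ) : ℕ :=
  r * (B.filter (fun q => q % r = p % r ∧ q < p)).card + p % r

/-- The number of inversions between the natural (increasing-position) numbering of the
beads `B` and the numbering by increasing `key`. -/
def inversions (key : ℕ → ℕ) (B : Finset ℕ) : ℕ :=
  ((B ×ˢ B).filter (fun pq => pq.1 < pq.2 ∧ key pq.2 < key pq.1)).card

/-- Exponent of the `r`-sign `δ_r`. -/
def rSignExp (r : ℕ) (l : Ptn) : ℕ :=
  inversions (rKey r (betaSet l (r * l.length))) (betaSet l (r * l.length))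

/-- The `r`-sign `δ_r(λ) ∈ {±1}`. -/
def rSign (r : ℕ) (l : Ptn) : ℤ := (-1) ^ rSignExp r l

/-- The key of the bead at position `p` for the `3`-bar numbering of the beads `B` of the
`3`-bar abacus: first the beads of runner `0` in increasing order, then the pairs of beads
on runners `2` and `1` paired off by increasing level (runner-`2` bead before
runner-`1` bead), then the remaining unpaired beads in increasing order. -/
def barKey (B : Finset ℕ) (p : ℕ) : ℕ :=
  let n0 := (B.filter (fun q => q % 3 = 0)).card
  let t := min ((B.filter (fun q => q % 3 = 1)).card)
              ((B.filter (fun q => q % 3 = 2)).card)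
  let rk := (B.filter (fun q => q % 3 = p % 3 ∧ q < p)).card
  if p % 3 = 0 then rk
  else if rk < t then (if p % 3 = 2 then n0 + 2 * rk else n0 + 2 * rk + 1)
  else n0 + 2 * t + (rk - t)

/-- Exponent of the `3`-bar sign `δ̄_3`.  The beads of the `3`-bar abacus of a strict
partition sit at the positions given by the parts. -/
def barSignExp (l : Ptn) : ℕ :=
  inversions (barKey l.parts.toFinset) l.parts.toFinset

/-- The `3`-bar sign `δ̄_3(λ) ∈ {±1}` of a strict partition. -/
def barSign3 (l : Ptn) : ℤ := (-1) ^ barSignExp l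

/-- The double `D(λ) = (λ_1,…,λ_l | λ_1 - 1,…,λ_l - 1)` (Frobenius notation)
of a strict partition `λ`, constructed row by row. -/
noncomputable def double (l : Ptn) : Ptn :=
  Ptn.of ((Multiset.range (l.length + l.part 0)).map (fun i =>
    (if i < l.length then l.part i + 1 else 0) +
      ((Finset.range (min i l.length)).filter (fun j => i + 1 ≤ j + l.part j)).card))

/-- The second component `λ^b[1] = D(λ)[1]` of the `3`-bar quotient of a strict
partition `λ`. -/
noncomputable def barQuot1 (l : Ptn) : Ptn := quotP 3 (double l) 1

/-- The staircase-like strict partition `Λ_ℓ = (3ℓ-2, 3ℓ-5, …, 7, 4, 1)`. -/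
def LamP (ℓ : ℕ) : Ptn := Ptn.of ((Multiset.range ℓ).map (fun i => 3 * i + 1))

/-- The staircase partition `Δ_ℓ = (ℓ, ℓ-1, …, 1)`. -/
def DelP (ℓ : ℕ) : Ptn := Ptn.of (Multiset.range (ℓ + 1))

/-- `F_1^m(Λ_ℓ)`: strict partitions obtained from `Λ_ℓ` by adding `m` cells, each
labelled `1`, where the cell in (0-indexed) column `j` is labelled `1` iff `j % 3 = 1`
(each row reads `0,1,0,0,1,0,…`). -/
def F1Lam (ℓ m : ℕ) : Set Ptn :=
  {mu | mu.Strict ∧ Contains mu (LamP ℓ) ∧ mu.size = (LamP ℓ).size + m ∧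
    ∀ i j, (LamP ℓ).part i ≤ j → j < mu.part i → j % 3 = 1}

/-- `F_1^m(Δ_ℓ)`: partitions obtained from `Δ_ℓ` by adding `m` cells, each labelled `1`,
where the cell `(i,j)` is labelled `1` iff `i + j` is odd. -/
def F1Del (ℓ m : ℕ) : Set Ptn :=
  {mu | Contains mu (DelP ℓ) ∧ mu.size = (DelP ℓ).size + m ∧
    ∀ i j, (DelP ℓ).part i ≤ j → j < mu.part i → (i + j) % 2 = 1}

/-- `(α, β)` is complementary relative to the rectangle `□(n,m)`:
`α ⊆ □(n,m)` and `β_i = m - α_{n+1-i}` for `1 ≤ i ≤ n` (0-indexed below). -/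
def Complementary (n m : ℕ) (a b : Ptn) : Prop :=
  a.length ≤ n ∧ a.part 0 ≤ m ∧ b.length ≤ n ∧
    ∀ i < n, b.part i = m - a.part (n - 1 - i)

/-- `W(n,m)`: the set of `(n,m)`-balanced partitions, i.e. partitions of `2nm` with at
most `2n` parts satisfying `μ_i + μ_{2n+1-i} = 2m` for `1 ≤ i ≤ n` (0-indexed below). -/
def W (n m : ℕ) : Set Ptn :=
  {mu | mu.size = 2 * n * m ∧ mu.length ≤ 2 * n ∧
    ∀ i < n, mu.part i + mu.part (2 * n - 1 - i) = 2 * m}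

/-! ### The ring of symmetric functions

We realise the ring of symmetric functions (with rational coefficients) as the
polynomial ring `ℚ[p_1, p_2, …]` in the power sums: the variable `X n` of
`MvPolynomial ℕ ℚ` stands for the power sum `p_{n+1}`. -/

abbrev SymF := MvPolynomial ℕ ℚ

open MvPolynomial

/-- `z_ρ = ∏ a^{m_a} m_a!` for a partition given as a multiset `ρ`. -/
def zval (s : Multiset ℕ) : ℚ :=
  s.toFinset.prod (fun a => (a : ℚ) ^ s.count a * (Nat.factorial (s.count a) : ℚ))

/-- The power sum product `p_ρ` of a multiset `ρ`. -/
noncomputable def pMult (s : Multiset ℕ) : SymF :=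
  (s.map (fun a => (X (a - 1) : SymF))).prod

/-- The complete homogeneous symmetric function `h_n = Σ_{ρ ⊢ n} z_ρ⁻¹ p_ρ`. -/
noncomputable def hSym (n : ℕ) : SymF :=
  ∑ ρ : Nat.Partition n, (zval ρ.parts)⁻¹ • pMult ρ.parts

/-- `h_k` for an integer index, vanishing for negative `k`. -/
noncomputable def hz (k : ℤ) : SymF := if k < 0 then 0 else hSym k.toNat

/-- The Schur function `S_λ`, via the Jacobi–Trudi formula
`S_λ = det(h_{λ_i - i + j})`. -/
noncomputable def schur (l : Ptn) : SymF :=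
  Matrix.det (Matrix.of (fun i j : Fin l.length =>
    hz ((l.part i.val : ℤ) + (j.val : ℤ) - (i.val : ℤ))))

/-- The plethysm `p_r ∘ f`: the algebra endomorphism sending each power sum `p_k`
to `p_{rk}`, i.e. substituting `x_i^r` for each variable `x_i`. -/
noncomputable def pleth (r : ℕ) (f : SymF) : SymF :=
  MvPolynomial.aeval (fun n => (X (r * (n + 1) - 1) : SymF)) f

/-- The `z`-weight of a power-sum monomial (exponent vector `d`). -/
def zfac (d : ℕ →₀ ℕ) : ℚ :=
  d.prod (fun i e => ((i : ℚ) + 1) ^ e * (Nat.factorial e : ℚ))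

/-- The Hall inner product, for which `⟨p_ρ, p_σ⟩ = δ_{ρσ} z_ρ` and the Schur
functions are orthonormal. -/
noncomputable def hall (f g : SymF) : ℚ :=
  f.support.sum (fun d => f.coeff d * g.coeff d * zfac d)

/-- The multi-Littlewood–Richardson coefficient `LR^λ_{μ^0,…,μ^{r-1}}`:
the multiplicity of `S_λ` in `S_{μ^0} ⋯ S_{μ^{r-1}}`. -/
noncomputable def LRmulti (lam : Ptn) (r : ℕ) (q : ℕ → Ptn) : ℚ :=
  hall ((Finset.range r).prod (fun k => schur (q k))) (schur lam)

/-- The Littlewood–Richardson coefficient `LR^λ_{α,β}`: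
the multiplicity of `S_λ` in `S_α · S_β`. -/
noncomputable def LR2 (lam a b : Ptn) : ℚ := hall (schur a * schur b) (schur lam)

/-- The irreducible symmetric group character `χ^μ(ρ)`, via the Frobenius formula
`χ^μ_ρ = ⟨S_μ, p_ρ⟩`. -/
noncomputable def chi (mu rho : Ptn) : ℚ := hall (schur mu) (pMult rho.parts)

/-- Symmetric functions in two alphabets `u`, `v`: `X (inl n)` is `p_{n+1}(u)` and
`X (inr n)` is `p_{n+1}(v)`. -/
abbrev SymF2 := MvPolynomial (ℕ ⊕ ℕ) ℚ

/-- `f ↦ f(u)`. -/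
noncomputable def toU : SymF →ₐ[ℚ] SymF2 :=
  aeval (fun n => (X (Sum.inl n) : SymF2))

/-- `f ↦ f(v)`. -/
noncomputable def toV : SymF →ₐ[ℚ] SymF2 :=
  aeval (fun n => (X (Sum.inr n) : SymF2))

/-- `f ↦ f(u - v)`, the difference of alphabets: `p_k ↦ p_k(u) - p_k(v)`. -/
noncomputable def toUV : SymF →ₐ[ℚ] SymF2 :=
  aeval (fun n => (X (Sum.inl n) : SymF2) - X (Sum.inr n))

namespace Aux

def mpart (s : Multiset ℕ) (j : ℕ) : ℕ := ((s.sort (· ≤ ·)).reverse).getD j 0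

lemma ptn_part (l : Ptn) (j : ℕ) : l.part j = mpart l.parts j := rfl

lemma sorted_rev (c : ℕ) (f : ℕ → ℕ) (hf : ∀ ⦃i j⦄, i ≤ j → j < c → f j ≤ f i) :
    (((List.range c).map f).reverse).Pairwise (· ≤ ·) := by
  rw [List.pairwise_reverse, List.pairwise_map]
  exact (List.pairwise_lt_range (n := c)).imp_of_mem (fun {i j} hi hj hij =>
    hf hij.le (List.mem_range.mp hj))

lemma mpart_map (c : ℕ) (f : ℕ → ℕ) (hf : ∀ ⦃i j⦄, i ≤ j → j < c → f j ≤ f i) (j : ℕ) :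
    mpart ((Multiset.range c).map f) j = if j < c then f j else 0 := by
  have h1 : Multiset.sort ((Multiset.range c).map f) (· ≤ ·)
      = ((List.range c).map f).reverse := by
    apply List.Perm.eq_of_pairwise' (Multiset.pairwise_sort _ _) (sorted_rev c f hf)
    apply Multiset.coe_eq_coe.mp
    rw [Multiset.sort_eq, Multiset.coe_reverse]
    rfl
  rw [mpart, h1, List.reverse_reverse]
  split
  · next h =>
    rw [List.getD_eq_getElem _ _ (by simpa using h)]
    simp
  · next h =>
    exact List.getD_eq_default _ _ (by simpa using Nat.le_of_not_lt h)

end Aux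
namespace Aux

lemma parts_eq (l : Ptn) : l.parts = (Multiset.range l.length).map l.part := by
  classical
  set R := (l.parts.sort (· ≤ ·)).reverse with hR
  have hlen : R.length = l.length := by
    rw [hR, List.length_reverse, Multiset.length_sort]; rfl
  have h2 : (List.range l.length).map l.part = R := by
    apply List.ext_getElem (by simpa using hlen.symm)
    intro i h1 h2
    simp only [List.getElem_map, List.getElem_range]
    rw [Ptn.part, ← hR, List.getD_eq_getElem _ _ (by omega)]
  have h3 : l.parts = (↑R : Multiset ℕ) := by
    rw [hR, Multiset.coe_reverse, Multiset.sort_eq]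
  rw [h3, ← h2]
  rfl

lemma part_zero (l : Ptn) {j : ℕ} (h : l.length ≤ j) : l.part j = 0 := by
  apply List.getD_eq_default
  rw [List.length_reverse, Multiset.length_sort]
  exact h

lemma part_pos (l : Ptn) {j : ℕ} (h : j < l.length) : 0 < l.part j := by
  apply l.pos
  rw [parts_eq l]
  exact Multiset.mem_map.mpr ⟨j, Multiset.mem_range.mpr h, rfl⟩

lemma part_antitone (l : Ptn) {i j : ℕ} (hij : i ≤ j) : l.part j ≤ l.part i := by
  rcases Nat.lt_or_ge j l.length with h | h
  · have hs := l.parts.pairwise_sort (· ≤ ·)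
    have hlen : ((l.parts.sort (· ≤ ·)).reverse).length = l.length := by
      rw [List.length_reverse, Multiset.length_sort]; rfl
    have hrev : List.Pairwise (fun a b => b ≤ a) ((l.parts.sort (· ≤ ·)).reverse) :=
      List.pairwise_reverse.mpr hs
    rw [Ptn.part, Ptn.part, List.getD_eq_getElem _ _ (by omega),
      List.getD_eq_getElem _ _ (by omega)]
    rcases Nat.eq_or_lt_of_le hij with rfl | hij'
    · exact le_refl _
    · exact List.pairwise_iff_getElem.mp hrev i j _ _ hij'
  · rw [part_zero l h]; exact Nat.zero_le _

lemma length_le_of_part_zero (l : Ptn) {j : ℕ} (h : l.part j = 0) : l.length ≤ j := by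
  by_contra hcon
  have := part_pos l (Nat.lt_of_not_le hcon)
  omega
  
end Aux
namespace Aux

lemma of_part (s : Multiset ℕ) (j : ℕ) : (Ptn.of s).part j = mpart s j := by
  classical
  rw [ptn_part]
  show mpart (s.filter (fun x => 0 < x)) j = mpart s j
  have hz : s.filter (fun x => ¬ 0 < x) = Multiset.replicate (Multiset.card (s.filter (fun x => ¬ 0 < x))) 0 := by
    rw [Multiset.eq_replicate]
    exact ⟨rfl, fun b hb => by have := (Multiset.mem_filter.mp hb).2; omega⟩
  set Z := Multiset.card (s.filter (fun x => ¬ 0 < x)) with hZ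
  have hsplit : Multiset.sort s (· ≤ ·)
      = (List.replicate Z 0) ++ Multiset.sort (s.filter (fun x => 0 < x)) (· ≤ ·) := by
    refine (fun hl hs => List.Perm.eq_of_pairwise' (Multiset.pairwise_sort _ _) hs hl) ?_ ?_
    · apply Multiset.coe_eq_coe.mp
      rw [Multiset.sort_eq, ← Multiset.coe_add,
        show ((List.replicate Z 0 : List ℕ) : Multiset ℕ) = Multiset.replicate Z 0
          from Multiset.coe_replicate _ _, ← hz, Multiset.sort_eq]
      rw [add_comm, Multiset.filter_add_not]
    · refine List.pairwise_append.mpr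
        ⟨List.pairwise_replicate.mpr (Or.inr (le_refl 0)), Multiset.pairwise_sort _ _, ?_⟩
      intro x hx y hy
      have := List.eq_of_mem_replicate hx
      omega
  rw [mpart, mpart, hsplit, List.reverse_append, List.reverse_replicate]
  set P := Multiset.sort (s.filter (fun x => 0 < x)) (· ≤ ·) with hP
  rcases Nat.lt_or_ge j P.length with h | h
  · rw [List.getD_append _ _ _ _ (by simpa using h)]
  · rw [List.getD_eq_default _ _ (by simpa using h)]
    rcases Nat.lt_or_ge j (P.reverse ++ List.replicate Z 0).length with h2 | h2
    · rw [List.getD_eq_getElem _ _ h2]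
      have : (P.reverse ++ List.replicate Z 0)[j] ∈ List.replicate Z 0 := by
        rw [List.getElem_append_right (by simpa using h)]
        exact List.getElem_mem _
      exact (List.eq_of_mem_replicate this).symm
    · rw [List.getD_eq_default _ _ h2]

end Aux
namespace Aux

lemma mem_betaSet {l : Ptn} {M p : ℕ} :
    p ∈ betaSet l M ↔ ∃ i, i < M ∧ p = l.part i + (M - 1 - i) := by
  unfold betaSet
  simp only [Finset.mem_image, Finset.mem_range]
  exact ⟨fun ⟨i, h1, h2⟩ => ⟨i, h1, h2.symm⟩, fun ⟨i, h1, h2⟩ => ⟨i, h1, h2.symm⟩⟩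

lemma xi_lt {l : Ptn} {M i j : ℕ} (hij : i < j) (hj : j < M) :
    l.part j + (M - 1 - j) < l.part i + (M - 1 - i) := by
  have := part_antitone l hij.le
  omega

lemma xi_inj {l : Ptn} {M i j : ℕ} (hi : i < M) (hj : j < M)
    (h : l.part i + (M - 1 - i) = l.part j + (M - 1 - j)) : i = j := by
  rcases lt_trichotomy i j with hlt | heq | hgt
  · exact absurd h (Nat.ne_of_gt (xi_lt hlt hj))
  · exact heq
  · exact absurd h (Nat.ne_of_lt (xi_lt hgt hi))

lemma card_betaSet (l : Ptn) (M : ℕ) : (betaSet l M).card = M := by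
  unfold betaSet
  rw [Finset.card_image_of_injOn, Finset.card_range]
  intro i hi j hj h
  exact xi_inj (Finset.mem_range.mp hi) (Finset.mem_range.mp hj) h

lemma betaSet_le {l : Ptn} {M p : ℕ} (h : p ∈ betaSet l M) : p ≤ l.part 0 + M - 1 := by
  obtain ⟨i, hi, rfl⟩ := mem_betaSet.mp h
  have := part_antitone l (Nat.zero_le i)
  omega

lemma count_below {l : Ptn} {M i : ℕ} (hi : i < M) :
    ((betaSet l M).filter (· < l.part i + (M - 1 - i))).card = M - 1 - i := by
  classical
  unfold betaSet
  rw [Finset.filter_image]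
  have hset : (Finset.range M).filter
      (fun j => l.part j + (M - 1 - j) < l.part i + (M - 1 - i))
      = (Finset.range M).filter (fun j => i < j) := by
    apply Finset.filter_congr
    intro j hj
    rw [Finset.mem_range] at hj
    constructor
    · intro hlt
      by_contra hcon
      rcases Nat.eq_or_lt_of_le (Nat.le_of_not_lt hcon) with heq | hji
      · subst heq; omega
      · have := xi_lt (l := l) hji hi
        omega
    · intro hij
      exact xi_lt hij hj
  rw [hset]
  have : (Finset.range M).filter (fun j => i < j) = Finset.Ico (i+1) M := by
    ext x; simp [Finset.mem_Ico]; omega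
  rw [this, Finset.card_image_of_injOn, Nat.card_Ico]
  · omega
  · intro x hx y hy h
    rw [Finset.mem_coe, Finset.mem_Ico] at hx hy
    exact xi_inj (by omega) (by omega) h

lemma eq_of_count {S : Finset ℕ} {x y : ℕ} (hx : x ∈ S) (hy : y ∈ S)
    (h : (S.filter (· < x)).card = (S.filter (· < y)).card) : x = y := by
  classical
  rcases lt_trichotomy x y with hlt | heq | hgt
  · have : S.filter (· < x) ⊂ S.filter (· < y) := by
      refine ⟨fun p hp => ?_, fun hsub => ?_⟩
      · rw [Finset.mem_filter] at hp ⊢; exact ⟨hp.1, by omega⟩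
      · have := hsub (Finset.mem_filter.mpr ⟨hx, hlt⟩)
        exact absurd (Finset.mem_filter.mp this).2 (lt_irrefl x)
    exact absurd h (Nat.ne_of_lt (Finset.card_lt_card this))
  · exact heq
  · have : S.filter (· < y) ⊂ S.filter (· < x) := by
      refine ⟨fun p hp => ?_, fun hsub => ?_⟩
      · rw [Finset.mem_filter] at hp ⊢; exact ⟨hp.1, by omega⟩
      · have := hsub (Finset.mem_filter.mpr ⟨hy, hgt⟩)
        exact absurd (Finset.mem_filter.mp this).2 (lt_irrefl y)
    exact absurd h (Nat.ne_of_gt (Finset.card_lt_card this))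

end Aux
namespace Aux

section Beads

variable (S : Finset ℕ)

/-- increasing enumeration -/
noncomputable def en : Fin S.card ↪o ℕ := S.orderEmbOfFin rfl

lemma en_mem (i : Fin S.card) : en S i ∈ S := Finset.orderEmbOfFin_mem S rfl i

lemma en_surj {q : ℕ} (hq : q ∈ S) : ∃ i, en S i = q := by
  have h := Finset.range_orderEmbOfFin S (rfl : S.card = S.card)
  have : q ∈ Set.range (S.orderEmbOfFin rfl) := by rw [h]; exact hq
  exact this

lemma count_en (i : Fin S.card) :
    (S.filter (· < en S i)).card = (i : ℕ) := by
  classical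
  have hset : S.filter (· < en S i) = Finset.map (en S).toEmbedding (Finset.Iio i) := by
    ext q
    simp only [Finset.mem_filter, Finset.mem_map, Finset.mem_Iio, RelEmbedding.coe_toEmbedding]
    constructor
    · rintro ⟨hq, hlt⟩
      obtain ⟨j, rfl⟩ := en_surj S hq
      exact ⟨j, (en S).lt_iff_lt.mp hlt, rfl⟩
    · rintro ⟨j, hj, rfl⟩
      exact ⟨en_mem S j, (en S).lt_iff_lt.mpr hj⟩
  rw [hset, Finset.card_map, Fin.card_Iio]

lemma en_add : ∀ (d : ℕ) (a b : Fin S.card), (a : ℕ) = (b : ℕ) + d →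
    en S b + d ≤ en S a := by
  intro d
  induction d with
  | zero =>
    intro a b h
    have : a = b := Fin.ext (by omega)
    subst this; exact le_refl _
  | succ d ih =>
    intro a b h
    have hb1 : (b : ℕ) + 1 < S.card := by have := a.is_lt; omega
    have hlt : en S b < en S ⟨(b : ℕ) + 1, hb1⟩ :=
      (en S).strictMono (by rw [Fin.lt_def]; simp)
    have := ih a ⟨(b : ℕ) + 1, hb1⟩ (by simp; omega)
    omega

lemma en_ge (b : Fin S.card) : (b : ℕ) ≤ en S b := by
  have h0 : (0 : ℕ) < S.card := by have := b.is_lt; omega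
  have := en_add S b b ⟨0, h0⟩ (by simp)
  omega

end Beads

end Aux
namespace Aux

section Beads2

variable (S : Finset ℕ)

/-- descending enumeration, 0 out of range -/
noncomputable def den (j : ℕ) : ℕ :=
  if h : j < S.card then en S ⟨S.card - 1 - j, by omega⟩ else 0

lemma den_mem {j : ℕ} (h : j < S.card) : den S j ∈ S := by
  rw [den, dif_pos h]; exact en_mem S _

lemma den_surj {q : ℕ} (hq : q ∈ S) : ∃ j, j < S.card ∧ den S j = q := by
  obtain ⟨i, rfl⟩ := en_surj S hq
  refine ⟨S.card - 1 - (i : ℕ), by have := i.is_lt; omega, ?_⟩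
  rw [den, dif_pos (by have := i.is_lt; omega)]
  congr 1
  apply Fin.ext
  simp only [Fin.val_mk]
  have := i.is_lt; omega

lemma den_step {i j : ℕ} (hij : i ≤ j) (hj : j < S.card) :
    den S j + (j - i) ≤ den S i := by
  rw [den, den, dif_pos hj, dif_pos (by omega)]
  have := en_add S (j - i) ⟨S.card - 1 - i, by omega⟩ ⟨S.card - 1 - j, by omega⟩
    (by simp only [Fin.val_mk]; omega)
  exact this

lemma den_ge {j : ℕ} (hj : j < S.card) : S.card - 1 - j ≤ den S j := by
  rw [den, dif_pos hj]
  exact en_ge S ⟨S.card - 1 - j, by omega⟩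

lemma den_count {j : ℕ} (hj : j < S.card) :
    (S.filter (· < den S j)).card = S.card - 1 - j := by
  rw [den, dif_pos hj]
  exact count_en S ⟨S.card - 1 - j, by omega⟩

lemma den_inj (x y : Fin S.card) (h : den S (x : ℕ) = den S (y : ℕ)) : x = y := by
  apply Fin.ext
  by_contra hne
  rcases Nat.lt_or_ge (x : ℕ) (y : ℕ) with hlt | hge
  · have := den_step S hlt.le y.is_lt
    omega
  · have hlt : (y : ℕ) < (x : ℕ) := by omega
    have := den_step S hlt.le x.is_lt
    omega

noncomputable def denEmb : Fin S.card ↪ ℕ :=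
  ⟨fun j => den S (j : ℕ), den_inj S⟩

lemma val_eq_den : S.val = (Multiset.range S.card).map (den S) := by
  classical
  have hmap : Finset.map (denEmb S) Finset.univ = S := by
    apply Finset.eq_of_subset_of_card_le
    · intro q hq
      simp only [Finset.mem_map, Finset.mem_univ, true_and] at hq
      obtain ⟨j, rfl⟩ := hq
      exact den_mem S j.is_lt
    · rw [Finset.card_map, Finset.card_univ, Fintype.card_fin]
  conv_lhs => rw [← hmap]
  rw [Finset.map_val]
  have h2 : Multiset.range S.card = (Finset.univ : Finset (Fin S.card)).val.map Fin.val := by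
    calc Multiset.range S.card = (Finset.range S.card).val := rfl
      _ = (Finset.map Fin.valEmbedding Finset.univ).val := by
          rw [Fin.map_valEmbedding_univ, Nat.Iio_eq_range]
      _ = (Finset.univ : Finset (Fin S.card)).val.map Fin.val := Finset.map_val _ _
  rw [h2, Multiset.map_map]
  rfl

end Beads2

end Aux
namespace Aux

lemma ptnOfBeads_part (S : Finset ℕ) (j : ℕ) :
    (ptnOfBeads S).part j = if j < S.card then den S j - (S.card - 1 - j) else 0 := by
  classical
  show (Ptn.of (S.val.map (fun p => p - (S.filter (fun q => q < p)).card))).part j = _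
  rw [of_part, val_eq_den, Multiset.map_map]
  rw [mpart_map S.card _ ?hf j]
  case hf =>
    intro i j hij hj
    simp only [Function.comp_apply]
    have hci := den_count S (j := i) (by omega)
    have hcj := den_count S (j := j) hj
    have hstep := den_step S hij hj
    have hgi := den_ge S (j := i) (by omega)
    have hgj := den_ge S hj
    rw [hci, hcj]
    omega
  split
  · next h =>
    simp only [Function.comp_apply]
    rw [show (S.filter (fun q => q < den S j)) = (S.filter (· < den S j)) from rfl,
      den_count S h]
  · rfl

lemma ptnOfBeads_length (S : Finset ℕ) : (ptnOfBeads S).length ≤ S.card := by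
  apply length_le_of_part_zero
  rw [ptnOfBeads_part, if_neg (lt_irrefl S.card)]

lemma betaSet_ptnOfBeads (S : Finset ℕ) : betaSet (ptnOfBeads S) S.card = S := by
  ext p
  rw [mem_betaSet]
  constructor
  · rintro ⟨i, hi, rfl⟩
    rw [ptnOfBeads_part, if_pos hi]
    have := den_ge S hi
    have : den S i - (S.card - 1 - i) + (S.card - 1 - i) = den S i := by omega
    rw [this]
    exact den_mem S hi
  · intro hp
    obtain ⟨i, hi, rfl⟩ := den_surj S hp
    refine ⟨i, hi, ?_⟩
    rw [ptnOfBeads_part, if_pos hi]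
    have := den_ge S hi
    omega

end Aux
namespace Aux

lemma shift (l : Ptn) (M k : ℕ) (hl : l.length ≤ M) (p : ℕ) :
    p ∈ betaSet l (M + k) ↔ (p < k ∨ (k ≤ p ∧ p - k ∈ betaSet l M)) := by
  rw [mem_betaSet]
  constructor
  · rintro ⟨i, hi, rfl⟩
    rcases Nat.lt_or_ge i M with h | h
    · right
      refine ⟨by omega, ?_⟩
      rw [mem_betaSet]
      exact ⟨i, h, by omega⟩
    · left
      rw [part_zero l (le_trans hl h)]
      omega
  · rintro (h | ⟨h1, h2⟩)
    · refine ⟨M + k - 1 - p, by omega, ?_⟩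
      rw [part_zero l (by omega)]
      omega
    · rw [mem_betaSet] at h2
      obtain ⟨i, hi, he⟩ := h2
      exact ⟨i, by omega, by omega⟩

lemma mem_runnerLevels {r : ℕ} (hr : 0 < r) (l : Ptn) (k s : ℕ) :
    s ∈ runnerLevels r l k ↔ r * s + k ∈ betaSet l (r * l.length) := by
  rw [runnerLevels, Finset.mem_filter, Finset.mem_range]
  constructor
  · exact fun h => h.2
  · intro h
    refine ⟨?_, h⟩
    have h1 := betaSet_le h
    have h2 : s ≤ r * s := Nat.le_mul_of_pos_left s hr
    omega

lemma mem_betaSet_empty (c p : ℕ) : p ∈ betaSet Ptn.empty c ↔ p < c := by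
  rw [mem_betaSet]
  constructor
  · rintro ⟨i, hi, rfl⟩
    rw [part_zero _ (Nat.zero_le i)]
    omega
  · intro h
    refine ⟨c - 1 - p, by omega, ?_⟩
    rw [part_zero _ (Nat.zero_le _)]
    omega

section Main

variable (μ : Ptn)

lemma runner_card : (runnerLevels 2 μ 0).card + (runnerLevels 2 μ 1).card = 2 * μ.length := by
  classical
  set M0 := runnerLevels 2 μ 0
  set M1 := runnerLevels 2 μ 1
  have hE : M0.image (fun s => 2 * s) ∪ M1.image (fun s => 2 * s + 1)
      = betaSet μ (2 * μ.length) := by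
    ext p
    simp only [Finset.mem_union, Finset.mem_image]
    constructor
    · rintro (⟨s, hs, rfl⟩ | ⟨s, hs, rfl⟩)
      · have := (mem_runnerLevels (by norm_num) μ 0 s).mp hs
        simpa using this
      · exact (mem_runnerLevels (by norm_num) μ 1 s).mp hs
    · intro hp
      rcases Nat.even_or_odd p with ⟨t, rfl⟩ | ⟨t, rfl⟩
      · left
        refine ⟨t, ?_, by omega⟩
        rw [mem_runnerLevels (by norm_num)]
        have : 2 * t + 0 = t + t := by omega
        rw [this]
        exact hp
      · right
        refine ⟨t, ?_, by omega⟩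
        rw [mem_runnerLevels (by norm_num)]
        exact hp
  have hcard := card_betaSet μ (2 * μ.length)
  rw [← hE, Finset.card_union_of_disjoint, Finset.card_image_of_injective _ (fun x y h => by omega),
    Finset.card_image_of_injective _ (fun x y h => by omega)] at hcard
  · exact hcard
  · rw [Finset.disjoint_left]
    intro p hp hq
    simp only [Finset.mem_image] at hp hq
    obtain ⟨s, _, rfl⟩ := hp
    obtain ⟨t, _, ht⟩ := hq
    omega

end Main

end Aux
namespace Aux

section Main2

variable {μ a b : Ptn}

lemma core_empty_levels (h0 : coreP 2 μ = Ptn.empty) :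
    (runnerLevels 2 μ 0).card = μ.length ∧ (runnerLevels 2 μ 1).card = μ.length := by
  classical
  set m0 := (runnerLevels 2 μ 0).card with hm0
  set m1 := (runnerLevels 2 μ 1).card with hm1
  have hsum := runner_card μ
  set T := (Finset.range 2).biUnion
    (fun k => (Finset.range (runnerLevels 2 μ k).card).image (fun s => 2 * s + k)) with hT
  have hTmem : ∀ p, p ∈ T ↔ ((p % 2 = 0 ∧ p / 2 < m0) ∨ (p % 2 = 1 ∧ p / 2 < m1)) := by
    intro p
    rw [hT, Finset.mem_biUnion]
    constructor
    · rintro ⟨k, hk, hp⟩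
      simp only [Finset.mem_image, Finset.mem_range] at hp hk
      obtain ⟨s, hs, rfl⟩ := hp
      interval_cases k
      · exact Or.inl ⟨by omega, by omega⟩
      · exact Or.inr ⟨by omega, by omega⟩
    · rintro (⟨hp, hs⟩ | ⟨hp, hs⟩)
      · refine ⟨0, by norm_num, ?_⟩
        simp only [Finset.mem_image, Finset.mem_range]
        exact ⟨p / 2, hs, by omega⟩
      · refine ⟨1, by norm_num, ?_⟩
        simp only [Finset.mem_image, Finset.mem_range]
        exact ⟨p / 2, hs, by omega⟩
  have hTcard : T.card = m0 + m1 := by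
    rw [hT]
    rw [Finset.card_biUnion]
    · rw [show Finset.range 2 = {0, 1} by rfl]
      rw [Finset.sum_insert (by norm_num), Finset.sum_singleton]
      rw [Finset.card_image_of_injective _ (fun x y h => by omega),
        Finset.card_image_of_injective _ (fun x y h => by omega)]
      simp [hm0, hm1]
    · intro x hx y hy hxy
      rw [Function.onFun, Finset.disjoint_left]
      intro p hp hq
      simp only [Finset.mem_image, Finset.mem_range, Finset.mem_coe] at hp hq hx hy
      obtain ⟨s, _, rfl⟩ := hp
      obtain ⟨t, _, ht⟩ := hq
      omega
  have hrange : ∀ p, p ∈ T ↔ p < T.card := by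
    intro p
    have h1 := betaSet_ptnOfBeads T
    have h2 : ptnOfBeads T = Ptn.empty := h0
    rw [h2] at h1
    rw [← h1, mem_betaSet_empty, card_betaSet]
  have c1 : ¬ (2 * m0 < T.card) := by
    intro hcon
    have := (hTmem (2 * m0)).mpr
    have h2 := (hrange (2 * m0)).mpr hcon
    rw [hTmem] at h2
    omega
  have c2 : ¬ (2 * m1 + 1 < T.card) := by
    intro hcon
    have h2 := (hrange (2 * m1 + 1)).mpr hcon
    rw [hTmem] at h2
    omega
  omega

lemma quot_betaSet (h0 : coreP 2 μ = Ptn.empty) (h1 : quotP 2 μ 0 = a) (h2 : quotP 2 μ 1 = b) :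
    betaSet a μ.length = runnerLevels 2 μ 0 ∧ betaSet b μ.length = runnerLevels 2 μ 1 ∧
      a.length ≤ μ.length ∧ b.length ≤ μ.length := by
  obtain ⟨hc0, hc1⟩ := core_empty_levels h0
  refine ⟨?_, ?_, ?_, ?_⟩
  · rw [← h1]
    show betaSet (ptnOfBeads _) _ = _
    rw [← hc0]
    exact betaSet_ptnOfBeads _
  · rw [← h2]
    show betaSet (ptnOfBeads _) _ = _
    rw [← hc1]
    exact betaSet_ptnOfBeads _
  · rw [← h1, ← hc0]; exact ptnOfBeads_length _
  · rw [← h2, ← hc1]; exact ptnOfBeads_length _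

def SplitP (a b : Ptn) (K : ℕ) (μ : Ptn) : Prop :=
  ∀ p, p ∈ betaSet μ (2 * K) ↔
    ((p % 2 = 0 ∧ p / 2 ∈ betaSet a K) ∨ (p % 2 = 1 ∧ p / 2 ∈ betaSet b K))

lemma split_at_length (h0 : coreP 2 μ = Ptn.empty) (h1 : quotP 2 μ 0 = a)
    (h2 : quotP 2 μ 1 = b) : SplitP a b μ.length μ := by
  obtain ⟨ha, hb, _, _⟩ := quot_betaSet h0 h1 h2
  intro p
  rw [ha, hb]
  constructor
  · intro hp
    rcases Nat.even_or_odd p with ⟨t, rfl⟩ | ⟨t, rfl⟩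
    · left
      refine ⟨by omega, ?_⟩
      rw [mem_runnerLevels (by norm_num)]
      have he : 2 * ((t + t) / 2) + 0 = t + t := by omega
      rw [he]
      exact hp
    · right
      refine ⟨by omega, ?_⟩
      rw [mem_runnerLevels (by norm_num)]
      have he : 2 * ((2 * t + 1) / 2) + 1 = 2 * t + 1 := by omega
      rw [he]
      exact hp
  · rintro (⟨hp, hs⟩ | ⟨hp, hs⟩)
    · rw [mem_runnerLevels (by norm_num)] at hs
      have he : 2 * (p / 2) + 0 = p := by omega
      rwa [he] at hs
    · rw [mem_runnerLevels (by norm_num)] at hs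
      have he : 2 * (p / 2) + 1 = p := by omega
      rwa [he] at hs

end Main2

end Aux
namespace Aux

section Main3

variable {μ a b : Ptn} {n : ℕ}

lemma not_mem_length (μ : Ptn) : μ.length ∉ betaSet μ (2 * μ.length) := by
  intro h
  obtain ⟨i, hi, he⟩ := mem_betaSet.mp h
  rcases Nat.lt_or_ge i μ.length with hl | hl
  · have := part_pos μ hl
    omega
  · have := part_zero μ hl
    omega

lemma mem_staircase (μ : Ptn) {p : ℕ} (hp : p < μ.length) : p ∈ betaSet μ (2 * μ.length) := by
  rw [mem_betaSet]
  refine ⟨2 * μ.length - 1 - p, by omega, ?_⟩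
  rw [part_zero μ (by omega)]
  omega

lemma length_le_two_n (hS : SplitP a b μ.length μ) (ha : a.length ≤ n) (hb : b.length ≤ n) :
    μ.length ≤ 2 * n := by
  set L := μ.length with hL
  rcases Nat.eq_zero_or_pos L with h0 | h0
  · omega
  have hnot := not_mem_length μ
  have hiff := hS L
  rcases Nat.even_or_odd L with ⟨c, hc⟩ | ⟨c, hc⟩
  · -- L = c + c, c ∉ betaSet a L
    have hcnot : c ∉ betaSet a L := by
      intro hcmem
      exact hnot (hiff.mpr (Or.inl ⟨by omega, by rw [show L / 2 = c by omega]; exact hcmem⟩))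
    have hapos : 0 < a.part (c - 1) := by
      by_contra hz
      apply hcnot
      rw [mem_betaSet]
      exact ⟨c - 1, by omega, by omega⟩
    have : c - 1 < a.length := by
      by_contra hcon
      have := part_zero a (Nat.le_of_not_lt hcon)
      omega
    omega
  · -- L = 2c+1, c ∉ betaSet b L
    have hcnot : c ∉ betaSet b L := by
      intro hcmem
      exact hnot (hiff.mpr (Or.inr ⟨by omega, by rw [show L / 2 = c by omega]; exact hcmem⟩))
    have hbpos : 0 < b.part c := by
      by_contra hz
      apply hcnot
      rw [mem_betaSet]
      exact ⟨c, by omega, by omega⟩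
    have : c < b.length := by
      by_contra hcon
      have := part_zero b (Nat.le_of_not_lt hcon)
      omega
    omega

lemma transfer {K : ℕ} (ha : a.length ≤ K) (hb : b.length ≤ K) (hm : μ.length ≤ 2 * K)
    (d : ℕ) : SplitP a b (K + d) μ ↔ SplitP a b K μ := by
  have e1 : 2 * (K + d) = 2 * K + 2 * d := by ring
  constructor
  · intro h p
    have h1 := h (p + 2 * d)
    rw [e1, shift μ (2 * K) (2 * d) hm] at h1
    have h2 : p + 2 * d < 2 * d ∨ (2 * d ≤ p + 2 * d ∧ p + 2 * d - 2 * d ∈ betaSet μ (2 * K))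
        ↔ p ∈ betaSet μ (2 * K) := by
      constructor
      · rintro (hx | ⟨_, hx⟩)
        · omega
        · rwa [show p + 2 * d - 2 * d = p by omega] at hx
      · intro hx
        exact Or.inr ⟨by omega, by rwa [show p + 2 * d - 2 * d = p by omega]⟩
    rw [h2] at h1
    rw [h1]
    have hda : (p + 2 * d) / 2 = p / 2 + d := by omega
    rw [hda, show (p + 2 * d) % 2 = p % 2 by omega]
    rw [shift a K d ha, shift b K d hb]
    constructor
    · rintro (⟨hp, hx | ⟨_, hx⟩⟩ | ⟨hp, hx | ⟨_, hx⟩⟩)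
      · omega
      · exact Or.inl ⟨hp, by rwa [show p / 2 + d - d = p / 2 by omega] at hx⟩
      · omega
      · exact Or.inr ⟨hp, by rwa [show p / 2 + d - d = p / 2 by omega] at hx⟩
    · rintro (⟨hp, hx⟩ | ⟨hp, hx⟩)
      · exact Or.inl ⟨hp, Or.inr ⟨by omega, by rwa [show p / 2 + d - d = p / 2 by omega]⟩⟩
      · exact Or.inr ⟨hp, Or.inr ⟨by omega, by rwa [show p / 2 + d - d = p / 2 by omega]⟩⟩
  · intro h p
    rw [e1, shift μ (2 * K) (2 * d) hm]
    rw [shift a K d ha, shift b K d hb]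
    rcases Nat.lt_or_ge p (2 * d) with hp | hp
    · constructor
      · intro _
        rcases Nat.even_or_odd p with ⟨t, ht⟩ | ⟨t, ht⟩
        · exact Or.inl ⟨by omega, Or.inl (by omega)⟩
        · exact Or.inr ⟨by omega, Or.inl (by omega)⟩
      · intro _
        exact Or.inl hp
    · have h1 := h (p - 2 * d)
      have hmod : (p - 2 * d) % 2 = p % 2 := by omega
      have hdiv : (p - 2 * d) / 2 = p / 2 - d := by omega
      have hdd : d ≤ p / 2 := by omega
      rw [hmod, hdiv] at h1
      constructor
      · rintro (hx | ⟨_, hx⟩)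
        · omega
        · rcases (h1.mp hx) with ⟨hp2, hx2⟩ | ⟨hp2, hx2⟩
          · exact Or.inl ⟨hp2, Or.inr ⟨hdd, hx2⟩⟩
          · exact Or.inr ⟨hp2, Or.inr ⟨hdd, hx2⟩⟩
      · rintro (⟨hp2, hx | ⟨_, hx⟩⟩ | ⟨hp2, hx | ⟨_, hx⟩⟩)
        · omega
        · exact Or.inr ⟨hp, h1.mpr (Or.inl ⟨hp2, hx⟩)⟩
        · omega
        · exact Or.inr ⟨hp, h1.mpr (Or.inr ⟨hp2, hx⟩)⟩

end Main3

end Aux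
namespace Aux

section Main4

variable {μ a b : Ptn} {n m : ℕ}

lemma compl_part_le (hc : Complementary n m a b) (i : ℕ) : a.part i ≤ m :=
  le_trans (part_antitone a (Nat.zero_le i)) hc.2.1

lemma betaSet_a_le (hc : Complementary n m a b) {s : ℕ} (hs : s ∈ betaSet a n) :
    s ≤ m + n - 1 := by
  obtain ⟨i, hi, rfl⟩ := mem_betaSet.mp hs
  have := compl_part_le hc i
  omega

lemma refl_mem (hc : Complementary n m a b) (t : ℕ) :
    t ∈ betaSet b n ↔ ∃ s, s ∈ betaSet a n ∧ t = m + n - 1 - s := by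
  constructor
  · intro ht
    obtain ⟨i, hi, rfl⟩ := mem_betaSet.mp ht
    set j := n - 1 - i with hj
    refine ⟨a.part j + (n - 1 - j), mem_betaSet.mpr ⟨j, by omega, rfl⟩, ?_⟩
    have hbi := hc.2.2.2 i hi
    have haj := compl_part_le hc j
    rw [hbi, ← hj]
    omega
  · rintro ⟨s, hs, rfl⟩
    obtain ⟨j, hj, rfl⟩ := mem_betaSet.mp hs
    rw [mem_betaSet]
    refine ⟨n - 1 - j, by omega, ?_⟩
    have hbi := hc.2.2.2 (n - 1 - j) (by omega)
    rw [hbi, show n - 1 - (n - 1 - j) = j by omega]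
    have haj := compl_part_le hc j
    omega

lemma sym_beta (hc : Complementary n m a b) (hSn : SplitP a b n μ) {p : ℕ}
    (hp : p ∈ betaSet μ (2 * n)) :
    p ≤ 2 * (m + n) - 1 ∧ (2 * (m + n) - 1 - p) ∈ betaSet μ (2 * n) := by
  rcases (hSn p).mp hp with ⟨hpar, hmem⟩ | ⟨hpar, hmem⟩
  · have hle := betaSet_a_le hc hmem
    have hn : 0 < n := by
      by_contra hz
      have := mem_betaSet.mp hmem
      omega
    refine ⟨by omega, ?_⟩
    apply (hSn _).mpr
    right
    refine ⟨by omega, ?_⟩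
    have hq : (2 * (m + n) - 1 - p) / 2 = m + n - 1 - p / 2 := by omega
    rw [hq]
    rw [refl_mem hc]
    exact ⟨p / 2, hmem, rfl⟩
  · obtain ⟨s, hs, hts⟩ := (refl_mem hc _).mp hmem
    have hsle := betaSet_a_le hc hs
    have hn : 0 < n := by
      by_contra hz
      have := mem_betaSet.mp hs
      omega
    refine ⟨by omega, ?_⟩
    apply (hSn _).mpr
    left
    refine ⟨by omega, ?_⟩
    have hq : (2 * (m + n) - 1 - p) / 2 = s := by omega
    rw [hq]
    exact hs

lemma pairing (hsym : ∀ p ∈ betaSet μ (2 * n), p ≤ 2 * (m + n) - 1 ∧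
      (2 * (m + n) - 1 - p) ∈ betaSet μ (2 * n)) {i : ℕ} (hi : i < 2 * n) :
    2 * (m + n) - 1 - (μ.part i + (2 * n - 1 - i))
      = μ.part (2 * n - 1 - i) + (2 * n - 1 - (2 * n - 1 - i)) := by
  classical
  set N := 2 * (m + n) - 1 with hN
  set S := betaSet μ (2 * n) with hS
  set x := μ.part i + (2 * n - 1 - i) with hx
  have hxS : x ∈ S := mem_betaSet.mpr ⟨i, hi, rfl⟩
  obtain ⟨hxN, hyS⟩ := hsym x hxS
  set y := N - x with hy
  -- count below y
  have himg : S.filter (· < y) = (S.filter (fun q => x < q)).image (fun p => N - p) := by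
    ext q
    simp only [Finset.mem_filter, Finset.mem_image]
    constructor
    · rintro ⟨hqS, hqy⟩
      obtain ⟨hqN, hq2⟩ := hsym q hqS
      refine ⟨N - q, ⟨hq2, by omega⟩, by omega⟩
    · rintro ⟨r, ⟨hrS, hxr⟩, rfl⟩
      obtain ⟨hrN, hr2⟩ := hsym r hrS
      exact ⟨hr2, by omega⟩
  have hcount_above : (S.filter (fun q => x < q)).card = i := by
    have hig := Finset.card_filter_add_card_filter_not (s := S) (p := (· < x))
    rw [card_betaSet, count_below hi] at hig
    have herase : S.filter (fun q => x < q) = (S.filter (fun q => ¬ q < x)).erase x := by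
      ext q
      simp only [Finset.mem_filter, Finset.mem_erase]
      constructor
      · rintro ⟨hqS, hxq⟩
        exact ⟨by omega, hqS, by omega⟩
      · rintro ⟨hne, hqS, hge⟩
        refine ⟨hqS, ?_⟩
        rcases Nat.lt_or_ge x q with h | h
        · exact h
        · omega
    rw [herase, Finset.card_erase_of_mem (Finset.mem_filter.mpr ⟨hxS, by omega⟩)]
    omega
  have hcy : (S.filter (· < y)).card = i := by
    rw [himg, Finset.card_image_of_injOn, hcount_above]
    intro u hu v hv huv
    simp only [Finset.coe_filter, Set.mem_setOf_eq] at hu hv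
    have h1 := (hsym u hu.1).1
    have h2 := (hsym v hv.1).1
    have huv' : N - u = N - v := huv
    omega
  -- the element at index 2n-1-i
  have hj : 2 * n - 1 - i < 2 * n := by omega
  set z := μ.part (2 * n - 1 - i) + (2 * n - 1 - (2 * n - 1 - i)) with hz
  have hzS : z ∈ S := mem_betaSet.mpr ⟨2 * n - 1 - i, hj, rfl⟩
  have hcz : (S.filter (· < z)).card = i := by
    rw [hS, count_below hj]
    omega
  exact eq_of_count hyS hzS (by rw [hcy, hcz])

end Main4

end Aux
namespace Aux

lemma size_eq_sum (l : Ptn) {M : ℕ} (h : l.length ≤ M) :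
    l.size = ∑ i ∈ Finset.range M, l.part i := by
  have h1 : l.size = ∑ i ∈ Finset.range l.length, l.part i := by
    rw [Ptn.size, parts_eq]
    rfl
  rw [h1]
  apply Finset.sum_subset
  · exact Finset.range_subset_range.mpr h
  · intro x _ hx
    rw [Finset.mem_range] at hx
    exact part_zero l (by omega)

end Aux

/-- Lemma 6.3: if `(α,β)` is complementary relative to `□(n,m)` and `μ` has empty
`2`-core and `2`-quotient `(α,β)`, then `μ` is `(n,m)`-balanced. -/
theorem stmt6 (n m : ℕ) (a b μ : Ptn) (hc : Complementary n m a b)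
    (h0 : coreP 2 μ = Ptn.empty) (h1 : quotP 2 μ 0 = a) (h2 : quotP 2 μ 1 = b) :
    μ ∈ W n m := by
  classical
  obtain ⟨hbA, hbB, haL, hbL⟩ := Aux.quot_betaSet h0 h1 h2
  have hsplitL : Aux.SplitP a b μ.length μ := Aux.split_at_length h0 h1 h2
  have han : a.length ≤ n := hc.1
  have hbn : b.length ≤ n := hc.2.2.1
  have hL2n : μ.length ≤ 2 * n := Aux.length_le_two_n hsplitL han hbn
  have hsplitn : Aux.SplitP a b n μ := by
    rcases Nat.le_total μ.length n with h | h
    · have := (Aux.transfer haL hbL (by omega) (n - μ.length)).mpr hsplitL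
      rwa [show μ.length + (n - μ.length) = n by omega] at this
    · have h' : Aux.SplitP a b (n + (μ.length - n)) μ := by
        rwa [show n + (μ.length - n) = μ.length by omega]
      exact (Aux.transfer han hbn hL2n (μ.length - n)).mp h'
  have hsym : ∀ p ∈ betaSet μ (2 * n), p ≤ 2 * (m + n) - 1 ∧
      2 * (m + n) - 1 - p ∈ betaSet μ (2 * n) :=
    fun p hp => Aux.sym_beta hc hsplitn hp
  have hparts : ∀ i < n, μ.part i + μ.part (2 * n - 1 - i) = 2 * m := by
    intro i hi
    have hp := Aux.pairing hsym (show i < 2 * n by omega)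
    have hxN := (hsym _ (Aux.mem_betaSet.mpr ⟨i, by omega, rfl⟩)).1
    omega
  have hsum : μ.size = ∑ i ∈ Finset.range (2 * n), μ.part i := Aux.size_eq_sum μ hL2n
  rcases Nat.eq_zero_or_pos n with rfl | hn
  · refine ⟨by simpa using hsum, hL2n, hparts⟩
  have hxi : ∀ i ∈ Finset.range (2 * n),
      (μ.part i + (2 * n - 1 - i)) + (μ.part (2 * n - 1 - i) + (2 * n - 1 - (2 * n - 1 - i)))
        = 2 * (m + n) - 1 := by
    intro i hi
    rw [Finset.mem_range] at hi
    have hp := Aux.pairing hsym hi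
    have hxN := (hsym _ (Aux.mem_betaSet.mpr ⟨i, hi, rfl⟩)).1
    omega
  have h1s : (∑ i ∈ Finset.range (2 * n), (μ.part i + (2 * n - 1 - i)))
      + (∑ i ∈ Finset.range (2 * n), (μ.part (2 * n - 1 - i) + (2 * n - 1 - (2 * n - 1 - i))))
      = (2 * n) * (2 * (m + n) - 1) := by
    rw [← Finset.sum_add_distrib, Finset.sum_congr rfl hxi, Finset.sum_const,
      Finset.card_range, smul_eq_mul]
  have h2s : ∑ i ∈ Finset.range (2 * n), (μ.part (2 * n - 1 - i) + (2 * n - 1 - (2 * n - 1 - i)))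
      = ∑ i ∈ Finset.range (2 * n), (μ.part i + (2 * n - 1 - i)) :=
    Finset.sum_range_reflect (fun i => μ.part i + (2 * n - 1 - i)) (2 * n)
  have h3s : ∑ i ∈ Finset.range (2 * n), (μ.part i + (2 * n - 1 - i))
      = (∑ i ∈ Finset.range (2 * n), μ.part i) + ∑ i ∈ Finset.range (2 * n), (2 * n - 1 - i) :=
    Finset.sum_add_distrib
  have h4s : ∑ i ∈ Finset.range (2 * n), (2 * n - 1 - i) = ∑ i ∈ Finset.range (2 * n), i :=
    Finset.sum_range_reflect (fun i => i) (2 * n)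
  have h5s : (∑ i ∈ Finset.range (2 * n), i) * 2 = (2 * n) * (2 * n - 1) :=
    Finset.sum_range_id_mul_two (2 * n)
  -- now pure arithmetic
  set Sp := ∑ i ∈ Finset.range (2 * n), μ.part i with hSp
  set G := ∑ i ∈ Finset.range (2 * n), i with hG
  rw [h2s, h3s, h4s] at h1s
  -- h1s : (Sp + G) + (Sp + G) = 2n * (2(m+n)-1)
  have hu : 2 * (m + n) - 1 = 2 * m + (2 * n - 1) := by omega
  have he1 : (2 * n) * (2 * m + (2 * n - 1)) = 2 * (2 * n * m) + (2 * n) * (2 * n - 1) := by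
    ring
  rw [hu, he1] at h1s
  have hsize : μ.size = 2 * n * m := by
    rw [hsum]
    linarith [h1s, h5s]
  exact ⟨hsize, hL2n, hparts⟩
end

section
/- Let ℓ ≥ 1 and 0 ≤ m ≤ ℓ. Then W(ℓ−m, m) = { μ^b[1] : μ ∈ F_1^m(Λ_ℓ) }, i.e. the set of (ℓ−m, m)-balanced partitions coincides with the set of second components of the 3-bar quotients of the strict partitions in F_1^m(Λ_ℓ). -/
open scoped BigOperators

open MvPolynomial

-- ### auxiliary development


lemma Ptn.ext' {a b : Ptn} (h : a.parts = b.parts) : a = b := by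
  cases a; cases b; simpa using h

/-- descending list of a Ptn -/
def dList (l : Ptn) : List ℕ := (l.parts.sort (· ≤ ·)).reverse

lemma part_eq_dList (l : Ptn) (i : ℕ) : l.part i = (dList l).getD i 0 := rfl

lemma dList_coe (l : Ptn) : ((dList l) : Multiset ℕ) = l.parts := by
  simp [dList, Multiset.sort_eq]

lemma dList_length (l : Ptn) : (dList l).length = l.length := by
  have := congrArg Multiset.card (dList_coe l)
  simpa [Ptn.length] using this

lemma dList_sorted (l : Ptn) : (dList l).Pairwise (· ≥ ·) := by
  simpa [dList] using List.pairwise_reverse.mpr (Multiset.pairwise_sort l.parts (· ≤ ·))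

lemma dList_mem_pos (l : Ptn) {x : ℕ} (hx : x ∈ dList l) : 0 < x := by
  apply l.pos
  rw [← dList_coe l]
  exact_mod_cast hx

lemma part_pos_of_lt_length (l : Ptn) {i : ℕ} (hi : i < l.length) : 0 < l.part i := by
  rw [part_eq_dList]
  rw [← dList_length] at hi
  rw [List.getD_eq_getElem _ _ hi]
  exact dList_mem_pos l (List.getElem_mem _)

lemma part_eq_zero_of_le (l : Ptn) {i : ℕ} (hi : l.length ≤ i) : l.part i = 0 := by
  rw [part_eq_dList, List.getD_eq_default]
  rw [dList_length]; exact hi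

lemma part_antitone (l : Ptn) {i j : ℕ} (hij : i ≤ j) : l.part j ≤ l.part i := by
  rcases Nat.lt_or_ge j (l.length) with hj | hj
  · have hi : i < l.length := lt_of_le_of_lt hij hj
    rw [part_eq_dList, part_eq_dList]
    rw [← dList_length] at hj hi
    rw [List.getD_eq_getElem _ _ hj, List.getD_eq_getElem _ _ hi]
    rcases eq_or_lt_of_le hij with rfl | hlt
    · exact le_refl _
    · exact List.Pairwise.rel_get_of_lt (dList_sorted l) (by simpa using hlt)
  · rw [part_eq_zero_of_le l hj]; exact Nat.zero_le _

lemma ptn_ext_part {a b : Ptn} (h : ∀ i, a.part i = b.part i) : a = b := by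
  have hlen : a.length = b.length := by
    by_contra hne
    rcases Nat.lt_or_ge a.length b.length with hlt | hge
    · have h1 := part_eq_zero_of_le a (le_refl a.length)
      have h2 := part_pos_of_lt_length b hlt
      rw [← h] at h2; omega
    · rcases eq_or_lt_of_le hge with heq | hlt
      · exact hne heq.symm
      · have h1 := part_eq_zero_of_le b (le_refl b.length)
        have h2 := part_pos_of_lt_length a hlt
        rw [h] at h2; omega
  apply Ptn.ext'
  rw [← dList_coe a, ← dList_coe b]
  congr 1
  apply List.ext_getElem
  · rw [dList_length, dList_length, hlen]
  · intro i h1 h2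
    have := h i
    rw [part_eq_dList, part_eq_dList, List.getD_eq_getElem _ _ h1,
      List.getD_eq_getElem _ _ h2] at this
    exact this

-- ### Ptn.of and sorted maps

lemma of_eq_of_filter_eq {s t : Multiset ℕ}
    (h : s.filter (fun x => 0 < x) = t.filter (fun x => 0 < x)) : Ptn.of s = Ptn.of t := by
  apply Ptn.ext'; simpa [Ptn.of] using h

lemma parts_of (s : Multiset ℕ) : (Ptn.of s).parts = s.filter (fun x => 0 < x) := rfl

/-- downward-closed filter of range is a range -/
lemma filter_range_eq_range {K : ℕ} {P : ℕ → Prop} [DecidablePred P]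
    (hP : ∀ i j, i ≤ j → j < K → P j → P i) :
    (Finset.range K).filter P = Finset.range (((Finset.range K).filter P).card) := by
  set c := ((Finset.range K).filter P).card with hc
  ext x
  simp only [Finset.mem_filter, Finset.mem_range]
  constructor
  · rintro ⟨hxK, hPx⟩
    have hsub : Finset.range (x+1) ⊆ (Finset.range K).filter P := by
      intro y hy
      simp only [Finset.mem_range] at hy
      simp only [Finset.mem_filter, Finset.mem_range]
      exact ⟨by omega, hP y x (by omega) hxK hPx⟩
    have := Finset.card_le_card hsub
    simp only [Finset.card_range] at this
    omega
  · intro hx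
    by_contra hcon
    have hsub : (Finset.range K).filter P ⊆ Finset.range x := by
      intro y hy
      simp only [Finset.mem_filter, Finset.mem_range] at hy
      simp only [Finset.mem_range]
      by_contra hyx
      push_neg at hyx
      rcases Nat.lt_or_ge x K with hxK | hxK
      · exact hcon ⟨hxK, hP x y hyx hy.1 hy.2⟩
      · omega
    have := Finset.card_le_card hsub
    simp only [Finset.card_range] at this
    omega

lemma multiset_filter_map_range (K : ℕ) (f : ℕ → ℕ) :
    ((Multiset.range K).map f).filter (fun x => 0 < x)
      = ((Finset.range K).filter (fun i => 0 < f i)).val.map f := by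
  rw [Multiset.filter_map]
  rfl

lemma sort_map_antitone (K : ℕ) (f : ℕ → ℕ) (hf : ∀ i j, i ≤ j → j < K → f j ≤ f i) :
    ((Multiset.range K).map f).sort (· ≤ ·) = (List.range K).reverse.map f := by
  refine (fun hp h1 h2 => List.Perm.eq_of_pairwise' (r := (· ≤ · : ℕ → ℕ → Prop)) h1 h2 hp) ?_ ?_ ?_
  · apply Multiset.coe_eq_coe.mp
    rw [Multiset.sort_eq]
    have : ((List.range K).reverse.map f : Multiset ℕ) = ((List.range K).map f : Multiset ℕ) := by
      apply Multiset.coe_eq_coe.mpr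
      exact ((List.range K).reverse_perm.map f)
    rw [this]
    rfl
  · exact Multiset.pairwise_sort _ _
  · rw [List.pairwise_map, List.pairwise_reverse]
    rw [List.pairwise_iff_getElem]
    intro i j hi hj hij
    simp only [List.length_range] at hi hj
    rw [List.getElem_range, List.getElem_range]
    exact hf i j (le_of_lt hij) hj

lemma list_sum_eq (l : List ℕ) : l.sum = ∑ i ∈ Finset.range l.length, l.getD i 0 := by
  induction l with
  | nil => simp
  | cons a t ih =>
    rw [List.sum_cons, ih, List.length_cons, Finset.sum_range_succ']
    simp [List.getD_cons_succ, List.getD_cons_zero, Nat.add_comm]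

lemma size_eq_sum_part (l : Ptn) {K : ℕ} (h : l.length ≤ K) :
    l.size = ∑ i ∈ Finset.range K, l.part i := by
  have h1 : l.size = (dList l).sum := by
    have := dList_coe l
    unfold Ptn.size
    rw [← this]
    simp
  rw [h1, list_sum_eq]
  rw [dList_length]
  rcases Nat.exists_eq_add_of_le h with ⟨d, rfl⟩
  rw [Finset.sum_range_add]
  have : ∀ i in' : True, True := fun _ _ => trivial
  have hz : ∑ i ∈ Finset.range d, l.part (l.length + i) = 0 := by
    apply Finset.sum_eq_zero
    intro i _
    exact part_eq_zero_of_le l (Nat.le_add_right _ _)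
  rw [hz, Nat.add_zero]
  rfl

lemma parts_of_map_range (K : ℕ) (f : ℕ → ℕ) (hf : ∀ i j, i ≤ j → j < K → f j ≤ f i) :
    ∃ K' ≤ K, (Ptn.of ((Multiset.range K).map f)).parts = (Multiset.range K').map f
      ∧ (∀ i, K' ≤ i → i < K → f i = 0) ∧ (∀ i, i < K' → 0 < f i) := by
  classical
  set P : ℕ → Prop := fun i => 0 < f i with hP
  have hdc : ∀ i j, i ≤ j → j < K → P j → P i := by
    intro i j hij hj hPj
    have := hf i j hij hj
    simp only [hP] at *
    omega
  set K' := ((Finset.range K).filter P).card with hK'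
  have hfil := filter_range_eq_range (K := K) (P := P) hdc
  have hK'le : K' ≤ K := by
    have := Finset.card_filter_le (Finset.range K) P
    simpa using this
  refine ⟨K', hK'le, ?_, ?_, ?_⟩
  · rw [parts_of, multiset_filter_map_range, hfil, Finset.range_val]
  · intro i hK'i hiK
    by_contra hne
    have hPi : P i := by simp [hP]; omega
    have : i ∈ (Finset.range K).filter P := by
      simp only [Finset.mem_filter, Finset.mem_range]; exact ⟨hiK, hPi⟩
    rw [hfil] at this
    simp only [Finset.mem_range] at this
    omega
  · intro i hi
    have : i ∈ Finset.range K' := Finset.mem_range.mpr hi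
    rw [← hfil] at this
    simp only [Finset.mem_filter, Finset.mem_range, hP] at this
    exact this.2

lemma part_of_map (K : ℕ) (f : ℕ → ℕ) (hf : ∀ i j, i ≤ j → j < K → f j ≤ f i) (i : ℕ) :
    (Ptn.of ((Multiset.range K).map f)).part i = if i < K then f i else 0 := by
  obtain ⟨K', hK'le, hparts, hzero, hpos⟩ := parts_of_map_range K f hf
  have hdl : dList (Ptn.of ((Multiset.range K).map f)) = (List.range K').map f := by
    unfold dList
    rw [hparts, sort_map_antitone K' f (fun i j hij hj => hf i j hij (lt_of_lt_of_le hj hK'le))]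
    rw [← List.map_reverse, List.reverse_reverse]
  rw [part_eq_dList, hdl]
  rcases Nat.lt_or_ge i K' with hi | hi
  · have hlen : i < ((List.range K').map f).length := by simpa using hi
    rw [List.getD_eq_getElem _ _ hlen]
    simp only [List.getElem_map, List.getElem_range]
    rw [if_pos (lt_of_lt_of_le hi hK'le)]
  · rw [List.getD_eq_default _ _ (by simpa using hi)]
    rcases Nat.lt_or_ge i K with hiK | hiK
    · rw [if_pos hiK, hzero i hi hiK]
    · rw [if_neg (by omega)]

lemma length_of_map (K : ℕ) (f : ℕ → ℕ) :
    (Ptn.of ((Multiset.range K).map f)).length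
      = ((Finset.range K).filter (fun i => 0 < f i)).card := by
  unfold Ptn.length
  rw [parts_of, multiset_filter_map_range]
  rw [Multiset.card_map]
  rfl

lemma size_of_map (K : ℕ) (f : ℕ → ℕ) :
    (Ptn.of ((Multiset.range K).map f)).size = ∑ i ∈ Finset.range K, f i := by
  unfold Ptn.size
  rw [parts_of]
  have h := Multiset.filter_add_not (fun x => 0 < x) ((Multiset.range K).map f)
  have hsum := congrArg Multiset.sum h
  rw [Multiset.sum_add] at hsum
  have hz : (((Multiset.range K).map f).filter (fun x => ¬ 0 < x)).sum = 0 := by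
    apply Multiset.sum_eq_zero
    intro x hx
    have := (Multiset.mem_filter.mp hx).2
    omega
  rw [hz, Nat.add_zero] at hsum
  rw [hsum]
  rfl

-- reflection lemmas
lemma range_image_reflect (K : ℕ) :
    (Finset.range K).image (fun i => K - 1 - i) = Finset.range K := by
  ext x
  simp only [Finset.mem_image, Finset.mem_range]
  constructor
  · rintro ⟨a, ha, rfl⟩; omega
  · intro hx; exact ⟨K - 1 - x, by omega, by omega⟩

lemma multiset_range_reflect (K : ℕ) (f : ℕ → ℕ) :
    (Multiset.range K).map f = (Multiset.range K).map (fun i => f (K - 1 - i)) := by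
  conv_lhs => rw [← Finset.range_val, ← range_image_reflect K]
  rw [Finset.image_val, Multiset.dedup_eq_self.mpr, Multiset.map_map]
  · rfl
  · apply Multiset.Nodup.map_on
    · intro x hx y hy hxy
      simp only [Finset.range_val, Multiset.mem_range] at hx hy
      omega
    · rw [Finset.range_val]; exact Multiset.nodup_range K

lemma filter_card_reflect (K : ℕ) (P : ℕ → Prop) [DecidablePred P] :
    ((Finset.range K).filter P).card = ((Finset.range K).filter (fun k => P (K - 1 - k))).card := by
  apply Finset.card_bij (fun a _ => K - 1 - a)
  · intro a ha
    simp only [Finset.mem_filter, Finset.mem_range] at ha ⊢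
    constructor
    · omega
    · have : K - 1 - (K - 1 - a) = a := by omega
      rw [this]; exact ha.2
  · intro a ha b hb hab
    simp only [Finset.mem_filter, Finset.mem_range] at ha hb
    omega
  · intro b hb
    simp only [Finset.mem_filter, Finset.mem_range] at hb
    exact ⟨K - 1 - b, by simp only [Finset.mem_filter, Finset.mem_range]; exact ⟨by omega, hb.2⟩,
      by omega⟩

-- ### the explicit family ptnJ

def eJ (J : Finset ℕ) (k : ℕ) : ℕ := if k ∈ J then 1 else 0
def vJ (J : Finset ℕ) (k : ℕ) : ℕ := 3 * k + 1 + eJ J k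
def ptnJ (ℓ : ℕ) (J : Finset ℕ) : Ptn :=
  Ptn.of ((Multiset.range ℓ).map (fun r => vJ J (ℓ - 1 - r)))

lemma eJ_le_one (J : Finset ℕ) (k : ℕ) : eJ J k ≤ 1 := by
  unfold eJ; split <;> omega

lemma vJ_anti (J : Finset ℕ) {k k' : ℕ} (h : k < k') : vJ J k < vJ J k' := by
  have h1 := eJ_le_one J k
  have h2 := eJ_le_one J k'
  unfold vJ; omega

lemma ptnJ_part (ℓ : ℕ) (J : Finset ℕ) (r : ℕ) :
    (ptnJ ℓ J).part r = if r < ℓ then vJ J (ℓ - 1 - r) else 0 := by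
  apply part_of_map
  intro i j hij hj
  rcases eq_or_lt_of_le hij with rfl | hlt
  · exact le_refl _
  · exact le_of_lt (vJ_anti J (by omega))

lemma LamP_part (ℓ : ℕ) (r : ℕ) :
    (LamP ℓ).part r = if r < ℓ then 3 * (ℓ - 1 - r) + 1 else 0 := by
  unfold LamP
  rw [multiset_range_reflect]
  apply part_of_map
  intro i j hij hj
  rcases eq_or_lt_of_le hij with rfl | hlt
  · exact le_refl _
  · omega

lemma sum_reflect (K : ℕ) (f : ℕ → ℕ) :
    ∑ x ∈ Finset.range K, f (K - 1 - x) = ∑ x ∈ Finset.range K, f x := by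
  conv_rhs => rw [← range_image_reflect K]
  rw [Finset.sum_image (by intro x hx y hy hxy
                           simp only [Finset.coe_range, Set.mem_Iio] at hx hy hxy
                           omega)]

lemma sum_eJ {ℓ : ℕ} {J : Finset ℕ} (hJ : J ⊆ Finset.range ℓ) :
    ∑ k ∈ Finset.range ℓ, eJ J k = J.card := by
  unfold eJ
  rw [← Finset.card_filter]
  congr 1
  rw [Finset.filter_mem_eq_inter, Finset.inter_eq_right.mpr hJ]

lemma LamP_size (ℓ : ℕ) : (LamP ℓ).size = ∑ i ∈ Finset.range ℓ, (3 * i + 1) :=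
  size_of_map ℓ _

lemma ptnJ_size {ℓ : ℕ} {J : Finset ℕ} (hJ : J ⊆ Finset.range ℓ) :
    (ptnJ ℓ J).size = (LamP ℓ).size + J.card := by
  unfold ptnJ
  rw [size_of_map, LamP_size, ← sum_eJ hJ]
  rw [← Finset.sum_add_distrib]
  exact sum_reflect ℓ (vJ J)

lemma ptnJ_strict (ℓ : ℕ) (J : Finset ℕ) : (ptnJ ℓ J).Strict := by
  unfold Ptn.Strict ptnJ
  rw [parts_of]
  apply Multiset.Nodup.filter
  apply Multiset.Nodup.map_on
  · intro x hx y hy hxy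
    simp only [Multiset.mem_range] at hx hy
    by_contra hne
    rcases Nat.lt_or_ge (ℓ - 1 - x) (ℓ - 1 - y) with h | h
    · exact absurd hxy (Nat.ne_of_lt (vJ_anti J h))
    · rcases eq_or_lt_of_le h with heq | hlt
      · omega
      · exact absurd hxy.symm (Nat.ne_of_lt (vJ_anti J hlt))
  · exact Multiset.nodup_range ℓ

lemma F1Lam_eq (ℓ m : ℕ) :
    F1Lam ℓ m = {p | ∃ J : Finset ℕ, J ⊆ Finset.range ℓ ∧ J.card = m ∧ p = ptnJ ℓ J} := by
  ext mu
  simp only [F1Lam, Set.mem_setOf_eq]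
  constructor
  · rintro ⟨hstrict, hcont, hsize, hlab⟩
    -- parts vanish beyond ℓ
    have h0 : ∀ r, ℓ ≤ r → mu.part r = 0 := by
      intro r hr
      by_contra hne
      have hpos : 0 < mu.part r := Nat.pos_of_ne_zero hne
      have := hlab r 0 (by rw [LamP_part]; rw [if_neg (by omega)]) hpos
      omega
    have hlen : mu.length ≤ ℓ := by
      by_contra hlt
      push_neg at hlt
      have := part_pos_of_lt_length mu hlt
      rw [h0 ℓ (le_refl ℓ)] at this
      omega
    have hbound : ∀ r, r < ℓ →
        3 * (ℓ - 1 - r) + 1 ≤ mu.part r ∧ mu.part r ≤ 3 * (ℓ - 1 - r) + 2 := by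
      intro r hr
      have hlo := hcont r
      rw [LamP_part, if_pos hr] at hlo
      refine ⟨hlo, ?_⟩
      by_contra hhi
      push_neg at hhi
      have := hlab r (3 * (ℓ - 1 - r) + 2)
        (by rw [LamP_part, if_pos hr]; omega) (by omega)
      omega
    set J := (Finset.range ℓ).filter (fun k => mu.part (ℓ - 1 - k) = 3 * k + 2) with hJdef
    have hJsub : J ⊆ Finset.range ℓ := Finset.filter_subset _ _
    have hparts : ∀ r, mu.part r = (ptnJ ℓ J).part r := by
      intro r
      rw [ptnJ_part]
      rcases Nat.lt_or_ge r ℓ with hr | hr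
      · rw [if_pos hr]
        set k := ℓ - 1 - r with hk
        have hrk : ℓ - 1 - k = r := by omega
        have hkmem : k ∈ J ↔ mu.part r = 3 * k + 2 := by
          rw [hJdef]
          simp only [Finset.mem_filter, Finset.mem_range, hrk]
          constructor
          · exact fun h => h.2
          · exact fun h => ⟨by omega, h⟩
        have hb := hbound r hr
        rw [← hk] at hb
        unfold vJ eJ
        by_cases hcase : mu.part r = 3 * k + 2
        · rw [if_pos (hkmem.mpr hcase)]; omega
        · rw [if_neg (fun h => hcase (hkmem.mp h))]; omega
      · rw [if_neg (by omega)]; exact h0 r hr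
    have hmu : mu = ptnJ ℓ J := ptn_ext_part hparts
    refine ⟨J, hJsub, ?_, hmu⟩
    have hs := ptnJ_size hJsub
    rw [← hmu] at hs
    omega
  · rintro ⟨J, hJsub, hcard, rfl⟩
    refine ⟨ptnJ_strict ℓ J, ?_, ?_, ?_⟩
    · intro i
      rw [LamP_part, ptnJ_part]
      split
      · unfold vJ; omega
      · omega
    · rw [ptnJ_size hJsub, hcard]
    · intro i j hlo hhi
      rw [ptnJ_part] at hhi
      rcases Nat.lt_or_ge i ℓ with hi | hi
      · rw [if_pos hi] at hhi
        rw [LamP_part, if_pos hi] at hlo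
        have := eJ_le_one J (ℓ - 1 - i)
        unfold vJ at hhi
        omega
      · rw [if_neg (by omega)] at hhi
        omega

-- ### sorted finsets

/-- the k-th smallest element of a Finset ℕ -/
def fel (s : Finset ℕ) (k : ℕ) : ℕ := (s.sort (· ≤ ·)).getD k 0

lemma fel_mem {s : Finset ℕ} {k : ℕ} (hk : k < s.card) : fel s k ∈ s := by
  unfold fel
  rw [List.getD_eq_getElem _ _ (by rw [Finset.length_sort]; exact hk)]
  rw [← Finset.mem_sort (· ≤ ·)]
  exact List.getElem_mem _

lemma fel_lt_fel {s : Finset ℕ} {k k' : ℕ} (h : k < k') (hk' : k' < s.card) :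
    fel s k < fel s k' := by
  unfold fel
  have h1 : k < (s.sort (· ≤ ·)).length := by rw [Finset.length_sort]; omega
  have h2 : k' < (s.sort (· ≤ ·)).length := by rw [Finset.length_sort]; exact hk'
  rw [List.getD_eq_getElem _ _ h1, List.getD_eq_getElem _ _ h2]
  have := (Finset.sortedLT_sort s).pairwise
  exact List.Pairwise.rel_get_of_lt this (a := ⟨k, h1⟩) (b := ⟨k', h2⟩) (by simpa using h)

lemma fel_le_fel {s : Finset ℕ} {k k' : ℕ} (h : k ≤ k') (hk' : k' < s.card) :
    fel s k ≤ fel s k' := by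
  rcases eq_or_lt_of_le h with rfl | hlt
  · exact le_refl _
  · exact le_of_lt (fel_lt_fel hlt hk')

lemma exists_fel {s : Finset ℕ} {x : ℕ} (hx : x ∈ s) : ∃ k < s.card, x = fel s k := by
  rw [← Finset.mem_sort (· ≤ ·)] at hx
  obtain ⟨k, hk, hget⟩ := List.mem_iff_getElem.mp hx
  refine ⟨k, by rwa [Finset.length_sort] at hk, ?_⟩
  unfold fel
  rw [List.getD_eq_getElem _ _ hk, hget]

lemma filter_lt_fel_card {s : Finset ℕ} {k : ℕ} (hk : k < s.card) :
    (s.filter (fun x => x < fel s k)).card = k := by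
  have : s.filter (fun x => x < fel s k) = (Finset.range k).image (fel s) := by
    ext x
    simp only [Finset.mem_filter, Finset.mem_image, Finset.mem_range]
    constructor
    · rintro ⟨hxs, hxlt⟩
      obtain ⟨j, hj, rfl⟩ := exists_fel hxs
      refine ⟨j, ?_, rfl⟩
      by_contra hjk
      push_neg at hjk
      have := fel_le_fel hjk hj
      omega
    · rintro ⟨j, hj, rfl⟩
      exact ⟨fel_mem (by omega), fel_lt_fel hj hk⟩
  rw [this, Finset.card_image_of_injOn, Finset.card_range]
  intro a ha b hb hab
  simp only [Finset.coe_range, Set.mem_Iio] at ha hb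
  by_contra hne
  rcases Nat.lt_or_ge a b with h | h
  · exact absurd hab (Nat.ne_of_lt (fel_lt_fel h (by omega)))
  · rcases eq_or_lt_of_le h with heq | hlt
    · omega
    · exact absurd hab.symm (Nat.ne_of_lt (fel_lt_fel hlt (by omega)))

lemma fel_image_strictMono {n : ℕ} {w : ℕ → ℕ} (hw : ∀ a b, a < b → b < n → w a < w b)
    {k : ℕ} (hk : k < n) : fel ((Finset.range n).image w) k = w k := by
  have hinj : Set.InjOn w (Finset.range n) := by
    intro a ha b hb hab
    simp only [Finset.coe_range, Set.mem_Iio] at ha hb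
    by_contra hne
    rcases Nat.lt_or_ge a b with h | h
    · exact absurd hab (Nat.ne_of_lt (hw a b h hb))
    · rcases eq_or_lt_of_le h with heq | hlt
      · omega
      · exact absurd hab.symm (Nat.ne_of_lt (hw b a hlt ha))
  have hsort : ((Finset.range n).image w).sort (· ≤ ·) = (List.range n).map w := by
    refine (fun hp h1 h2 => List.Perm.eq_of_pairwise' (r := (· ≤ · : ℕ → ℕ → Prop)) h1 h2 hp) ?_ ?_ ?_
    · apply Multiset.coe_eq_coe.mp
      rw [Finset.sort_eq, Finset.image_val, Multiset.dedup_eq_self.mpr, Finset.range_val]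
      · rfl
      · apply Multiset.Nodup.map_on
        · intro a ha b hb
          simp only [Finset.range_val, Multiset.mem_range] at ha hb
          exact fun hab => hinj (by simpa using ha) (by simpa using hb) hab
        · rw [Finset.range_val]; exact Multiset.nodup_range n
    · exact Finset.pairwise_sort _ _
    · rw [List.pairwise_map, List.pairwise_iff_getElem]
      intro i j hi hj hij
      simp only [List.length_range] at hi hj
      rw [List.getElem_range, List.getElem_range]
      exact le_of_lt (hw i j hij hj)
  unfold fel
  rw [hsort, List.getD_eq_getElem _ _ (by simpa using hk), List.getElem_map,
    List.getElem_range]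

-- ### the balanced partitions wP

def cJ (J : Finset ℕ) (i : ℕ) : ℕ := (J.filter (fun j => j < i)).card
def dJ (J : Finset ℕ) (i : ℕ) : ℕ := (J.filter (fun j => i < j)).card
def IS (ℓ : ℕ) (J : Finset ℕ) : Finset ℕ := Finset.range ℓ \ J

def FJ (ℓ : ℕ) (J : Finset ℕ) (r : ℕ) : ℕ :=
  if r < (IS ℓ J).card then J.card + cJ J (fel (IS ℓ J) ((IS ℓ J).card - 1 - r))
  else dJ J (fel (IS ℓ J) (r - (IS ℓ J).card))

def wP (ℓ : ℕ) (J : Finset ℕ) : Ptn :=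
  Ptn.of ((Multiset.range (2 * (IS ℓ J).card)).map (FJ ℓ J))

lemma cJ_mono (J : Finset ℕ) {i i' : ℕ} (h : i ≤ i') : cJ J i ≤ cJ J i' := by
  apply Finset.card_le_card
  intro x hx
  simp only [Finset.mem_filter] at hx ⊢
  exact ⟨hx.1, by omega⟩

lemma dJ_anti (J : Finset ℕ) {i i' : ℕ} (h : i ≤ i') : dJ J i' ≤ dJ J i := by
  apply Finset.card_le_card
  intro x hx
  simp only [Finset.mem_filter] at hx ⊢
  exact ⟨hx.1, by omega⟩

lemma cJ_le_card (J : Finset ℕ) (i : ℕ) : cJ J i ≤ J.card :=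
  Finset.card_le_card (Finset.filter_subset _ _)

lemma dJ_le_card (J : Finset ℕ) (i : ℕ) : dJ J i ≤ J.card :=
  Finset.card_le_card (Finset.filter_subset _ _)

lemma cJ_add_dJ {J : Finset ℕ} {i : ℕ} (hi : i ∉ J) : cJ J i + dJ J i = J.card := by
  unfold cJ dJ
  rw [← Finset.card_filter_add_card_filter_not (p := fun j => j < i) (s := J)]
  congr 1
  congr 1
  apply Finset.filter_congr
  intro j hj
  have : j ≠ i := fun h => hi (h ▸ hj)
  simp only [eq_iff_iff, not_lt]
  omega

lemma IS_card {ℓ : ℕ} {J : Finset ℕ} (hJ : J ⊆ Finset.range ℓ) :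
    (IS ℓ J).card = ℓ - J.card := by
  unfold IS
  rw [Finset.card_sdiff_of_subset hJ, Finset.card_range]

lemma mem_IS {ℓ : ℕ} {J : Finset ℕ} {x : ℕ} :
    x ∈ IS ℓ J ↔ x < ℓ ∧ x ∉ J := by
  unfold IS
  simp [Finset.mem_sdiff]

lemma FJ_anti (ℓ : ℕ) (J : Finset ℕ) :
    ∀ r r', r ≤ r' → r' < 2 * (IS ℓ J).card → FJ ℓ J r' ≤ FJ ℓ J r := by
  intro r r' hrr hr'
  unfold FJ
  set n := (IS ℓ J).card with hn
  rcases Nat.lt_or_ge r' n with h1 | h1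
  · rw [if_pos h1, if_pos (by omega)]
    have : cJ J (fel (IS ℓ J) (n - 1 - r')) ≤ cJ J (fel (IS ℓ J) (n - 1 - r)) := by
      apply cJ_mono
      apply fel_le_fel (by omega) (by omega)
    omega
  · rw [if_neg (by omega)]
    rcases Nat.lt_or_ge r n with h2 | h2
    · rw [if_pos h2]
      have := dJ_le_card J (fel (IS ℓ J) (r' - n))
      omega
    · rw [if_neg (by omega)]
      apply dJ_anti
      apply fel_le_fel (by omega) (by omega)

lemma wP_part (ℓ : ℕ) (J : Finset ℕ) (r : ℕ) :
    (wP ℓ J).part r = if r < 2 * (IS ℓ J).card then FJ ℓ J r else 0 :=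
  part_of_map _ _ (fun i j hij hj => FJ_anti ℓ J i j hij hj) r

lemma wP_balanced {ℓ : ℕ} {J : Finset ℕ} (hJ : J ⊆ Finset.range ℓ) {r : ℕ}
    (hr : r < (IS ℓ J).card) :
    (wP ℓ J).part r + (wP ℓ J).part (2 * (IS ℓ J).card - 1 - r) = 2 * J.card := by
  set n := (IS ℓ J).card with hn
  rw [wP_part, wP_part, if_pos (by omega), if_pos (by omega)]
  unfold FJ
  rw [if_pos hr, if_neg (by omega)]
  have h1 : 2 * n - 1 - r - n = n - 1 - r := by omega
  rw [h1]
  set i := fel (IS ℓ J) (n - 1 - r) with hi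
  have hiIS : i ∈ IS ℓ J := fel_mem (by omega)
  have hinotJ : i ∉ J := (mem_IS.mp hiIS).2
  have := cJ_add_dJ (J := J) hinotJ
  omega

lemma wP_length (ℓ : ℕ) (J : Finset ℕ) : (wP ℓ J).length ≤ 2 * (IS ℓ J).card := by
  unfold wP
  rw [length_of_map]
  calc ((Finset.range (2 * (IS ℓ J).card)).filter _).card
      ≤ (Finset.range (2 * (IS ℓ J).card)).card := Finset.card_filter_le _ _
    _ = 2 * (IS ℓ J).card := Finset.card_range _

lemma sum_pair {n M : ℕ} (f : ℕ → ℕ) (h : ∀ r < n, f r + f (2 * n - 1 - r) = 2 * M) :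
    ∑ r ∈ Finset.range (2 * n), f r = 2 * n * M := by
  have hsplit : Finset.range (2 * n) = Finset.range n ∪ (Finset.range (2*n) \ Finset.range n) := by
    rw [Finset.union_sdiff_of_subset]
    apply Finset.range_subset_range.mpr; omega
  rw [hsplit, Finset.sum_union (Finset.disjoint_sdiff)]
  have himg : Finset.range (2*n) \ Finset.range n = (Finset.range n).image (fun r => 2*n - 1 - r) := by
    ext x
    simp only [Finset.mem_sdiff, Finset.mem_range, Finset.mem_image]
    constructor
    · intro ⟨h1, h2⟩; exact ⟨2*n - 1 - x, by omega, by omega⟩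
    · rintro ⟨a, ha, rfl⟩; omega
  rw [himg, Finset.sum_image (by intro a ha b hb hab
                                 simp only [Finset.coe_range, Set.mem_Iio] at ha hb hab
                                 omega)]
  rw [← Finset.sum_add_distrib]
  rw [Finset.sum_congr rfl (fun r hr => h r (Finset.mem_range.mp hr))]
  rw [Finset.sum_const, Finset.card_range]
  ring

lemma wP_size {ℓ : ℕ} {J : Finset ℕ} (hJ : J ⊆ Finset.range ℓ) :
    (wP ℓ J).size = 2 * (IS ℓ J).card * J.card := by
  have h := size_eq_sum_part (wP ℓ J) (wP_length ℓ J)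
  rw [h]
  apply sum_pair
  intro r hr
  exact wP_balanced hJ hr

lemma wP_mem_W {ℓ m : ℕ} (hm : m ≤ ℓ) {J : Finset ℕ} (hJ : J ⊆ Finset.range ℓ)
    (hcard : J.card = m) : wP ℓ J ∈ W (ℓ - m) m := by
  have hn : (IS ℓ J).card = ℓ - m := by rw [IS_card hJ, hcard]
  refine ⟨?_, ?_, ?_⟩
  · rw [wP_size hJ, hn, hcard]
  · rw [← hn]; exact wP_length ℓ J
  · intro i hi
    rw [← hn, ← hcard]
    exact wP_balanced hJ (by omega)

-- ### characterization of W

lemma W_eq (ℓ m : ℕ) (hm : m ≤ ℓ) :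
    W (ℓ - m) m = {p | ∃ J : Finset ℕ, J ⊆ Finset.range ℓ ∧ J.card = m ∧ p = wP ℓ J} := by
  ext mu
  constructor
  · rintro ⟨hsize, hlen, hbal⟩
    set n := ℓ - m with hn
    -- bounds on the first n parts
    have hple : ∀ r < n, m ≤ mu.part r ∧ mu.part r ≤ 2 * m := by
      intro r hr
      have hb := hbal r hr
      have hb' := hbal (n - 1) (by omega)
      have hmono1 : mu.part n ≤ mu.part (n - 1) := part_antitone mu (by omega)
      have hmono2 : mu.part (n - 1) ≤ mu.part r := part_antitone mu (by omega)
      have h2n : 2 * n - 1 - (n - 1) = n := by omega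
      rw [h2n] at hb'
      omega
    set a : ℕ → ℕ := fun k => mu.part (n - 1 - k) - m with ha
    set w : ℕ → ℕ := fun k => k + a k with hw
    have halem : ∀ k < n, a k ≤ m := by
      intro k hk
      have := hple (n - 1 - k) (by omega)
      simp only [ha]
      omega
    have hwmono : ∀ b c, b < c → c < n → w b < w c := by
      intro b c hbc hc
      have h1 : mu.part (n - 1 - b) ≤ mu.part (n - 1 - c) := part_antitone mu (by omega)
      have h2 := hple (n - 1 - c) (by omega)
      have h3 := hple (n - 1 - b) (by omega)
      simp only [hw, ha]
      omega
    set I : Finset ℕ := (Finset.range n).image w with hI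
    have hIcard : I.card = n := by
      rw [hI, Finset.card_image_of_injOn, Finset.card_range]
      intro b hb c hc hbc
      simp only [Finset.coe_range, Set.mem_Iio] at hb hc
      by_contra hne
      rcases Nat.lt_or_ge b c with h | h
      · exact absurd hbc (Nat.ne_of_lt (hwmono b c h hc))
      · rcases eq_or_lt_of_le h with heq | hlt
        · omega
        · exact absurd hbc.symm (Nat.ne_of_lt (hwmono c b hlt hb))
    have hIsub : I ⊆ Finset.range ℓ := by
      intro x hx
      rw [hI] at hx
      simp only [Finset.mem_image, Finset.mem_range] at hx ⊢
      obtain ⟨k, hk, rfl⟩ := hx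
      have := halem k hk
      simp only [hw]
      omega
    set J : Finset ℕ := Finset.range ℓ \ I with hJ
    have hJsub : J ⊆ Finset.range ℓ := Finset.sdiff_subset
    have hJcard : J.card = m := by
      rw [hJ, Finset.card_sdiff_of_subset hIsub, Finset.card_range, hIcard]
      omega
    have hIS : IS ℓ J = I := by
      ext x
      rw [mem_IS, hJ]
      simp only [Finset.mem_sdiff, Finset.mem_range, not_and, not_not]
      constructor
      · rintro ⟨h1, h2⟩; exact h2 h1
      · intro h; exact ⟨Finset.mem_range.mp (hIsub h), fun _ => h⟩
    have hfel : ∀ k < n, fel I k = w k := by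
      intro k hk
      rw [hI]
      exact fel_image_strictMono hwmono hk
    -- cJ at w k equals a k
    have hcJ : ∀ k < n, cJ J (w k) = a k := by
      intro k hk
      have hwk : w k < ℓ := by
        have := halem k hk; simp only [hw]; omega
      have hsplit : (Finset.range ℓ).filter (fun j => j < w k)
          = J.filter (fun j => j < w k) ∪ I.filter (fun j => j < w k) := by
        rw [← Finset.filter_union, hJ, Finset.sdiff_union_of_subset hIsub]
      have hrange : (Finset.range ℓ).filter (fun j => j < w k) = Finset.range (w k) := by
        ext x
        simp only [Finset.mem_filter, Finset.mem_range]
        omega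
      have hdisj : Disjoint (J.filter (fun j => j < w k)) (I.filter (fun j => j < w k)) := by
        apply Finset.disjoint_filter_filter
        rw [hJ]
        exact Finset.sdiff_disjoint
      have hcards : w k = cJ J (w k) + (I.filter (fun j => j < w k)).card := by
        have := congrArg Finset.card hsplit
        rw [hrange, Finset.card_range, Finset.card_union_of_disjoint hdisj] at this
        exact this
      have hIk : (I.filter (fun j => j < w k)).card = k := by
        have h1 : (I.filter (fun j => j < fel I k)).card = k :=
          filter_lt_fel_card (by rw [hIcard]; exact hk)
        rw [hfel k hk] at h1
        exact h1
      simp only [hw] at hcards hIk ⊢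
      omega
    have hwmem : ∀ k < n, w k ∈ I := by
      intro k hk
      rw [hI]
      simp only [Finset.mem_image, Finset.mem_range]
      exact ⟨k, hk, rfl⟩
    have hdJ : ∀ k < n, dJ J (w k) = m - a k := by
      intro k hk
      have hnot : w k ∉ J := by
        rw [hJ]
        simp only [Finset.mem_sdiff, not_and, not_not]
        intro _
        exact hwmem k hk
      have := cJ_add_dJ (J := J) hnot
      have := hcJ k hk
      have := halem k hk
      omega
    refine ⟨J, hJsub, hJcard, ?_⟩
    apply ptn_ext_part
    intro r
    rw [wP_part, hIS, hIcard]
    rcases Nat.lt_or_ge r n with hr | hr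
    · rw [if_pos (by omega)]
      unfold FJ
      rw [hIS, hIcard, if_pos hr, hfel (n - 1 - r) (by omega), hJcard,
        hcJ (n - 1 - r) (by omega)]
      have hr' : n - 1 - (n - 1 - r) = r := by omega
      simp only [ha, hr']
      have := hple r hr
      omega
    · rcases Nat.lt_or_ge r (2 * n) with hr2 | hr2
      · rw [if_pos hr2]
        unfold FJ
        rw [hIS, hIcard, if_neg (by omega), hfel (r - n) (by omega),
          hdJ (r - n) (by omega)]
        have hi : 2 * n - 1 - r < n := by omega
        have hb := hbal (2 * n - 1 - r) hi
        have hx : 2 * n - 1 - (2 * n - 1 - r) = r := by omega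
        rw [hx] at hb
        have hidx : n - 1 - (r - n) = 2 * n - 1 - r := by omega
        simp only [ha, hidx]
        have := hple (2 * n - 1 - r) hi
        omega
      · rw [if_neg (by omega)]
        exact part_eq_zero_of_le mu (le_trans hlen (by omega))
  · rintro ⟨J, hJsub, hcard, rfl⟩
    exact wP_mem_W hm hJsub hcard

-- ### multiset helpers for Part 3

lemma image_val_of_injOn {s : Finset ℕ} {f : ℕ → ℕ}
    (hinj : ∀ x ∈ s, ∀ y ∈ s, f x = f y → x = y) :
    (s.image f).val = s.val.map f := by
  rw [Finset.image_val, Multiset.dedup_eq_self.mpr]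
  exact Multiset.Nodup.map_on hinj s.nodup

lemma finset_val_add {s t₁ t₂ : Finset ℕ} (h : Disjoint t₁ t₂) (he : s = t₁ ∪ t₂) :
    s.val = t₁.val + t₂.val := by
  rw [he, ← Finset.disjUnion_eq_union _ _ h]
  rfl

lemma val_eq_map_fel (s : Finset ℕ) : s.val = (Multiset.range s.card).map (fel s) := by
  have hs : s.sort (· ≤ ·) = (List.range s.card).map (fel s) := by
    apply List.ext_getElem
    · simp [Finset.length_sort]
    · intro i h1 h2
      rw [List.getElem_map, List.getElem_range]
      rw [← List.getD_eq_getElem _ 0 h1]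
      rfl
  have := congrArg (fun l : List ℕ => (l : Multiset ℕ)) hs
  simp only [Finset.sort_eq] at this
  rw [this]
  rfl

-- ### Part 3 : the bar-quotient computation

section Part3

variable (ℓ : ℕ) (J : Finset ℕ)

/-- number of beads / largest part of `ptnJ` -/
def NN : ℕ := 3 * ℓ - 2 + eJ J (ℓ - 1)

def TT (k : ℕ) : ℕ := ℓ + 2 * k + eJ J k

def cT (i : ℕ) : ℕ := ((Finset.range ℓ).filter (fun k => TT ℓ J k ≤ i)).card

variable {ℓ J}

lemma vJ_mono (J : Finset ℕ) {k k' : ℕ} (h : k ≤ k') : vJ J k ≤ vJ J k' := by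
  rcases eq_or_lt_of_le h with rfl | hlt
  · exact le_refl _
  · exact le_of_lt (vJ_anti J hlt)

lemma vJ_top (hℓ : 1 ≤ ℓ) {k : ℕ} (hk : k < ℓ) : vJ J k ≤ NN ℓ J := by
  have h := vJ_mono J (k := k) (k' := ℓ - 1) (by omega)
  unfold vJ NN at *
  omega

lemma ell_le_NN (hℓ : 1 ≤ ℓ) : ℓ ≤ NN ℓ J := by
  unfold NN; omega

lemma NN_pos (hℓ : 1 ≤ ℓ) : 1 ≤ NN ℓ J := by unfold NN; omega

lemma TT_strict {k k' : ℕ} (h : k < k') : TT ℓ J k < TT ℓ J k' := by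
  have := eJ_le_one J k
  have := eJ_le_one J k'
  unfold TT; omega

lemma TT_mono {k k' : ℕ} (h : k ≤ k') : TT ℓ J k ≤ TT ℓ J k' := by
  rcases eq_or_lt_of_le h with rfl | hlt
  · exact le_refl _
  · exact le_of_lt (TT_strict hlt)

lemma TT_top (hℓ : 1 ≤ ℓ) : TT ℓ J (ℓ - 1) = NN ℓ J := by
  unfold TT NN; omega

lemma cT_le : cT ℓ J i ≤ ℓ := by
  unfold cT
  calc ((Finset.range ℓ).filter _).card ≤ (Finset.range ℓ).card := Finset.card_filter_le _ _
    _ = ℓ := Finset.card_range ℓ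

lemma cT_mono {i i' : ℕ} (h : i ≤ i') : cT ℓ J i ≤ cT ℓ J i' := by
  apply Finset.card_le_card
  intro x hx
  simp only [Finset.mem_filter] at hx ⊢
  exact ⟨hx.1, by omega⟩

lemma cT_full (hℓ : 1 ≤ ℓ) {i : ℕ} (hi : NN ℓ J ≤ i) : cT ℓ J i = ℓ := by
  unfold cT
  rw [Finset.filter_true_of_mem, Finset.card_range]
  intro k hk
  simp only [Finset.mem_range] at hk
  have h1 : TT ℓ J k ≤ TT ℓ J (ℓ - 1) := TT_mono (by omega)
  rw [TT_top hℓ] at h1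
  omega

lemma cT_lt (hℓ : 1 ≤ ℓ) {i : ℕ} (hi : i < NN ℓ J) : cT ℓ J i < ℓ := by
  unfold cT
  have hsub : (Finset.range ℓ).filter (fun k => TT ℓ J k ≤ i) ⊂ Finset.range ℓ := by
    rw [Finset.ssubset_iff_of_subset (Finset.filter_subset _ _)]
    refine ⟨ℓ - 1, Finset.mem_range.mpr (by omega), ?_⟩
    simp only [Finset.mem_filter, Finset.mem_range, not_and]
    intro _
    rw [TT_top hℓ]
    omega
  have := Finset.card_lt_card hsub
  rwa [Finset.card_range] at this

lemma cT_at_TT {k : ℕ} (hk : k < ℓ) : k + 1 ≤ cT ℓ J (TT ℓ J k) := by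
  unfold cT
  have hsub : Finset.range (k + 1) ⊆ (Finset.range ℓ).filter (fun k' => TT ℓ J k' ≤ TT ℓ J k) := by
    intro x hx
    simp only [Finset.mem_range] at hx
    simp only [Finset.mem_filter, Finset.mem_range]
    exact ⟨by omega, TT_mono (by omega)⟩
  have := Finset.card_le_card hsub
  rwa [Finset.card_range] at this

lemma cT_before_TT {k : ℕ} : cT ℓ J (TT ℓ J k - 1) ≤ k := by
  unfold cT
  have hsub : (Finset.range ℓ).filter (fun k' => TT ℓ J k' ≤ TT ℓ J k - 1) ⊆ Finset.range k := by
    intro x hx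
    simp only [Finset.mem_filter, Finset.mem_range] at hx
    simp only [Finset.mem_range]
    by_contra hxk
    push_neg at hxk
    have := TT_mono (ℓ := ℓ) (J := J) hxk
    have hTpos : 1 ≤ TT ℓ J k := by unfold TT; omega
    omega
  have := Finset.card_le_card hsub
  rwa [Finset.card_range] at this

/-- the key non-collision fact -/
lemma no_collision (hℓ : 1 ≤ ℓ) {i k : ℕ} (hi : ℓ ≤ i) (hk : k < ℓ) :
    ℓ + vJ J k ≠ i + 1 + cT ℓ J i := by
  intro heq
  have hTv : ℓ + vJ J k = TT ℓ J k + k + 1 := by unfold TT vJ; ring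
  rcases Nat.lt_or_ge i (TT ℓ J k) with hcase | hcase
  · have h1 : cT ℓ J i ≤ cT ℓ J (TT ℓ J k - 1) := cT_mono (by omega)
    have h2 := cT_before_TT (ℓ := ℓ) (J := J) (k := k)
    omega
  · have h1 : cT ℓ J (TT ℓ J k) ≤ cT ℓ J i := cT_mono hcase
    have h2 := cT_at_TT (ℓ := ℓ) (J := J) hk
    omega

end Part3

section Part3b

variable {ℓ : ℕ} {J : Finset ℕ}

/-- row lengths of the double of `ptnJ` -/
def gD (ℓ : ℕ) (J : Finset ℕ) (i : ℕ) : ℕ :=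
  if i < ℓ then vJ J (ℓ - 1 - i) + 1 + i else ℓ - cT ℓ J i

lemma ptnJ_length : (ptnJ ℓ J).length = ℓ := by
  unfold ptnJ
  rw [length_of_map]
  rw [Finset.filter_true_of_mem, Finset.card_range]
  intro i _
  unfold vJ
  omega

lemma ptnJ_part0 (hℓ : 1 ≤ ℓ) : (ptnJ ℓ J).part 0 = NN ℓ J := by
  rw [ptnJ_part, if_pos (by omega), Nat.sub_zero]
  unfold vJ NN
  omega

lemma gD_anti : ∀ i j, i ≤ j → gD ℓ J j ≤ gD ℓ J i := by
  intro i j hij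
  rcases eq_or_lt_of_le hij with rfl | hlt
  · exact le_refl _
  unfold gD
  rcases Nat.lt_or_ge j ℓ with hj | hj
  · rw [if_pos hj, if_pos (by omega)]
    have h1 := eJ_le_one J (ℓ - 1 - i)
    have h2 := eJ_le_one J (ℓ - 1 - j)
    unfold vJ
    omega
  · rw [if_neg (by omega)]
    rcases Nat.lt_or_ge i ℓ with hi | hi
    · rw [if_pos hi]
      have h1 := cT_le (ℓ := ℓ) (J := J) (i := j)
      have h2 := eJ_le_one J (ℓ - 1 - i)
      unfold vJ
      omega
    · rw [if_neg (by omega)]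
      have := cT_mono (ℓ := ℓ) (J := J) hij
      omega

lemma gD_eval_lt {i : ℕ} (hi : i < ℓ) : gD ℓ J i = vJ J (ℓ - 1 - i) + 1 + i := by
  unfold gD; rw [if_pos hi]

lemma gD_eval_ge {i : ℕ} (hi : ℓ ≤ i) : gD ℓ J i = ℓ - cT ℓ J i := by
  unfold gD; rw [if_neg (by omega)]

lemma double_ptnJ (hℓ : 1 ≤ ℓ) :
    double (ptnJ ℓ J) = Ptn.of ((Multiset.range (ℓ + NN ℓ J)).map (gD ℓ J)) := by
  unfold double
  rw [ptnJ_length, ptnJ_part0 hℓ]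
  congr 1
  apply Multiset.map_congr rfl
  intro i hi
  simp only [Multiset.mem_range] at hi
  rcases Nat.lt_or_ge i ℓ with hcase | hcase
  · rw [gD_eval_lt hcase, if_pos hcase, ptnJ_part, if_pos hcase]
    have hmin : min i ℓ = i := by omega
    rw [hmin]
    rw [Finset.filter_true_of_mem, Finset.card_range]
    intro j hj
    simp only [Finset.mem_range] at hj
    rw [ptnJ_part, if_pos (by omega)]
    have := eJ_le_one J (ℓ - 1 - j)
    unfold vJ
    omega
  · rw [gD_eval_ge hcase, if_neg (by omega)]
    have hmin : min i ℓ = ℓ := by omega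
    rw [hmin, Nat.zero_add]
    have hcong : (Finset.range ℓ).filter (fun j => i + 1 ≤ j + (ptnJ ℓ J).part j)
        = (Finset.range ℓ).filter (fun j => ¬ TT ℓ J (ℓ - 1 - j) ≤ i) := by
      apply Finset.filter_congr
      intro j hj
      simp only [Finset.mem_range] at hj
      rw [ptnJ_part, if_pos hj]
      simp only [eq_iff_iff, not_le]
      unfold vJ TT
      omega
    rw [hcong]
    have hneg := Finset.card_filter_add_card_filter_not
      (s := Finset.range ℓ) (p := fun j => TT ℓ J (ℓ - 1 - j) ≤ i)
    rw [Finset.card_range] at hneg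
    have hrefl : ((Finset.range ℓ).filter (fun j => TT ℓ J (ℓ - 1 - j) ≤ i)).card = cT ℓ J i := by
      unfold cT
      rw [filter_card_reflect ℓ (fun k => TT ℓ J k ≤ i)]
    omega

lemma D_part (hℓ : 1 ≤ ℓ) (i : ℕ) : (double (ptnJ ℓ J)).part i = gD ℓ J i := by
  rw [double_ptnJ hℓ]
  rw [part_of_map _ _ (fun a b hab _ => gD_anti a b hab)]
  split
  · rfl
  · rename_i h
    rw [gD_eval_ge (by omega)]
    rw [cT_full hℓ (by omega)]
    omega

lemma D_length (hℓ : 1 ≤ ℓ) : (double (ptnJ ℓ J)).length = NN ℓ J := by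
  rw [double_ptnJ hℓ, length_of_map]
  have : (Finset.range (ℓ + NN ℓ J)).filter (fun i => 0 < gD ℓ J i)
      = Finset.range (NN ℓ J) := by
    ext x
    simp only [Finset.mem_filter, Finset.mem_range]
    constructor
    · rintro ⟨h1, h2⟩
      by_contra hx
      push_neg at hx
      rw [gD_eval_ge (le_trans (ell_le_NN hℓ) hx), cT_full hℓ hx] at h2
      omega
    · intro hx
      refine ⟨by omega, ?_⟩
      rcases Nat.lt_or_ge x ℓ with hc | hc
      · rw [gD_eval_lt hc]; omega
      · rw [gD_eval_ge hc]
        have := cT_lt hℓ hx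
        omega
  rw [this, Finset.card_range]

lemma D_part0 (hℓ : 1 ≤ ℓ) : (double (ptnJ ℓ J)).part 0 = NN ℓ J + 1 := by
  rw [D_part hℓ, gD_eval_lt hℓ]
  have : ℓ - 1 - 0 = ℓ - 1 := by omega
  rw [this]
  unfold vJ NN
  omega

end Part3b

section Part3c

variable {ℓ : ℕ} {J : Finset ℕ}

/-- the beta set of the double, described via Maya positions -/
def Bset (ℓ : ℕ) (J : Finset ℕ) : Finset ℕ :=
  ((Finset.range (3 * NN ℓ J)) \ (Finset.range ℓ).image (fun k => 3 * NN ℓ J - vJ J k))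
    ∪ (Finset.range ℓ).image (fun k => 3 * NN ℓ J + vJ J k)

lemma Bset_card (hℓ : 1 ≤ ℓ) : (Bset ℓ J).card = 3 * NN ℓ J := by
  set N := NN ℓ J with hN
  have hNpos := NN_pos (J := J) hℓ
  have hinj1 : ∀ x ∈ Finset.range ℓ, ∀ y ∈ Finset.range ℓ,
      3 * N - vJ J x = 3 * N - vJ J y → x = y := by
    intro x hx y hy hxy
    simp only [Finset.mem_range] at hx hy
    have h1 := vJ_top (J := J) hℓ hx
    have h2 := vJ_top (J := J) hℓ hy
    by_contra hne
    rcases Nat.lt_or_ge x y with h | h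
    · have := vJ_anti J h
      rw [← hN] at h1 h2
      omega
    · rcases eq_or_lt_of_le h with heq | hlt
      · omega
      · have := vJ_anti J hlt
        rw [← hN] at h1 h2
        omega
  have hinj2 : ∀ x ∈ Finset.range ℓ, ∀ y ∈ Finset.range ℓ,
      3 * N + vJ J x = 3 * N + vJ J y → x = y := by
    intro x hx y hy hxy
    simp only [Finset.mem_range] at hx hy
    by_contra hne
    rcases Nat.lt_or_ge x y with h | h
    · have := vJ_anti J h; omega
    · rcases eq_or_lt_of_le h with heq | hlt
      · omega
      · have := vJ_anti J hlt; omega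
  have hsub : (Finset.range ℓ).image (fun k => 3 * N - vJ J k) ⊆ Finset.range (3 * N) := by
    intro x hx
    simp only [Finset.mem_image, Finset.mem_range] at hx ⊢
    obtain ⟨k, hk, rfl⟩ := hx
    have : 1 ≤ vJ J k := by unfold vJ; omega
    omega
  have hdisj : Disjoint
      ((Finset.range (3 * N)) \ (Finset.range ℓ).image (fun k => 3 * N - vJ J k))
      ((Finset.range ℓ).image (fun k => 3 * N + vJ J k)) := by
    rw [Finset.disjoint_left]
    intro x hx hx2
    simp only [Finset.mem_sdiff, Finset.mem_range] at hx
    simp only [Finset.mem_image, Finset.mem_range] at hx2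
    obtain ⟨k, hk, rfl⟩ := hx2
    omega
  unfold Bset
  rw [← hN, Finset.card_union_of_disjoint hdisj, Finset.card_sdiff_of_subset hsub,
    Finset.card_range, Finset.card_image_of_injOn (fun x hx y hy => hinj1 x hx y hy),
    Finset.card_image_of_injOn (fun x hx y hy => hinj2 x hx y hy), Finset.card_range]
  have himgsub := Finset.card_le_card hsub
  rw [Finset.card_image_of_injOn (fun x hx y hy => hinj1 x hx y hy), Finset.card_range] at himgsub
  have hlN := ell_le_NN (J := J) hℓ
  rw [← hN] at hlN
  omega

lemma betaSet_eq (hℓ : 1 ≤ ℓ) : betaSet (double (ptnJ ℓ J)) (3 * NN ℓ J) = Bset ℓ J := by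
  set N := NN ℓ J with hN
  set D := double (ptnJ ℓ J) with hD
  have hNpos := NN_pos (J := J) hℓ
  have hlN := ell_le_NN (J := J) hℓ
  rw [← hN] at hNpos hlN
  -- betaSet ⊆ Bset
  have hsub : betaSet D (3 * N) ⊆ Bset ℓ J := by
    intro x hx
    unfold betaSet at hx
    simp only [Finset.mem_image, Finset.mem_range] at hx
    obtain ⟨i, hi, rfl⟩ := hx
    unfold Bset
    rw [← hN]
    simp only [Finset.mem_union, Finset.mem_sdiff, Finset.mem_image, Finset.mem_range]
    rcases Nat.lt_or_ge i ℓ with hcase | hcase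
    · right
      refine ⟨ℓ - 1 - i, by omega, ?_⟩
      rw [hD, D_part hℓ, gD_eval_lt hcase]
      omega
    · left
      rw [hD, D_part hℓ, gD_eval_ge hcase]
      have hcle := cT_le (ℓ := ℓ) (J := J) (i := i)
      constructor
      · omega
      · rintro ⟨k, hk, hkeq⟩
        have hvtop := vJ_top (J := J) hℓ hk
        rw [← hN] at hvtop
        have : ℓ + vJ J k = i + 1 + cT ℓ J i := by omega
        exact no_collision hℓ hcase hk this
  -- cardinalities agree
  have hcard : (Bset ℓ J).card ≤ (betaSet D (3 * N)).card := by
    rw [Bset_card hℓ, ← hN]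
    unfold betaSet
    rw [Finset.card_image_of_injOn]
    · rw [Finset.card_range]
    · intro a ha b hb hab
      simp only [Finset.coe_range, Set.mem_Iio] at ha hb
      have hab' : D.part a + (3 * N - 1 - a) = D.part b + (3 * N - 1 - b) := hab
      by_contra hne
      have hanti : ∀ p q : ℕ, p < q → q < 3 * N → D.part q + (3 * N - 1 - q) < D.part p + (3 * N - 1 - p) := by
        intro p q hpq hq
        have := part_antitone D (le_of_lt hpq)
        omega
      rcases Nat.lt_or_ge a b with h | h
      · have := hanti a b h hb; omega
      · rcases eq_or_lt_of_le h with heq | hlt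
        · omega
        · have := hanti b a hlt ha; omega
  exact Finset.eq_of_subset_of_card_le hsub hcard

end Part3c

section Part3d

variable {ℓ : ℕ} {J : Finset ℕ}

lemma vJ_of_mem {k : ℕ} (h : k ∈ J) : vJ J k = 3 * k + 2 := by
  unfold vJ eJ; rw [if_pos h]

lemma vJ_of_not_mem {k : ℕ} (h : k ∉ J) : vJ J k = 3 * k + 1 := by
  unfold vJ eJ; rw [if_neg h]

/-- levels of the beads on runner 1 -/
def Lset (ℓ : ℕ) (J : Finset ℕ) : Finset ℕ :=
  ((Finset.range (NN ℓ J)) \ J.image (fun j => NN ℓ J - 1 - j))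
    ∪ (IS ℓ J).image (fun i => NN ℓ J + i)

lemma runner_eq (hℓ : 1 ≤ ℓ) (hJ : J ⊆ Finset.range ℓ) :
    runnerLevels 3 (double (ptnJ ℓ J)) 1 = Lset ℓ J := by
  set N := NN ℓ J with hN
  have hNpos := NN_pos (J := J) hℓ
  have hlN := ell_le_NN (J := J) hℓ
  rw [← hN] at hNpos hlN
  unfold runnerLevels
  rw [D_length hℓ, D_part0 hℓ, betaSet_eq hℓ, ← hN]
  ext s
  simp only [Finset.mem_filter, Finset.mem_range]
  unfold Bset Lset
  rw [← hN]
  simp only [Finset.mem_union, Finset.mem_sdiff, Finset.mem_image, Finset.mem_range, mem_IS]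
  constructor
  · rintro ⟨hsb, hmem | hmem⟩
    · obtain ⟨h3s, hnot⟩ := hmem
      left
      refine ⟨by omega, ?_⟩
      rintro ⟨j, hjJ, hjeq⟩
      have hjl : j < ℓ := Finset.mem_range.mp (hJ hjJ)
      apply hnot
      refine ⟨j, hjl, ?_⟩
      rw [vJ_of_mem hjJ]
      omega
    · obtain ⟨k, hk, hkeq⟩ := hmem
      right
      by_cases hkJ : k ∈ J
      · rw [vJ_of_mem hkJ] at hkeq
        omega
      · refine ⟨k, ⟨hk, hkJ⟩, ?_⟩
        rw [vJ_of_not_mem hkJ] at hkeq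
        omega
  · rintro (⟨hsN, hnot⟩ | ⟨i, ⟨hil, hiJ⟩, rfl⟩)
    · refine ⟨by omega, Or.inl ⟨by omega, ?_⟩⟩
      rintro ⟨k, hk, hkeq⟩
      have hvt := vJ_top (J := J) hℓ hk
      rw [← hN] at hvt
      by_cases hkJ : k ∈ J
      · rw [vJ_of_mem hkJ] at hkeq
        exact hnot ⟨k, hkJ, by omega⟩
      · rw [vJ_of_not_mem hkJ] at hkeq
        omega
    · refine ⟨by omega, Or.inr ⟨i, hil, ?_⟩⟩
      rw [vJ_of_not_mem hiJ]
      omega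

end Part3d

section Part3e

variable {ℓ : ℕ} {J : Finset ℕ}

lemma dJ_zero_of_ge (hJ : J ⊆ Finset.range ℓ) {t : ℕ} (ht : ℓ ≤ t) : dJ J t = 0 := by
  unfold dJ
  rw [Finset.card_eq_zero, Finset.filter_eq_empty_iff]
  intro j hj
  have := Finset.mem_range.mp (hJ hj)
  omega

lemma ptnOfBeads_Lset (hℓ : 1 ≤ ℓ) (hJ : J ⊆ Finset.range ℓ) :
    ptnOfBeads (Lset ℓ J) = wP ℓ J := by
  classical
  set N := NN ℓ J with hN
  have hNpos := NN_pos (J := J) hℓ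
  have hlN := ell_le_NN (J := J) hℓ
  rw [← hN] at hNpos hlN
  set m := J.card with hm
  set n := (IS ℓ J).card with hn
  have hmℓ : m ≤ ℓ := by
    rw [hm, ← Finset.card_range ℓ]
    exact Finset.card_le_card hJ
  have hnval : n = ℓ - m := by rw [hn, IS_card hJ, hm]
  set holes := J.image (fun j => N - 1 - j) with hholes
  set A := (Finset.range N) \ holes with hA
  set Bf := (IS ℓ J).image (fun i => N + i) with hBf
  have hLset : Lset ℓ J = A ∪ Bf := rfl
  have hjlt : ∀ j ∈ J, j < ℓ := fun j hj => Finset.mem_range.mp (hJ hj)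
  have holes_sub : holes ⊆ Finset.range N := by
    intro x hx
    rw [hholes] at hx
    simp only [Finset.mem_image] at hx
    obtain ⟨j, hj, rfl⟩ := hx
    have := hjlt j hj
    simp only [Finset.mem_range]
    omega
  have holes_card : holes.card = m := by
    rw [hholes, Finset.card_image_of_injOn, hm]
    intro x hx y hy hxy
    have hx' := hjlt x hx
    have hy' := hjlt y hy
    replace hxy : N - 1 - x = N - 1 - y := hxy
    omega
  have A_card : A.card = N - m := by
    rw [hA, Finset.card_sdiff_of_subset holes_sub, Finset.card_range, holes_card]
  have hdisjAB : Disjoint A Bf := by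
    rw [Finset.disjoint_left]
    intro x hx hx2
    rw [hA] at hx
    rw [hBf] at hx2
    simp only [Finset.mem_sdiff, Finset.mem_range] at hx
    simp only [Finset.mem_image] at hx2
    obtain ⟨i, _, hieq⟩ := hx2
    replace hieq : N + i = x := hieq
    omega
  -- the bead-to-part function
  set f : ℕ → ℕ := fun p => p - ((Lset ℓ J).filter (fun q => q < p)).card with hf
  -- count below a B-bead
  have cIS_add_cJ : ∀ i ∈ IS ℓ J, ((IS ℓ J).filter (fun x => x < i)).card + cJ J i = i := by
    intro i hi
    obtain ⟨hil, hiJ⟩ := mem_IS.mp hi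
    have hsplit : (Finset.range ℓ).filter (fun x => x < i)
        = (IS ℓ J).filter (fun x => x < i) ∪ J.filter (fun x => x < i) := by
      rw [← Finset.filter_union, IS, Finset.sdiff_union_of_subset hJ]
    have hrange : (Finset.range ℓ).filter (fun x => x < i) = Finset.range i := by
      ext x
      simp only [Finset.mem_filter, Finset.mem_range]
      omega
    have hdisj : Disjoint ((IS ℓ J).filter (fun x => x < i)) (J.filter (fun x => x < i)) :=
      Finset.disjoint_filter_filter (Finset.sdiff_disjoint)
    have := congrArg Finset.card hsplit
    rw [hrange, Finset.card_range, Finset.card_union_of_disjoint hdisj] at this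
    unfold cJ
    omega
  have fB : ∀ i ∈ IS ℓ J, f (N + i) = m + cJ J i := by
    intro i hi
    obtain ⟨hil, hiJ⟩ := mem_IS.mp hi
    have hfilA : A.filter (fun q => q < N + i) = A := by
      apply Finset.filter_true_of_mem
      intro x hx
      rw [hA] at hx
      simp only [Finset.mem_sdiff, Finset.mem_range] at hx
      omega
    have hfilB : Bf.filter (fun q => q < N + i)
        = ((IS ℓ J).filter (fun x => x < i)).image (fun x => N + x) := by
      rw [hBf, Finset.filter_image]
      congr 1
      apply Finset.filter_congr
      intro x _
      omega
    have hcount : ((Lset ℓ J).filter (fun q => q < N + i)).card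
        = (N - m) + ((IS ℓ J).filter (fun x => x < i)).card := by
      rw [hLset, Finset.filter_union, Finset.card_union_of_disjoint, hfilA, A_card, hfilB,
        Finset.card_image_of_injOn (by intro x _ y _ h; replace h : N + x = N + y := h; omega)]
      rw [hfilA, hfilB]
      apply Finset.disjoint_left.mpr
      intro x hx hx2
      rw [hA] at hx
      simp only [Finset.mem_sdiff, Finset.mem_range] at hx
      simp only [Finset.mem_image] at hx2
      obtain ⟨y, _, hyeq⟩ := hx2
      replace hyeq : N + y = x := hyeq
      omega
    show N + i - ((Lset ℓ J).filter (fun q => q < N + i)).card = m + cJ J i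
    rw [hcount]
    have h1 := cIS_add_cJ i hi
    have h2 : cJ J i ≤ i := by omega
    omega
  -- count below an A-bead
  have fA : ∀ s ∈ A, f s = dJ J (N - 1 - s) := by
    intro s hs
    have hsN : s < N := by
      rw [hA] at hs
      exact Finset.mem_range.mp (Finset.mem_sdiff.mp hs).1
    have hfilB : Bf.filter (fun q => q < s) = ∅ := by
      rw [Finset.filter_eq_empty_iff]
      intro x hx
      rw [hBf] at hx
      simp only [Finset.mem_image] at hx
      obtain ⟨y, _, hyeq⟩ := hx
      replace hyeq : N + y = x := hyeq
      omega
    have hfilA : A.filter (fun q => q < s)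
        = Finset.range s \ (holes.filter (fun h => h < s)) := by
      rw [hA]
      ext x
      simp only [Finset.mem_filter, Finset.mem_sdiff, Finset.mem_range]
      constructor
      · rintro ⟨⟨h1, h2⟩, h3⟩
        exact ⟨h3, fun hc => h2 hc.1⟩
      · rintro ⟨h1, h2⟩
        exact ⟨⟨by omega, fun hc => h2 ⟨hc, h1⟩⟩, h1⟩
    have hsubh : holes.filter (fun h => h < s) ⊆ Finset.range s := by
      intro x hx
      simp only [Finset.mem_filter] at hx
      exact Finset.mem_range.mpr hx.2
    have hcardh : (holes.filter (fun h => h < s)).card = dJ J (N - 1 - s) := by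
      rw [hholes, Finset.filter_image]
      rw [Finset.card_image_of_injOn (by
        intro x hx y hy h
        simp only [Finset.coe_filter, Set.mem_setOf_eq] at hx hy
        have := hjlt x hx.1
        have := hjlt y hy.1
        replace h : N - 1 - x = N - 1 - y := h
        omega)]
      unfold dJ
      congr 1
      apply Finset.filter_congr
      intro j hj
      have := hjlt j hj
      omega
    have hcount : ((Lset ℓ J).filter (fun q => q < s)).card
        = s - dJ J (N - 1 - s) := by
      rw [hLset, Finset.filter_union, hfilB, Finset.union_empty, hfilA,
        Finset.card_sdiff_of_subset hsubh, Finset.card_range, hcardh]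
    have hle : dJ J (N - 1 - s) ≤ s := by
      have := Finset.card_le_card hsubh
      rw [Finset.card_range] at this
      omega
    show s - ((Lset ℓ J).filter (fun q => q < s)).card = dJ J (N - 1 - s)
    rw [hcount]
    omega
  -- identify A as an image
  have hAimg : A = ((Finset.range N) \ J).image (fun t => N - 1 - t) := by
    ext x
    rw [hA, hholes]
    simp only [Finset.mem_sdiff, Finset.mem_range, Finset.mem_image]
    constructor
    · rintro ⟨hxN, hxh⟩
      refine ⟨N - 1 - x, ⟨by omega, ?_⟩, by omega⟩
      intro hc
      exact hxh ⟨N - 1 - x, hc, by omega⟩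
    · rintro ⟨t, ⟨htN, htJ⟩, rfl⟩
      refine ⟨by omega, ?_⟩
      rintro ⟨j, hjJ, hjeq⟩
      have := hjlt j hjJ
      have : j = t := by omega
      exact htJ (this ▸ hjJ)
  -- split range N \ J
  have hRNJ : (Finset.range N) \ J = (IS ℓ J) ∪ Finset.Ico ℓ N := by
    ext x
    simp only [Finset.mem_sdiff, Finset.mem_range, Finset.mem_union, mem_IS, Finset.mem_Ico]
    constructor
    · rintro ⟨h1, h2⟩
      rcases Nat.lt_or_ge x ℓ with h | h
      · exact Or.inl ⟨h, h2⟩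
      · exact Or.inr ⟨h, h1⟩
    · rintro (⟨h1, h2⟩ | ⟨h1, h2⟩)
      · exact ⟨by omega, h2⟩
      · exact ⟨h2, fun hc => by have := hjlt x hc; omega⟩
  have hdisjIco : Disjoint (IS ℓ J) (Finset.Ico ℓ N) := by
    rw [Finset.disjoint_left]
    intro x hx hx2
    have := (mem_IS.mp hx).1
    simp only [Finset.mem_Ico] at hx2
    omega
  -- multiset of parts from the beads
  have hBfval : Bf.val = (IS ℓ J).val.map (fun i => N + i) := by
    rw [hBf]
    apply image_val_of_injOn
    intro x _ y _ h
    replace h : N + x = N + y := h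
    omega
  have hAval : A.val = ((IS ℓ J).val + (Finset.Ico ℓ N).val).map (fun t => N - 1 - t) := by
    rw [hAimg, ← finset_val_add hdisjIco hRNJ]
    apply image_val_of_injOn
    intro x hx y hy h
    simp only [Finset.mem_sdiff, Finset.mem_range] at hx hy
    replace h : N - 1 - x = N - 1 - y := h
    omega
  have hbeads : (ptnOfBeads (Lset ℓ J)).parts
      = (((IS ℓ J).val.map (dJ J) + (Finset.Ico ℓ N).val.map (dJ J))
          + (IS ℓ J).val.map (fun i => m + cJ J i)).filter (fun x => 0 < x) := by
    unfold ptnOfBeads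
    rw [parts_of]
    congr 1
    rw [finset_val_add hdisjAB hLset, Multiset.map_add, hBfval, hAval]
    congr 1
    · rw [Multiset.map_map, Multiset.map_add]
      congr 1
      · apply Multiset.map_congr rfl
        intro t ht
        have htIS : t ∈ IS ℓ J := ht
        have ht' : N - 1 - t ∈ A := by
          rw [hAimg]
          simp only [Finset.mem_image]
          exact ⟨t, by rw [hRNJ]; exact Finset.mem_union_left _ htIS, rfl⟩
        have heq := fA (N - 1 - t) ht'
        have hlt := (mem_IS.mp htIS).1
        have h2 : N - 1 - (N - 1 - t) = t := by omega
        rw [h2] at heq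
        exact heq
      · apply Multiset.map_congr rfl
        intro t ht
        have htI : t ∈ Finset.Ico ℓ N := ht
        simp only [Finset.mem_Ico] at htI
        have ht' : N - 1 - t ∈ A := by
          rw [hAimg]
          simp only [Finset.mem_image]
          refine ⟨t, ?_, rfl⟩
          rw [hRNJ]
          exact Finset.mem_union_right _ (by simp only [Finset.mem_Ico]; omega)
        have heq := fA (N - 1 - t) ht'
        have h2 : N - 1 - (N - 1 - t) = t := by omega
        rw [h2] at heq
        exact heq
    · rw [Multiset.map_map]
      apply Multiset.map_congr rfl
      intro i hi
      exact fB i hi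
  -- the wP multiset
  have hr2n : Finset.range (2 * n) = Finset.range n ∪ Finset.Ico n (2 * n) := by
    ext x
    simp only [Finset.mem_range, Finset.mem_union, Finset.mem_Ico]
    omega
  have hdisj2n : Disjoint (Finset.range n) (Finset.Ico n (2 * n)) := by
    rw [Finset.disjoint_left]
    intro x hx hx2
    simp only [Finset.mem_range] at hx
    simp only [Finset.mem_Ico] at hx2
    omega
  have hIco2n : Finset.Ico n (2 * n) = (Finset.range n).image (fun k => n + k) := by
    ext x
    simp only [Finset.mem_Ico, Finset.mem_image, Finset.mem_range]
    constructor
    · intro ⟨h1, h2⟩; exact ⟨x - n, by omega, by omega⟩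
    · rintro ⟨k, hk, rfl⟩; omega
  have hwP : (wP ℓ J).parts
      = ((IS ℓ J).val.map (fun i => m + cJ J i) + (IS ℓ J).val.map (dJ J)).filter
          (fun x => 0 < x) := by
    unfold wP
    rw [parts_of]
    congr 1
    have hval2n : (Multiset.range (2 * n)) = (Finset.range n).val + (Finset.Ico n (2 * n)).val := by
      rw [← Finset.range_val]
      exact finset_val_add hdisj2n hr2n
    rw [← hn, hval2n, Multiset.map_add]
    congr 1
    · -- first block
      have h1 : (Finset.range n).val.map (FJ ℓ J)
          = (Multiset.range n).map (fun r => m + cJ J (fel (IS ℓ J) (n - 1 - r))) := by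
        rw [Finset.range_val]
        apply Multiset.map_congr rfl
        intro r hr
        simp only [Multiset.mem_range] at hr
        unfold FJ
        rw [← hn, ← hm, if_pos hr]
      rw [h1, ← multiset_range_reflect n (fun k => m + cJ J (fel (IS ℓ J) k))]
      rw [val_eq_map_fel (IS ℓ J), ← hn, Multiset.map_map]
      rfl
    · -- second block
      have h2 : (Finset.Ico n (2 * n)).val.map (FJ ℓ J)
          = (Multiset.range n).map (fun k => dJ J (fel (IS ℓ J) k)) := by
        rw [hIco2n, image_val_of_injOn (by intro x _ y _ h; replace h : n + x = n + y := h; omega),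
          Finset.range_val,
          Multiset.map_map]
        apply Multiset.map_congr rfl
        intro k hk
        simp only [Multiset.mem_range] at hk
        simp only [Function.comp]
        unfold FJ
        rw [← hn, if_neg (by omega)]
        congr 1
        congr 1
        omega
      rw [h2, val_eq_map_fel (IS ℓ J), ← hn, Multiset.map_map]
      rfl
  -- the Ico part consists of zeros
  have hIcoZero : ((Finset.Ico ℓ N).val.map (dJ J)).filter (fun x => 0 < x) = 0 := by
    rw [Multiset.filter_eq_nil]
    intro x hx
    simp only [Multiset.mem_map] at hx
    obtain ⟨t, ht, rfl⟩ := hx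
    have : t ∈ Finset.Ico ℓ N := ht
    simp only [Finset.mem_Ico] at this
    rw [dJ_zero_of_ge hJ this.1]
    omega
  apply Ptn.ext'
  rw [hbeads, hwP]
  rw [Multiset.filter_add, Multiset.filter_add, Multiset.filter_add, hIcoZero]
  rw [add_zero]
  rw [add_comm]

end Part3e

lemma barQuot1_ptnJ {ℓ : ℕ} {J : Finset ℕ} (hℓ : 1 ≤ ℓ) (hJ : J ⊆ Finset.range ℓ) :
    barQuot1 (ptnJ ℓ J) = wP ℓ J := by
  unfold barQuot1 quotP
  rw [runner_eq hℓ hJ]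
  exact ptnOfBeads_Lset hℓ hJ

set_option maxHeartbeats 1000000 in
/-- Lemma 6.5: for `ℓ ≥ 1` and `0 ≤ m ≤ ℓ`,
`W(ℓ-m,m) = {μ^b[1] : μ ∈ F_1^m(Λ_ℓ)}`. -/
theorem stmt7 (ℓ m : ℕ) (hℓ : 1 ≤ ℓ) (hm : m ≤ ℓ) :
    W (ℓ - m) m = barQuot1 '' (F1Lam ℓ m) := by
  rw [W_eq ℓ m hm, F1Lam_eq ℓ m]
  ext p
  simp only [Set.mem_setOf_eq, Set.mem_image]
  constructor
  · rintro ⟨J, hJsub, hcard, hp⟩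
    refine ⟨ptnJ ℓ J, ⟨J, hJsub, hcard, rfl⟩, ?_⟩
    rw [barQuot1_ptnJ hℓ hJsub, hp]
  · rintro ⟨mu, ⟨J, hJsub, hcard, hmu⟩, hbq⟩
    refine ⟨J, hJsub, hcard, ?_⟩
    rw [← hbq, hmu, barQuot1_ptnJ hℓ hJsub]
end

section
/- Let λ be a strict partition. Then (1) there exist strict partitions λ^{bc(3)} and λ^b[0] such that D(λ^{bc(3)}) equals the 3-core of D(λ) and D(λ^b[0]) equals the 3-quotient component D(λ)[0]; and (2) the 3-quotient component D(λ)[2] is the conjugate partition of D(λ)[1]. -/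
open scoped BigOperators

open MvPolynomial

namespace PfAux

open Finset

lemma Ptn.ext' {a b : Ptn} (h : a.parts = b.parts) : a = b := by
  cases a; cases b; simpa using h

/-- rank lemma for sorted-descending lists -/
lemma list_rank (v : ℕ) (hv : 0 < v) :
    ∀ (R : List ℕ), R.Pairwise (· ≥ ·) → ∀ i,
      v ≤ R.getD i 0 ↔ i < (R.filter (fun x => v ≤ x)).length := by
  intro R
  induction R with
  | nil => intro _ i; simp; omega
  | cons a t ih =>
    intro hs i
    obtain ⟨ha, ht⟩ := List.pairwise_cons.mp hs
    cases i with
    | zero =>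
      by_cases hva : v ≤ a
      · simp [List.filter_cons, hva]
      · have : t.filter (fun x => v ≤ x) = [] := by
          apply List.filter_eq_nil_iff.mpr
          intro x hx
          simp only [decide_eq_true_eq]
          have := ha x hx
          omega
        simp [List.filter_cons, hva, this]
    | succ i =>
      rw [List.getD_cons_succ, ih ht i]
      by_cases hva : v ≤ a
      · simp [List.filter_cons, hva]
      · have : t.filter (fun x => v ≤ x) = [] := by
          apply List.filter_eq_nil_iff.mpr
          intro x hx
          simp only [decide_eq_true_eq]
          have := ha x hx
          omega
        simp [List.filter_cons, hva, this]

def sortedParts (l : Ptn) : List ℕ := (l.parts.sort (· ≤ ·)).reverse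

lemma part_eq_getD (l : Ptn) (i : ℕ) : l.part i = (sortedParts l).getD i 0 := rfl

lemma sortedParts_sorted (l : Ptn) : (sortedParts l).Pairwise (· ≥ ·) := by
  unfold sortedParts
  rw [List.pairwise_reverse]
  simpa [flip] using Multiset.pairwise_sort (s := l.parts) (r := (· ≤ ·))

lemma sortedParts_coe (l : Ptn) : ((sortedParts l : List ℕ) : Multiset ℕ) = l.parts := by
  unfold sortedParts
  rw [Multiset.coe_reverse, Multiset.sort_eq]

lemma sortedParts_length (l : Ptn) : (sortedParts l).length = l.length := by
  have := congrArg Multiset.card (sortedParts_coe l)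
  simpa [Ptn.length] using this

lemma part_ge_iff (l : Ptn) (i v : ℕ) (hv : 0 < v) :
    v ≤ l.part i ↔ i < Multiset.card (l.parts.filter (fun x => v ≤ x)) := by
  rw [part_eq_getD, list_rank v hv _ (sortedParts_sorted l)]
  have : (l.parts.filter (fun x => v ≤ x)) = (((sortedParts l).filter (fun x => v ≤ x) : List ℕ) : Multiset ℕ) := by
    rw [← Multiset.filter_coe, sortedParts_coe]
  rw [this]
  simp

end PfAux
namespace PfAux
open Finset

lemma part_antitone (l : Ptn) {i j : ℕ} (hij : i ≤ j) : l.part j ≤ l.part i := by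
  rcases Nat.eq_zero_or_pos (l.part j) with h | h
  · omega
  · have := (part_ge_iff l j (l.part j) h).mp le_rfl
    exact (part_ge_iff l i (l.part j) h).mpr (lt_of_le_of_lt (by omega) this)

lemma part_eq_zero_of_length_le (l : Ptn) {i : ℕ} (hi : l.length ≤ i) : l.part i = 0 := by
  by_contra h
  have hp : 0 < l.part i := Nat.pos_of_ne_zero h
  have := (part_ge_iff l i _ hp).mp le_rfl
  have hc : Multiset.card (l.parts.filter (fun x => l.part i ≤ x)) ≤ l.length :=
    le_trans (Multiset.card_le_card (Multiset.filter_le _ _)) le_rfl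
  omega

lemma part_mem (l : Ptn) {i : ℕ} (hi : i < l.length) : l.part i ∈ l.parts := by
  rw [part_eq_getD]
  have hlen : i < (sortedParts l).length := by rw [sortedParts_length]; exact hi
  rw [List.getD_eq_getElem _ _ hlen]
  rw [← sortedParts_coe l]
  exact Multiset.mem_coe.mpr (List.getElem_mem hlen)

lemma part_pos (l : Ptn) {i : ℕ} (hi : i < l.length) : 0 < l.part i :=
  l.pos _ (part_mem l hi)

lemma le_part_zero (l : Ptn) {x : ℕ} (hx : x ∈ l.parts) : x ≤ l.part 0 := by
  have hp : 0 < x := l.pos _ hx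
  refine (part_ge_iff l 0 x hp).mpr ?_
  rw [Multiset.card_pos_iff_exists_mem]
  exact ⟨x, Multiset.mem_filter.mpr ⟨hx, le_rfl⟩⟩

lemma exists_index_of_mem (l : Ptn) {x : ℕ} (hx : x ∈ l.parts) :
    ∃ i < l.length, l.part i = x := by
  rw [← sortedParts_coe l] at hx
  have hx' : x ∈ sortedParts l := by simpa using hx
  obtain ⟨i, hi, hgi⟩ := List.getElem_of_mem hx'
  refine ⟨i, by rw [← sortedParts_length]; exact hi, ?_⟩
  rw [part_eq_getD, List.getD_eq_getElem _ _ hi, hgi]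

lemma part_strict (l : Ptn) (h : l.Strict) {i j : ℕ} (hij : i < j) (hj : j < l.length) :
    l.part j < l.part i := by
  have hi : i < (sortedParts l).length := by rw [sortedParts_length]; omega
  have hjl : j < (sortedParts l).length := by rw [sortedParts_length]; exact hj
  have hnd : (sortedParts l).Nodup := by
    have : l.parts.Nodup := h
    rw [← sortedParts_coe l] at this
    simpa using this
  have hs := sortedParts_sorted l
  have hge : (sortedParts l).getD j 0 ≤ (sortedParts l).getD i 0 := by
    rw [List.getD_eq_getElem _ _ hi, List.getD_eq_getElem _ _ hjl]
    exact List.pairwise_iff_getElem.mp hs i j hi hjl hij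
  have hne : (sortedParts l).getD i 0 ≠ (sortedParts l).getD j 0 := by
    rw [List.getD_eq_getElem _ _ hi, List.getD_eq_getElem _ _ hjl]
    intro he
    have := (List.Nodup.getElem_inj_iff hnd).mp he
    omega
  rw [part_eq_getD, part_eq_getD]
  have hposj : 0 < l.part j := part_pos l hj
  rw [part_eq_getD] at hposj
  omega

lemma part_add_sub (l : Ptn) (h : l.Strict) {j i : ℕ} (hji : j ≤ i) (hi : i < l.length) :
    l.part i + (i - j) ≤ l.part j := by
  induction i, hji using Nat.le_induction with
  | base => omega
  | succ n hn ih =>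
    have h1 : l.part (n+1) < l.part n := part_strict l h (by omega) hi
    have h2 := ih (by omega)
    omega

lemma length_le_part_zero (l : Ptn) (h : l.Strict) : l.length ≤ l.part 0 := by
  rcases Nat.eq_zero_or_pos l.length with h0 | h0
  · omega
  · have h1 : l.length - 1 < l.length := by omega
    have := part_add_sub l h (Nat.zero_le (l.length - 1)) h1
    have := part_pos l h1
    omega

lemma part_add_index_le (l : Ptn) (h : l.Strict) {j : ℕ} (hj : j < l.length) :
    l.part j + j ≤ l.part 0 := by
  have := part_add_sub l h (Nat.zero_le j) hj
  omega

end PfAux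
namespace PfAux
open Finset

lemma card_filter_of_map (f : ℕ → ℕ) (n : ℕ) (p : ℕ → Prop) [DecidablePred p] :
    Multiset.card (((Multiset.range n).map f).filter p)
      = ((Finset.range n).filter (fun j => p (f j))).card := by
  rw [← Multiset.countP_eq_card_filter, Multiset.countP_map]
  rfl

lemma of_parts (s : Multiset ℕ) : (Ptn.of s).parts = s.filter (fun x => 0 < x) := rfl

lemma of_map_card_filter {n : ℕ} {f : ℕ → ℕ} (v : ℕ) (hv : 0 < v) :
    Multiset.card ((Ptn.of ((Multiset.range n).map f)).parts.filter (fun x => v ≤ x))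
      = ((Finset.range n).filter (fun j => v ≤ f j)).card := by
  rw [of_parts, Multiset.filter_filter, card_filter_of_map]
  congr 1
  apply Finset.filter_congr
  intro j _
  constructor
  · intro h; exact h.1
  · intro h; exact ⟨h, by omega⟩

lemma of_map_part {n : ℕ} {f : ℕ → ℕ} (hf : ∀ i j, i ≤ j → j < n → f j ≤ f i)
    {i : ℕ} (hi : i < n) : (Ptn.of ((Multiset.range n).map f)).part i = f i := by
  set l := Ptn.of ((Multiset.range n).map f) with hl
  have hub : l.part i ≤ f i := by
    by_contra hub
    push_neg at hub
    have h1 := (part_ge_iff l i (f i + 1) (by omega)).mp (by omega)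
    rw [hl, of_map_card_filter _ (by omega)] at h1
    have h2 : (Finset.range n).filter (fun j => f i + 1 ≤ f j) ⊆ Finset.range i := by
      intro j hj
      simp only [Finset.mem_filter, Finset.mem_range] at hj ⊢
      by_contra hji
      have := hf i j (by omega) hj.1
      omega
    have := Finset.card_le_card h2
    simp only [Finset.card_range] at this
    omega
  rcases Nat.eq_zero_or_pos (f i) with h0 | h0
  · omega
  · have hlb : f i ≤ l.part i := by
      rw [part_ge_iff l i (f i) h0, hl, of_map_card_filter _ h0]
      have h2 : Finset.range (i+1) ⊆ (Finset.range n).filter (fun j => f i ≤ f j) := by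
        intro j hj
        simp only [Finset.mem_filter, Finset.mem_range] at hj ⊢
        exact ⟨by omega, hf j i (by omega) hi⟩
      have := Finset.card_le_card h2
      simp at this
      omega
    omega

lemma of_map_length {n : ℕ} {f : ℕ → ℕ} :
    (Ptn.of ((Multiset.range n).map f)).length
      = ((Finset.range n).filter (fun j => 0 < f j)).card := by
  show Multiset.card _ = _
  rw [of_parts, card_filter_of_map]

lemma parts_eq_map (l : Ptn) : (Multiset.range l.length).map l.part = l.parts := by
  have hlist : (List.range (sortedParts l).length).map (fun i => (sortedParts l).getD i 0)
      = sortedParts l := by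
    apply List.ext_getElem
    · simp
    · intro i h1 h2
      simp only [List.getElem_map, List.getElem_range]
      rw [List.getD_eq_getElem _ _ h2]
  calc (Multiset.range l.length).map l.part
      = ((List.range (sortedParts l).length : List ℕ) : Multiset ℕ).map
          (fun i => (sortedParts l).getD i 0) := by
        rw [sortedParts_length]
        rfl
    _ = (((List.range (sortedParts l).length).map (fun i => (sortedParts l).getD i 0) : List ℕ) : Multiset ℕ) := by
        simp
    _ = l.parts := by rw [hlist, sortedParts_coe]

lemma betaSet_val (l : Ptn) (m : ℕ) :
    (betaSet l m).val = (Multiset.range m).map (fun i => l.part i + (m - 1 - i)) := by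
  unfold betaSet
  rw [Finset.image_val_of_injOn, Finset.range_val]
  intro i hi j hj hij
  simp only [Finset.coe_range, Set.mem_Iio] at hi hj
  dsimp only at hij
  by_contra hne
  rcases Nat.lt_or_ge i j with h | h
  · have := part_antitone l (le_of_lt h); omega
  · have hji : j < i := by omega
    have := part_antitone l (le_of_lt hji); omega

lemma card_betaSet (l : Ptn) (m : ℕ) : (betaSet l m).card = m := by
  rw [Finset.card_def, betaSet_val]
  simp

lemma mem_betaSet (l : Ptn) (m : ℕ) {p : ℕ} :
    p ∈ betaSet l m ↔ ∃ i < m, l.part i + (m - 1 - i) = p := by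
  unfold betaSet
  rw [Finset.mem_image]
  constructor
  · rintro ⟨i, hi, he⟩
    exact ⟨i, by simpa using hi, he⟩
  · rintro ⟨i, hi, he⟩
    exact ⟨i, by simp [hi], he⟩

lemma ptnOfBeads_parts (B : Finset ℕ) :
    (ptnOfBeads B).parts
      = (B.val.map (fun p => p - (B.filter (fun q => q < p)).card)).filter (fun x => 0 < x) := rfl

lemma ptnOfBeads_betaSet (l : Ptn) (m : ℕ) (hm : l.length ≤ m) :
    ptnOfBeads (betaSet l m) = l := by
  apply Ptn.ext'
  rw [ptnOfBeads_parts, betaSet_val, Multiset.map_map]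
  have hcongr : ∀ i ∈ Multiset.range m,
      ((fun p => p - ((betaSet l m).filter (fun q => q < p)).card)
        ∘ (fun i => l.part i + (m - 1 - i))) i = l.part i := by
    intro i hi
    have him : i < m := by simpa using hi
    simp only [Function.comp]
    have hfilter : (betaSet l m).filter (fun q => q < l.part i + (m - 1 - i))
        = ((Finset.range m).filter (fun j => i < j)).image (fun j => l.part j + (m - 1 - j)) := by
      unfold betaSet
      rw [Finset.filter_image]
      congr 1
      apply Finset.filter_congr
      intro j hj
      simp only [Finset.mem_range] at hj
      constructor
      · intro h
        by_contra hji
        have := part_antitone l (show j ≤ i by omega)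
        omega
      · intro h
        have := part_antitone l (le_of_lt h)
        omega
    have hcard : (((Finset.range m).filter (fun j => i < j)).image
        (fun j => l.part j + (m - 1 - j))).card = m - 1 - i := by
      rw [Finset.card_image_of_injOn]
      · have : (Finset.range m).filter (fun j => i < j) = Finset.Ico (i+1) m := by
          ext j; simp [Finset.mem_Ico]; omega
        rw [this, Nat.card_Ico]
        omega
      · intro x hx y hy hxy
        simp only [Finset.coe_filter, Finset.mem_range, Set.mem_setOf_eq] at hx hy
        dsimp only at hxy
        by_contra hne
        rcases Nat.lt_or_ge x y with h | h
        · have := part_antitone l (le_of_lt h); omega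
        · have hji : y < x := by omega
          have := part_antitone l (le_of_lt hji); omega
    rw [hfilter, hcard]
    omega
  rw [Multiset.map_congr rfl hcongr]
  -- now: ((range m).map l.part).filter pos = l.parts
  have hsplit : m = l.length + (m - l.length) := by omega
  rw [hsplit, Multiset.range_add, Multiset.map_add, Multiset.filter_add, Multiset.map_map]
  have h1 : ((Multiset.range l.length).map l.part).filter (fun x => 0 < x)
      = (Multiset.range l.length).map l.part := by
    apply Multiset.filter_eq_self.mpr
    intro x hx
    obtain ⟨i, hi, hxe⟩ := Multiset.mem_map.mp hx
    have : i < l.length := by simpa using hi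
    subst hxe
    exact part_pos l this
  have h2 : ((Multiset.range (m - l.length)).map (l.part ∘ (l.length + ·))).filter (fun x => 0 < x) = 0 := by
    apply Multiset.filter_eq_nil.mpr
    intro x hx
    obtain ⟨i, hi, hxe⟩ := Multiset.mem_map.mp hx
    subst hxe
    simp only [Function.comp]
    have : l.part (l.length + i) = 0 := part_eq_zero_of_length_le l (by omega)
    omega
  rw [h1, h2, parts_eq_map]
  simp

end PfAux
namespace PfAux
open Finset

noncomputable def drow (μ : Ptn) (i : ℕ) : ℕ :=
  (if i < μ.length then μ.part i + 1 else 0) +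
    ((Finset.range (min i μ.length)).filter (fun j => i + 1 ≤ j + μ.part j)).card

lemma double_eq (μ : Ptn) :
    double μ = Ptn.of ((Multiset.range (μ.length + μ.part 0)).map (drow μ)) := rfl

variable {μ : Ptn} {i : ℕ}

lemma drow_lt (hs : μ.Strict) (hi : i < μ.length) : drow μ i = μ.part i + 1 + i := by
  unfold drow
  rw [if_pos hi]
  have hmin : min i μ.length = i := by omega
  rw [hmin]
  have : (Finset.range i).filter (fun j => i + 1 ≤ j + μ.part j) = Finset.range i := by
    apply Finset.filter_true_of_mem
    intro j hj
    have hj' : j < i := Finset.mem_range.mp hj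
    have h1 := part_add_sub μ hs (le_of_lt hj') hi
    have h2 := part_pos μ hi
    omega
  rw [this, Finset.card_range]

lemma drow_ge (hi : μ.length ≤ i) :
    drow μ i = ((Finset.range μ.length).filter (fun j => i + 1 ≤ j + μ.part j)).card := by
  unfold drow
  rw [if_neg (by omega), min_eq_right hi]
  omega

lemma drow_ge_le (hi : μ.length ≤ i) : drow μ i ≤ μ.length := by
  rw [drow_ge hi]
  calc _ ≤ (Finset.range μ.length).card := Finset.card_le_card (Finset.filter_subset _ _)
    _ = μ.length := Finset.card_range _

lemma drow_antitone (hs : μ.Strict) : Antitone (drow μ) := by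
  apply antitone_nat_of_succ_le
  intro i
  rcases Nat.lt_or_ge (i+1) μ.length with h | h
  · rw [drow_lt hs h, drow_lt hs (by omega)]
    have := part_strict μ hs (show i < i+1 by omega) h
    omega
  · rcases Nat.lt_or_ge i μ.length with h2 | h2
    · have hL : μ.length = i + 1 := by omega
      have := drow_ge_le (μ := μ) h
      rw [drow_lt hs h2]
      omega
    · rw [drow_ge h2, drow_ge (by omega)]
      apply Finset.card_le_card
      intro j hj
      simp only [Finset.mem_filter, Finset.mem_range] at hj ⊢
      exact ⟨hj.1, by omega⟩

lemma dpart (hs : μ.Strict) (hi : i < μ.length + μ.part 0) : (double μ).part i = drow μ i := by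
  rw [double_eq]
  exact of_map_part (fun a b hab _ => drow_antitone hs hab) hi

lemma dlength (hs : μ.Strict) : (double μ).length = μ.part 0 := by
  rw [double_eq, of_map_length]
  have : (Finset.range (μ.length + μ.part 0)).filter (fun j => 0 < drow μ j)
      = Finset.range (μ.part 0) := by
    ext j
    simp only [Finset.mem_filter, Finset.mem_range]
    constructor
    · rintro ⟨hj, hpos⟩
      rcases Nat.lt_or_ge j μ.length with h | h
      · have h1 : 1 ≤ μ.length := by omega
        have := length_le_part_zero μ hs
        omega
      · rw [drow_ge h] at hpos
        obtain ⟨x, hx⟩ := Finset.card_pos.mp hpos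
        simp only [Finset.mem_filter, Finset.mem_range] at hx
        have := part_add_index_le μ hs hx.1
        omega
    · intro hj
      have hL : 0 < μ.length := by
        by_contra h0
        have : μ.part 0 = 0 := part_eq_zero_of_length_le μ (by omega)
        omega
      refine ⟨by omega, ?_⟩
      rcases Nat.lt_or_ge j μ.length with h | h
      · rw [drow_lt hs h]; omega
      · rw [drow_ge h]
        apply Finset.card_pos.mpr
        refine ⟨0, ?_⟩
        simp only [Finset.mem_filter, Finset.mem_range]
        exact ⟨hL, by omega⟩
  rw [this, Finset.card_range]

lemma dpart_zero_aux (hi : μ.length + μ.part 0 ≤ i) : (double μ).part i = 0 := by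
  apply part_eq_zero_of_length_le
  rw [double_eq, of_map_length]
  calc _ ≤ (Finset.range (μ.length + μ.part 0)).card := Finset.card_le_card (Finset.filter_subset _ _)
    _ = μ.length + μ.part 0 := Finset.card_range _
    _ ≤ i := hi

end PfAux
namespace PfAux
open Finset

lemma betaSet_double (μ : Ptn) (hs : μ.Strict) (N : ℕ) (hN : μ.part 0 + μ.length ≤ N) :
    betaSet (double μ) N
      = μ.parts.toFinset.image (fun s => N + s)
        ∪ (Finset.range N \ μ.parts.toFinset.image (fun s => N - s)) := by
  have hxle : ∀ x ∈ μ.parts.toFinset, 1 ≤ x ∧ x ≤ μ.part 0 := by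
    intro x hx
    rw [Multiset.mem_toFinset] at hx
    exact ⟨μ.pos x hx, le_part_zero μ hx⟩
  have hcardS : μ.parts.toFinset.card = μ.length := by
    rw [Multiset.toFinset_card_of_nodup hs]; rfl
  have hLp : μ.length ≤ μ.part 0 := length_le_part_zero μ hs

  apply Finset.eq_of_subset_of_card_le
  · -- betaSet ⊆ RHS
    intro p hp
    obtain ⟨i, hiN, hpe⟩ := (mem_betaSet _ _).mp hp
    rcases Nat.lt_or_ge i μ.length with hiL | hiL
    · -- top chunk
      rw [dpart hs (by omega), drow_lt hs hiL] at hpe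
      apply Finset.mem_union_left
      apply Finset.mem_image.mpr
      refine ⟨μ.part i, Multiset.mem_toFinset.mpr (part_mem μ hiL), by omega⟩
    rcases Nat.lt_or_ge i (μ.length + μ.part 0) with hiM | hiM
    · -- middle chunk
      rw [dpart hs hiM, drow_ge hiL] at hpe
      set g := ((Finset.range μ.length).filter (fun j => i + 1 ≤ j + μ.part j)).card with hg
      have hgle : g ≤ μ.length := by
        calc g ≤ (Finset.range μ.length).card := Finset.card_le_card (Finset.filter_subset _ _)
          _ = μ.length := Finset.card_range _
      apply Finset.mem_union_right
      rw [Finset.mem_sdiff]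
      constructor
      · rw [Finset.mem_range]; omega
      · intro hmem
        obtain ⟨x, hxS, hxe⟩ := Finset.mem_image.mp hmem
        obtain ⟨hx1, hx2⟩ := hxle x hxS
        obtain ⟨b, hbL, hbx⟩ := exists_index_of_mem μ (Multiset.mem_toFinset.mp hxS)
        have hgx : g + x = i + 1 := by omega
        by_cases hb : b ∈ (Finset.range μ.length).filter (fun j => i + 1 ≤ j + μ.part j)
        · have hsub : Finset.range (b+1) ⊆
              (Finset.range μ.length).filter (fun j => i + 1 ≤ j + μ.part j) := by
            intro j hj
            have hjb : j ≤ b := by simpa using Nat.lt_succ_iff.mp (Finset.mem_range.mp hj)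
            simp only [Finset.mem_filter, Finset.mem_range]
            have h1 := part_add_sub μ hs hjb hbL
            simp only [Finset.mem_filter, Finset.mem_range] at hb
            refine ⟨by omega, by omega⟩
          have := Finset.card_le_card hsub
          simp only [Finset.card_range] at this
          simp only [Finset.mem_filter, Finset.mem_range] at hb
          omega
        · simp only [Finset.mem_filter, Finset.mem_range, not_and, not_le] at hb
          have hb2 : b + μ.part b ≤ i := by have := hb hbL; omega
          have hsub : (Finset.range μ.length).filter (fun j => i + 1 ≤ j + μ.part j)
              ⊆ Finset.range b := by
            intro j hj
            simp only [Finset.mem_filter, Finset.mem_range] at hj ⊢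
            by_contra hjb
            have h1 := part_add_sub μ hs (show b ≤ j by omega) hj.1
            omega
          have := Finset.card_le_card hsub
          simp only [Finset.card_range] at this
          omega
    · -- bottom chunk
      rw [dpart_zero_aux hiM] at hpe
      apply Finset.mem_union_right
      rw [Finset.mem_sdiff]
      refine ⟨Finset.mem_range.mpr (by omega), ?_⟩
      intro hmem
      obtain ⟨x, hxS, hxe⟩ := Finset.mem_image.mp hmem
      obtain ⟨hx1, hx2⟩ := hxle x hxS
      omega
  · -- card RHS ≤ card LHS
    rw [card_betaSet]
    have h1 : (μ.parts.toFinset.image (fun s => N + s)).card = μ.length := by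
      rw [Finset.card_image_of_injective _ (add_right_injective N), hcardS]
    have himg2 : μ.parts.toFinset.image (fun s => N - s) ⊆ Finset.range N := by
      intro y hy
      obtain ⟨x, hxS, hxe⟩ := Finset.mem_image.mp hy
      obtain ⟨hx1, hx2⟩ := hxle x hxS
      rw [Finset.mem_range]; omega
    have h2 : (μ.parts.toFinset.image (fun s => N - s)).card = μ.length := by
      rw [Finset.card_image_of_injOn, hcardS]
      intro x hx y hy hxy
      have := hxle x hx; have := hxle y hy
      dsimp only at hxy
      omega
    have h3 : (Finset.range N \ μ.parts.toFinset.image (fun s => N - s)).card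
        = N - μ.length := by
      rw [Finset.card_sdiff_of_subset himg2, Finset.card_range, h2]
    have hdisj : Disjoint (μ.parts.toFinset.image (fun s => N + s))
        (Finset.range N \ μ.parts.toFinset.image (fun s => N - s)) := by
      rw [Finset.disjoint_left]
      intro y hy hy2
      obtain ⟨x, hxS, hxe⟩ := Finset.mem_image.mp hy
      have := (Finset.mem_sdiff.mp hy2).1
      rw [Finset.mem_range] at this
      omega
    rw [Finset.card_union_of_disjoint hdisj, h1, h3]
    omega

end PfAux
namespace PfAux
open Finset

def holes (B : Finset ℕ) (b : ℕ) : ℕ := ((Finset.range b).filter (fun z => z ∉ B)).card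

lemma holeCount_eq (B : Finset ℕ) (p : ℕ) :
    p - (B.filter (fun q => q < p)).card = holes B p := by
  have h1 : B.filter (fun q => q < p) = (Finset.range p).filter (fun z => z ∈ B) := by
    ext q
    simp only [Finset.mem_filter, Finset.mem_range]
    tauto
  have h2 := Finset.card_filter_add_card_filter_not
    (s := Finset.range p) (p := fun z => z ∈ B)
  unfold holes
  rw [h1]
  simp only [Finset.card_range] at h2
  have h3 : (Finset.range p).filter (fun z => z ∈ B) ⊆ Finset.range p := Finset.filter_subset _ _
  have h4 := Finset.card_le_card h3
  simp only [Finset.card_range] at h4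
  omega

lemma holes_mono (B : Finset ℕ) {b c : ℕ} (h : b ≤ c) : holes B b ≤ holes B c := by
  apply Finset.card_le_card
  apply Finset.filter_subset_filter
  intro z hz
  simp only [Finset.mem_range] at hz ⊢
  omega

lemma holes_lt_of_hole {B : Finset ℕ} {c b : ℕ} (hc : c ∉ B) (hcb : c < b) :
    holes B c < holes B b := by
  have hsub : insert c ((Finset.range c).filter (fun z => z ∉ B))
      ⊆ (Finset.range b).filter (fun z => z ∉ B) := by
    intro z hz
    rcases Finset.mem_insert.mp hz with rfl | hz
    · simp only [Finset.mem_filter, Finset.mem_range]; exact ⟨hcb, hc⟩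
    · simp only [Finset.mem_filter, Finset.mem_range] at hz ⊢
      exact ⟨by omega, hz.2⟩
  have hnotmem : c ∉ (Finset.range c).filter (fun z => z ∉ B) := by
    simp [Finset.mem_filter]
  have := Finset.card_le_card hsub
  rw [Finset.card_insert_of_notMem hnotmem] at this
  unfold holes
  omega

lemma ptnOfBeads_parts_holes (B : Finset ℕ) :
    (ptnOfBeads B).parts = (B.val.map (holes B)).filter (fun x => 0 < x) := by
  rw [ptnOfBeads_parts]
  congr 1
  apply Multiset.map_congr rfl
  intro p _
  exact holeCount_eq B p

lemma card_filter_parts_ptnOfBeads (B : Finset ℕ) (p : ℕ → Prop) [DecidablePred p]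
    (hp : ¬ p 0) :
    Multiset.card ((ptnOfBeads B).parts.filter p) = (B.filter (fun b => p (holes B b))).card := by
  rw [ptnOfBeads_parts_holes, Multiset.filter_filter]
  have : ∀ m : Multiset ℕ, (m.filter (fun x => p x ∧ 0 < x)) = m.filter p := by
    intro m
    apply Multiset.filter_congr
    intro x _
    constructor
    · exact fun h => h.1
    · intro h
      refine ⟨h, ?_⟩
      by_contra h0
      have : x = 0 := by omega
      subst this
      exact hp h
  rw [this, Multiset.filter_map, Multiset.card_map]
  rfl

lemma part_zero_ptnOfBeads_max {B : Finset ℕ} (hne : B.Nonempty) :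
    (ptnOfBeads B).part 0 = holes B (B.max' hne) := by
  set d := holes B (B.max' hne) with hd
  have hle : (ptnOfBeads B).part 0 ≤ d := by
    by_contra hgt
    push_neg at hgt
    have h1 := (part_ge_iff (ptnOfBeads B) 0 (d+1) (by omega)).mp (by omega)
    rw [card_filter_parts_ptnOfBeads _ _ (by omega)] at h1
    have : B.filter (fun b => d + 1 ≤ holes B b) = ∅ := by
      apply Finset.filter_false_of_mem
      intro b hb
      have := holes_mono B (Finset.le_max' B b hb)
      omega
    rw [this] at h1
    simp at h1
  rcases Nat.eq_zero_or_pos d with h0 | h0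
  · omega
  · have hge : d ≤ (ptnOfBeads B).part 0 := by
      rw [part_ge_iff _ _ _ h0, card_filter_parts_ptnOfBeads _ _ (by omega)]
      apply Finset.card_pos.mpr
      exact ⟨B.max' hne, Finset.mem_filter.mpr ⟨Finset.max'_mem B hne, le_rfl⟩⟩
    omega

end PfAux
namespace PfAux
open Finset

lemma conj_parts (l : Ptn) :
    l.conj.parts = ((Multiset.range (l.part 0)).map
      (fun j => Multiset.card (l.parts.filter (fun x => j < x)))) := by
  unfold Ptn.conj
  rw [of_parts]
  apply Multiset.filter_eq_self.mpr
  intro x hx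
  obtain ⟨j, hj, hxe⟩ := Multiset.mem_map.mp hx
  have hjd : j < l.part 0 := by simpa using hj
  subst hxe
  have h1 := (part_ge_iff l 0 (j+1) (by omega)).mp (by omega)
  have : l.parts.filter (fun x => j + 1 ≤ x) = l.parts.filter (fun x => j < x) := by
    apply Multiset.filter_congr
    intro x _
    omega
  rw [this] at h1
  omega

lemma ptnOfBeads_compl (M : ℕ) (B : Finset ℕ) (hBM : B ⊆ Finset.range M) :
    ptnOfBeads (Finset.range M \ B.image (fun x => M - 1 - x)) = (ptnOfBeads B).conj := by
  set Y := Finset.range M \ B.image (fun x => M - 1 - x) with hY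
  have hmemY : ∀ y, y ∈ Y ↔ (y < M ∧ M - 1 - y ∉ B) := by
    intro y
    rw [hY, Finset.mem_sdiff, Finset.mem_range]
    constructor
    · rintro ⟨h1, h2⟩
      refine ⟨h1, fun hc => h2 ?_⟩
      apply Finset.mem_image.mpr
      refine ⟨M - 1 - y, hc, by omega⟩
    · rintro ⟨h1, h2⟩
      refine ⟨h1, fun hc => ?_⟩
      obtain ⟨x, hx, hxe⟩ := Finset.mem_image.mp hc
      have hxM : x < M := Finset.mem_range.mp (hBM hx)
      have : M - 1 - y = x := by omega
      rw [this] at h2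
      exact h2 hx
  set G : ℕ → ℕ := fun y => (B.filter (fun b => M - 1 - y < b)).card with hG
  -- Step A : parts of LHS
  have hstepA : (ptnOfBeads Y).parts = (Y.val.map G).filter (fun x => 0 < x) := by
    rw [ptnOfBeads_parts_holes]
    congr 1
    apply Multiset.map_congr rfl
    intro y hy
    have hyY : y ∈ Y := hy
    obtain ⟨hyM, hyhole⟩ := (hmemY y).mp hyY
    -- holes Y y = G y
    have h1 : (Finset.range y).filter (fun z => z ∉ Y) = (Finset.range y).filter (fun z => M - 1 - z ∈ B) := by
      apply Finset.filter_congr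
      intro z hz
      have hzy : z < y := Finset.mem_range.mp hz
      rw [hmemY z]
      constructor
      · intro h
        by_contra hc
        exact h ⟨by omega, hc⟩
      · intro h hc
        exact hc.2 h
    show holes Y y = G y
    unfold holes
    rw [h1, hG]
    apply Finset.card_bij' (fun z _ => M - 1 - z) (fun b _ => M - 1 - b)
    · intro z hz
      simp only [Finset.mem_filter, Finset.mem_range] at hz ⊢
      exact ⟨hz.2, by omega⟩
    · intro b hb
      simp only [Finset.mem_filter, Finset.mem_range] at hb ⊢
      have hbM : b < M := Finset.mem_range.mp (hBM hb.1)
      constructor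
      · omega
      · have : M - 1 - (M - 1 - b) = b := by omega
        rw [this]
        exact hb.1
    · intro z hz
      simp only [Finset.mem_filter, Finset.mem_range] at hz
      omega
    · intro b hb
      simp only [Finset.mem_filter, Finset.mem_range] at hb
      have hbM : b < M := Finset.mem_range.mp (hBM hb.1)
      omega
  -- Step B : parts of RHS
  set P := ptnOfBeads B with hP
  set d := P.part 0 with hd
  set F : ℕ → ℕ := fun j => (B.filter (fun b => j < holes B b)).card with hF
  have hstepB : P.conj.parts = (Multiset.range d).map F := by
    rw [conj_parts]
    apply Multiset.map_congr rfl
    intro j _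
    rw [hP, card_filter_parts_ptnOfBeads _ _ (by omega)]
  rcases Finset.eq_empty_or_nonempty B with rfl | hne
  · -- empty case
    apply Ptn.ext'
    rw [hstepA, hstepB]
    have h1 : ∀ y ∈ Y.val, G y = 0 := by
      intro y _
      simp [hG]
    have h2 : d = 0 := by
      rw [hd, hP]
      apply part_eq_zero_of_length_le
      show Multiset.card _ ≤ _
      rw [ptnOfBeads_parts_holes]
      simp
    rw [h2]
    simp only [Multiset.range_zero, Multiset.map_zero]
    apply Multiset.filter_eq_nil.mpr
    intro a ha
    obtain ⟨y, hy, hye⟩ := Multiset.mem_map.mp ha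
    rw [h1 y hy] at hye
    omega
  · set m := B.max' hne with hm
    have hmM : m < M := Finset.mem_range.mp (hBM (Finset.max'_mem B hne))
    have hdm : d = holes B m := part_zero_ptnOfBeads_max hne
    set Y' := Y.filter (fun y => 0 < G y) with hY'
    have hmemY' : ∀ y, y ∈ Y' ↔ (y < M ∧ M - 1 - y ∉ B ∧ M - 1 - y < m) := by
      intro y
      rw [hY', Finset.mem_filter, hmemY]
      constructor
      · rintro ⟨⟨h1, h2⟩, h3⟩
        refine ⟨h1, h2, ?_⟩
        obtain ⟨b, hb⟩ := Finset.card_pos.mp h3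
        simp only [Finset.mem_filter] at hb
        have := Finset.le_max' B b hb.1
        omega
      · rintro ⟨h1, h2, h3⟩
        refine ⟨⟨h1, h2⟩, ?_⟩
        apply Finset.card_pos.mpr
        exact ⟨m, Finset.mem_filter.mpr ⟨Finset.max'_mem B hne, h3⟩⟩
    -- LHS parts = Y'.val.map G
    have hstepA' : (ptnOfBeads Y).parts = Y'.val.map G := by
      rw [hstepA, Multiset.filter_map, hY', Finset.filter_val]
      rfl
    -- card Y' = d
    have hcardY' : Y'.card = d := by
      rw [hdm]
      unfold holes
      apply Finset.card_bij' (fun y _ => M - 1 - y) (fun c _ => M - 1 - c)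
      · intro y hy
        rw [hmemY' y] at hy
        simp only [Finset.mem_filter, Finset.mem_range]
        exact ⟨hy.2.2, hy.2.1⟩
      · intro c hc
        simp only [Finset.mem_filter, Finset.mem_range] at hc
        rw [hmemY']
        have h1 : M - 1 - (M - 1 - c) = c := by omega
        rw [h1]
        exact ⟨by omega, hc.2, hc.1⟩
      · intro y hy
        rw [hmemY' y] at hy
        omega
      · intro c hc
        simp only [Finset.mem_filter, Finset.mem_range] at hc
        omega
    set e : ℕ → ℕ := fun y => holes B (M - 1 - y) with he
    have hinj : Set.InjOn e Y' := by
      intro y1 hy1 y2 hy2 hee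
      have hy1' := (hmemY' y1).mp (Finset.mem_coe.mp hy1)
      have hy2' := (hmemY' y2).mp (Finset.mem_coe.mp hy2)
      rw [he] at hee
      dsimp only at hee
      rcases lt_trichotomy (M - 1 - y1) (M - 1 - y2) with h | h | h
      · have := holes_lt_of_hole hy1'.2.1 h
        omega
      · omega
      · have := holes_lt_of_hole hy2'.2.1 h
        omega
    have hmaps : ∀ y ∈ Y', e y ∈ Finset.range d := by
      intro y hy
      rw [hmemY' y] at hy
      rw [Finset.mem_range, hdm, he]
      exact holes_lt_of_hole hy.2.1 hy.2.2
    have himg : Y'.image e = Finset.range d := by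
      apply Finset.eq_of_subset_of_card_le
      · intro z hz
        obtain ⟨y, hy, hye⟩ := Finset.mem_image.mp hz
        rw [← hye]
        exact hmaps y hy
      · rw [Finset.card_image_of_injOn hinj, hcardY', Finset.card_range]
    have hrangeval : (Multiset.range d) = Y'.val.map e := by
      have := congrArg Finset.val himg
      rw [Finset.image_val_of_injOn hinj, Finset.range_val] at this
      exact this.symm
    -- conclude
    apply Ptn.ext'
    rw [hstepA', hstepB, hrangeval, Multiset.map_map]
    apply Multiset.map_congr rfl
    intro y hy
    have hyY' : y ∈ Y' := hy
    rw [hmemY' y] at hyY'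
    simp only [Function.comp, hF, he, hG]
    symm
    apply Finset.card_bij' (fun b _ => b) (fun b _ => b)
    · intro b hb
      simp only [Finset.mem_filter] at hb ⊢
      refine ⟨hb.1, ?_⟩
      by_contra hc
      push_neg at hc
      have := holes_mono B hc
      omega
    · intro b hb
      simp only [Finset.mem_filter] at hb ⊢
      exact ⟨hb.1, holes_lt_of_hole hyY'.2.1 hb.2⟩
    · intro b _; rfl
    · intro b _; rfl
  
end PfAux
namespace PfAux
open Finset

lemma part_zero_le_of_forall (l : Ptn) {m : ℕ} (h : ∀ x ∈ l.parts, x ≤ m) :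
    l.part 0 ≤ m := by
  by_contra hc
  push_neg at hc
  have h1 := (part_ge_iff l 0 (m+1) (by omega)).mp (by omega)
  obtain ⟨x, hx⟩ := Multiset.card_pos_iff_exists_mem.mp h1
  rw [Multiset.mem_filter] at hx
  have := h x hx.1
  omega

def ptnOfFinset (S : Finset ℕ) (hS : ∀ x ∈ S, 0 < x) : Ptn := ⟨S.val, hS⟩

lemma ptnOfFinset_strict (S : Finset ℕ) (hS : ∀ x ∈ S, 0 < x) :
    (ptnOfFinset S hS).Strict := S.nodup

lemma ptnOfFinset_toFinset (S : Finset ℕ) (hS : ∀ x ∈ S, 0 < x) :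
    (ptnOfFinset S hS).parts.toFinset = S := S.val_toFinset

lemma ptnOfFinset_length (S : Finset ℕ) (hS : ∀ x ∈ S, 0 < x) :
    (ptnOfFinset S hS).length = S.card := rfl

lemma ptnOfFinset_mem (S : Finset ℕ) (hS : ∀ x ∈ S, 0 < x) {x : ℕ} :
    x ∈ (ptnOfFinset S hS).parts ↔ x ∈ S := Iff.rfl

/-- The empty-beads partition equals the double of any strict partition whose
part 0 is 0. -/
lemma ptnOfBeads_empty_eq : ptnOfBeads ∅ = double Ptn.empty := by
  have hstrict : Ptn.empty.Strict := by
    show (0 : Multiset ℕ).Nodup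
    simp
  have hlen : (double Ptn.empty).length = 0 := by
    rw [dlength hstrict]
    apply part_eq_zero_of_length_le
    show Multiset.card 0 ≤ 0
    simp
  have := ptnOfBeads_betaSet (double Ptn.empty) 0 (by omega)
  have hbs : betaSet (double Ptn.empty) 0 = ∅ := by
    unfold betaSet
    simp
  rw [hbs] at this
  exact this

end PfAux
namespace PfAux
open Finset

theorem main (lam : Ptn) (h : lam.Strict) :
    (∃ c : Ptn, c.Strict ∧ double c = coreP 3 (double lam)) ∧
    (∃ b0 : Ptn, b0.Strict ∧ double b0 = quotP 3 (double lam) 0) ∧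
    quotP 3 (double lam) 2 = (quotP 3 (double lam) 1).conj := by
  have hemptyStrict : Ptn.empty.Strict := by
    show (0 : Multiset ℕ).Nodup
    simp
  rcases Nat.eq_zero_or_pos (lam.part 0) with ha0 | ha
  · -- degenerate case : empty partition
    have hDlen : (double lam).length = 0 := by rw [dlength h, ha0]
    have hbs : betaSet (double lam) (3 * (double lam).length) = ∅ := by
      rw [hDlen]
      unfold betaSet
      simp
    have hrunE : ∀ k, runnerLevels 3 (double lam) k = ∅ := by
      intro k
      unfold runnerLevels
      rw [hbs]
      simp
    have hcoreBeads : (Finset.range 3).biUnion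
        (fun k => (Finset.range (runnerLevels 3 (double lam) k).card).image (fun s => 3 * s + k)) = ∅ := by
      apply Finset.eq_empty_of_forall_notMem
      intro p hp
      obtain ⟨k, hk, hpk⟩ := Finset.mem_biUnion.mp hp
      rw [hrunE k] at hpk
      simp at hpk
    have hconjE : ptnOfBeads ∅ = (ptnOfBeads ∅).conj := by
      have := ptnOfBeads_compl 0 ∅ (by simp)
      simpa using this
    refine ⟨⟨Ptn.empty, hemptyStrict, ?_⟩, ⟨Ptn.empty, hemptyStrict, ?_⟩, ?_⟩
    · rw [coreP, hcoreBeads, ptnOfBeads_empty_eq]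
    · rw [quotP, hrunE 0, ptnOfBeads_empty_eq]
    · rw [quotP, quotP, hrunE 1, hrunE 2]
      exact hconjE
  · -- main case
    set a := lam.part 0 with haa
    have hLpos : 0 < lam.length := by
      by_contra h0
      have := part_eq_zero_of_length_le lam (i := 0) (by omega)
      omega
    have hLa : lam.length ≤ a := length_le_part_zero lam h
    set S := lam.parts.toFinset with hSS
    have hSx : ∀ x ∈ S, 1 ≤ x ∧ x ≤ a := by
      intro x hx
      rw [hSS, Multiset.mem_toFinset] at hx
      exact ⟨lam.pos x hx, le_part_zero lam hx⟩
    set D := double lam with hDD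
    have hDlen : D.length = a := dlength h
    have hDpart0 : D.part 0 = a + 1 := by
      rw [hDD, dpart h (by omega), drow_lt h hLpos]
    set BB := S.image (fun s => 3 * a + s)
      ∪ (Finset.range (3 * a) \ S.image (fun s => 3 * a - s)) with hBB
    have hbeta : betaSet D (3 * D.length) = BB := by
      rw [hDlen, hDD]
      exact betaSet_double lam h (3 * a) (by omega)
    have hmemBB : ∀ p, p ∈ BB ↔
        ((∃ x ∈ S, 3 * a + x = p) ∨ (p < 3 * a ∧ ¬ ∃ x ∈ S, 3 * a - x = p)) := by
      intro p
      rw [hBB, Finset.mem_union, Finset.mem_sdiff, Finset.mem_range,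
        Finset.mem_image, Finset.mem_image]
    have hrunmem : ∀ k s, s ∈ runnerLevels 3 D k ↔ (s < a + 1 + 3 * a + 1 ∧ 3 * s + k ∈ BB) := by
      intro k s
      unfold runnerLevels
      rw [Finset.mem_filter, Finset.mem_range, hbeta, hDpart0, hDlen]
    set S0 := (Finset.range (a + 1)).filter (fun u => 3 * u ∈ S) with hS0
    have hS0x : ∀ u ∈ S0, 0 < u ∧ 3 * u ≤ a := by
      intro u hu
      rw [hS0, Finset.mem_filter] at hu
      have := hSx _ hu.2
      omega
    set L0 := S0.image (fun s => a + s) ∪ (Finset.range a \ S0.image (fun s => a - s)) with hL0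
    have hrun0 : runnerLevels 3 D 0 = L0 := by
      ext s
      rw [hrunmem 0 s, hmemBB, hL0, Finset.mem_union, Finset.mem_sdiff, Finset.mem_range,
        Finset.mem_image, Finset.mem_image]
      constructor
      · rintro ⟨hsb, hin⟩
        rcases hin with ⟨x, hxS, hxe⟩ | ⟨hlt, hne⟩
        · left
          have hx := hSx x hxS
          refine ⟨s - a, ?_, by omega⟩
          rw [hS0, Finset.mem_filter, Finset.mem_range]
          have hxs : 3 * (s - a) = x := by omega
          rw [hxs]
          exact ⟨by omega, hxS⟩
        · right
          refine ⟨by omega, ?_⟩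
          rintro ⟨u, huS0, hue⟩
          have hu := hS0x u huS0
          rw [hS0, Finset.mem_filter] at huS0
          exact hne ⟨3 * u, huS0.2, by omega⟩
      · rintro (⟨u, huS0, hue⟩ | ⟨hlt, hne⟩)
        · have hu := hS0x u huS0
          rw [hS0, Finset.mem_filter] at huS0
          exact ⟨by omega, Or.inl ⟨3 * u, huS0.2, by omega⟩⟩
        · refine ⟨by omega, Or.inr ⟨by omega, ?_⟩⟩
          rintro ⟨x, hxS, hxe⟩
          have hx := hSx x hxS
          have hx3 : x % 3 = 0 := by omega
          apply hne
          refine ⟨x / 3, ?_, by omega⟩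
          rw [hS0, Finset.mem_filter, Finset.mem_range]
          have : 3 * (x / 3) = x := by omega
          rw [this]
          exact ⟨by omega, hxS⟩
    -- part (b) : quotient 0
    have hb0 : ∃ b0 : Ptn, b0.Strict ∧ double b0 = quotP 3 D 0 := by
      set b0 := ptnOfFinset S0 (fun u hu => (hS0x u hu).1) with hb0d
      have hb0s : b0.Strict := ptnOfFinset_strict _ _
      have hb0p0 : 3 * b0.part 0 ≤ a := by
        rcases Nat.eq_zero_or_pos b0.length with h0 | h0
        · have : b0.part 0 = 0 := part_eq_zero_of_length_le b0 (by omega)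
          omega
        · have hm := part_mem b0 h0
          rw [hb0d, ptnOfFinset_mem] at hm
          exact (hS0x _ hm).2
      have hb0len : b0.length ≤ b0.part 0 := length_le_part_zero b0 hb0s
      have happ : betaSet (double b0) a = L0 := by
        rw [betaSet_double b0 hb0s a (by omega), hb0d, ptnOfFinset_toFinset, hL0]
      refine ⟨b0, hb0s, ?_⟩
      rw [quotP, hrun0, ← happ]
      symm
      apply ptnOfBeads_betaSet
      rw [dlength hb0s]
      omega

    -- runners 1 and 2
    set S1 := S.filter (fun x => x % 3 = 1) with hS1d
    set S2 := S.filter (fun x => x % 3 = 2) with hS2d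
    have hS1x : ∀ x ∈ S1, x % 3 = 1 ∧ 1 ≤ x ∧ x ≤ a := by
      intro x hx
      rw [hS1d, Finset.mem_filter] at hx
      have := hSx x hx.1
      exact ⟨hx.2, by omega, by omega⟩
    have hS2x : ∀ x ∈ S2, x % 3 = 2 ∧ 1 ≤ x ∧ x ≤ a := by
      intro x hx
      rw [hS2d, Finset.mem_filter] at hx
      have := hSx x hx.1
      exact ⟨hx.2, by omega, by omega⟩
    set L1 := S1.image (fun x => a + x / 3)
      ∪ (Finset.range a \ S2.image (fun x => a - 1 - x / 3)) with hL1d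
    set L2 := S2.image (fun x => a + x / 3)
      ∪ (Finset.range a \ S1.image (fun x => a - 1 - x / 3)) with hL2d
    have hrun1 : runnerLevels 3 D 1 = L1 := by
      ext s
      rw [hrunmem 1 s, hmemBB, hL1d, Finset.mem_union, Finset.mem_sdiff, Finset.mem_range,
        Finset.mem_image, Finset.mem_image]
      constructor
      · rintro ⟨hsb, hin⟩
        rcases hin with ⟨x, hxS, hxe⟩ | ⟨hlt, hne⟩
        · left
          have hx := hSx x hxS
          refine ⟨x, ?_, by omega⟩
          rw [hS1d, Finset.mem_filter]
          exact ⟨hxS, by omega⟩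
        · right
          refine ⟨by omega, ?_⟩
          rintro ⟨x, hxS2, hxe⟩
          have hx := hS2x x hxS2
          rw [hS2d, Finset.mem_filter] at hxS2
          exact hne ⟨x, hxS2.1, by omega⟩
      · rintro (⟨x, hxS1, hxe⟩ | ⟨hlt, hne⟩)
        · have hx := hS1x x hxS1
          rw [hS1d, Finset.mem_filter] at hxS1
          exact ⟨by omega, Or.inl ⟨x, hxS1.1, by omega⟩⟩
        · refine ⟨by omega, Or.inr ⟨by omega, ?_⟩⟩
          rintro ⟨x, hxS, hxe⟩
          have hx := hSx x hxS
          apply hne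
          refine ⟨x, ?_, by omega⟩
          rw [hS2d, Finset.mem_filter]
          exact ⟨hxS, by omega⟩
    have hrun2 : runnerLevels 3 D 2 = L2 := by
      ext s
      rw [hrunmem 2 s, hmemBB, hL2d, Finset.mem_union, Finset.mem_sdiff, Finset.mem_range,
        Finset.mem_image, Finset.mem_image]
      constructor
      · rintro ⟨hsb, hin⟩
        rcases hin with ⟨x, hxS, hxe⟩ | ⟨hlt, hne⟩
        · left
          have hx := hSx x hxS
          refine ⟨x, ?_, by omega⟩
          rw [hS2d, Finset.mem_filter]
          exact ⟨hxS, by omega⟩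
        · right
          refine ⟨by omega, ?_⟩
          rintro ⟨x, hxS1, hxe⟩
          have hx := hS1x x hxS1
          rw [hS1d, Finset.mem_filter] at hxS1
          exact hne ⟨x, hxS1.1, by omega⟩
      · rintro (⟨x, hxS2, hxe⟩ | ⟨hlt, hne⟩)
        · have hx := hS2x x hxS2
          rw [hS2d, Finset.mem_filter] at hxS2
          exact ⟨by omega, Or.inl ⟨x, hxS2.1, by omega⟩⟩
        · refine ⟨by omega, Or.inr ⟨by omega, ?_⟩⟩
          rintro ⟨x, hxS, hxe⟩
          have hx := hSx x hxS
          apply hne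
          refine ⟨x, ?_, by omega⟩
          rw [hS1d, Finset.mem_filter]
          exact ⟨hxS, by omega⟩
    -- cardinalities
    have hn0 : (runnerLevels 3 D 0).card = a := by
      rw [hrun0, hL0]
      have h1 : (S0.image (fun s => a + s)).card = S0.card :=
        Finset.card_image_of_injective _ (add_right_injective a)
      have hsub : S0.image (fun s => a - s) ⊆ Finset.range a := by
        intro y hy
        obtain ⟨u, hu, hue⟩ := Finset.mem_image.mp hy
        have := hS0x u hu
        rw [Finset.mem_range]
        omega
      have hinj : (S0.image (fun s => a - s)).card = S0.card := by
        apply Finset.card_image_of_injOn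
        intro u hu v hv he
        have := hS0x u hu; have := hS0x v hv
        dsimp only at he
        omega
      have hS0a : S0.card ≤ a := by
        rw [← hinj]
        have := Finset.card_le_card hsub
        simpa using this
      have hdisj : Disjoint (S0.image (fun s => a + s))
          (Finset.range a \ S0.image (fun s => a - s)) := by
        rw [Finset.disjoint_left]
        intro y hy hy2
        obtain ⟨u, hu, hue⟩ := Finset.mem_image.mp hy
        have h2 := (Finset.mem_sdiff.mp hy2).1
        rw [Finset.mem_range] at h2
        omega
      rw [Finset.card_union_of_disjoint hdisj, h1, Finset.card_sdiff_of_subset hsub, hinj,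
        Finset.card_range]
      omega
    have himg1sub : S2.image (fun x => a - 1 - x / 3) ⊆ Finset.range a := by
      intro y hy
      obtain ⟨x, hx, he⟩ := Finset.mem_image.mp hy
      have := hS2x x hx
      rw [Finset.mem_range]
      omega
    have himg1inj : (S2.image (fun x => a - 1 - x / 3)).card = S2.card := by
      apply Finset.card_image_of_injOn
      intro x hx y hy he
      have := hS2x x hx; have := hS2x y hy
      dsimp only at he
      omega
    have himg2sub : S1.image (fun x => a - 1 - x / 3) ⊆ Finset.range a := by
      intro y hy
      obtain ⟨x, hx, he⟩ := Finset.mem_image.mp hy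
      have := hS1x x hx
      rw [Finset.mem_range]
      omega
    have himg2inj : (S1.image (fun x => a - 1 - x / 3)).card = S1.card := by
      apply Finset.card_image_of_injOn
      intro x hx y hy he
      have := hS1x x hx; have := hS1x y hy
      dsimp only at he
      omega
    have hqa : S2.card ≤ a := by
      rw [← himg1inj]
      have := Finset.card_le_card himg1sub
      simpa using this
    have hpa : S1.card ≤ a := by
      rw [← himg2inj]
      have := Finset.card_le_card himg2sub
      simpa using this
    have hn1 : (runnerLevels 3 D 1).card = S1.card + (a - S2.card) := by
      rw [hrun1, hL1d]
      have h1 : (S1.image (fun x => a + x / 3)).card = S1.card := by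
        apply Finset.card_image_of_injOn
        intro x hx y hy he
        have := hS1x x hx; have := hS1x y hy
        dsimp only at he
        omega
      have hdisj : Disjoint (S1.image (fun x => a + x / 3))
          (Finset.range a \ S2.image (fun x => a - 1 - x / 3)) := by
        rw [Finset.disjoint_left]
        intro y hy hy2
        obtain ⟨x, hx, he⟩ := Finset.mem_image.mp hy
        have h2 := (Finset.mem_sdiff.mp hy2).1
        rw [Finset.mem_range] at h2
        omega
      rw [Finset.card_union_of_disjoint hdisj, h1, Finset.card_sdiff_of_subset himg1sub, himg1inj,
        Finset.card_range]
    have hn2 : (runnerLevels 3 D 2).card = S2.card + (a - S1.card) := by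
      rw [hrun2, hL2d]
      have h1 : (S2.image (fun x => a + x / 3)).card = S2.card := by
        apply Finset.card_image_of_injOn
        intro x hx y hy he
        have := hS2x x hx; have := hS2x y hy
        dsimp only at he
        omega
      have hdisj : Disjoint (S2.image (fun x => a + x / 3))
          (Finset.range a \ S1.image (fun x => a - 1 - x / 3)) := by
        rw [Finset.disjoint_left]
        intro y hy hy2
        obtain ⟨x, hx, he⟩ := Finset.mem_image.mp hy
        have h2 := (Finset.mem_sdiff.mp hy2).1
        rw [Finset.mem_range] at h2
        omega
      rw [Finset.card_union_of_disjoint hdisj, h1, Finset.card_sdiff_of_subset himg2sub, himg2inj,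
        Finset.card_range]
    have h3p : 3 * S1.card ≤ a + 2 := by
      have hsub : S1.image (fun x => x / 3) ⊆ Finset.range ((a + 2) / 3) := by
        intro y hy
        obtain ⟨x, hx, he⟩ := Finset.mem_image.mp hy
        have := hS1x x hx
        rw [Finset.mem_range]
        omega
      have hinj : (S1.image (fun x => x / 3)).card = S1.card := by
        apply Finset.card_image_of_injOn
        intro x hx y hy he
        have := hS1x x hx; have := hS1x y hy
        dsimp only at he
        omega
      have := Finset.card_le_card hsub
      rw [hinj, Finset.card_range] at this
      omega
    have h3q : 3 * S2.card ≤ a + 1 := by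
      have hsub : S2.image (fun x => x / 3) ⊆ Finset.range ((a + 1) / 3) := by
        intro y hy
        obtain ⟨x, hx, he⟩ := Finset.mem_image.mp hy
        have := hS2x x hx
        rw [Finset.mem_range]
        omega
      have hinj : (S2.image (fun x => x / 3)).card = S2.card := by
        apply Finset.card_image_of_injOn
        intro x hx y hy he
        have := hS2x x hx; have := hS2x y hy
        dsimp only at he
        omega
      have := Finset.card_le_card hsub
      rw [hinj, Finset.card_range] at this
      omega
    -- part (a) : the core
    have hcore : ∃ c : Ptn, c.Strict ∧ double c = coreP 3 D := by
      rcases le_or_gt S2.card S1.card with hpq | hpq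
      · -- case S2.card ≤ S1.card
        set d := S1.card - S2.card with hdd
        have hd3 : 3 * d ≤ a + 2 := by omega
        have hda : d ≤ a := by omega
        set T := (Finset.range d).image (fun e => 3 * e + 1) with hTd
        have hTmem : ∀ x, x ∈ T ↔ ∃ e < d, 3 * e + 1 = x := by
          intro x
          rw [hTd, Finset.mem_image]
          constructor
          · rintro ⟨e, he, hee⟩
            exact ⟨e, Finset.mem_range.mp he, hee⟩
          · rintro ⟨e, he, hee⟩
            exact ⟨e, Finset.mem_range.mpr he, hee⟩
        have hTx : ∀ x ∈ T, 0 < x ∧ x ≤ 3 * d - 2 := by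
          intro x hx
          obtain ⟨e, he, hee⟩ := (hTmem x).mp hx
          omega
        set c := ptnOfFinset T (fun x hx => (hTx x hx).1) with hcd
        have hcs : c.Strict := ptnOfFinset_strict _ _
        have hclen : c.length = d := by
          rw [hcd, ptnOfFinset_length, hTd, Finset.card_image_of_injective, Finset.card_range]
          intro x y hxy
          dsimp only at hxy
          omega
        have hcp0 : c.part 0 ≤ 3 * d - 2 := by
          apply part_zero_le_of_forall
          intro x hx
          rw [hcd, ptnOfFinset_mem] at hx
          exact (hTx x hx).2
        have hcond : c.part 0 + c.length ≤ 3 * a := by omega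
        have hcorebeads : (Finset.range 3).biUnion
            (fun k => (Finset.range (runnerLevels 3 D k).card).image (fun s => 3 * s + k))
            = betaSet (double c) (3 * a) := by
          rw [betaSet_double c hcs (3 * a) hcond, hcd, ptnOfFinset_toFinset]
          ext p
          rw [Finset.mem_biUnion, Finset.mem_union, Finset.mem_sdiff, Finset.mem_range,
            Finset.mem_image, Finset.mem_image]
          constructor
          · rintro ⟨k, hk, hpk⟩
            rw [Finset.mem_range] at hk
            obtain ⟨s, hs, hse⟩ := Finset.mem_image.mp hpk
            rw [Finset.mem_range] at hs
            interval_cases k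
            · rw [hn0] at hs
              right
              refine ⟨by omega, ?_⟩
              rintro ⟨x, hxT, hxe⟩
              obtain ⟨e, he, hee⟩ := (hTmem x).mp hxT
              omega
            · rw [hn1] at hs
              rcases Nat.lt_or_ge s a with hsa | hsa
              · right
                refine ⟨by omega, ?_⟩
                rintro ⟨x, hxT, hxe⟩
                obtain ⟨e, he, hee⟩ := (hTmem x).mp hxT
                omega
              · left
                refine ⟨3 * (s - a) + 1, (hTmem _).mpr ⟨s - a, by omega, rfl⟩, by omega⟩
            · rw [hn2] at hs
              right
              refine ⟨by omega, ?_⟩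
              rintro ⟨x, hxT, hxe⟩
              obtain ⟨e, he, hee⟩ := (hTmem x).mp hxT
              omega
          · rintro (⟨x, hxT, hxe⟩ | ⟨hlt, hne⟩)
            · obtain ⟨e, he, hee⟩ := (hTmem x).mp hxT
              refine ⟨1, Finset.mem_range.mpr (by omega), ?_⟩
              apply Finset.mem_image.mpr
              refine ⟨a + e, Finset.mem_range.mpr ?_, by omega⟩
              rw [hn1]
              omega
            · have hp3 := Nat.mod_lt p (show 0 < 3 by omega)
              rcases Nat.lt_trichotomy (p % 3) 1 with h3 | h3 | h3
              · refine ⟨0, Finset.mem_range.mpr (by omega), ?_⟩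
                apply Finset.mem_image.mpr
                refine ⟨p / 3, Finset.mem_range.mpr ?_, by omega⟩
                rw [hn0]
                omega
              · refine ⟨1, Finset.mem_range.mpr (by omega), ?_⟩
                apply Finset.mem_image.mpr
                refine ⟨p / 3, Finset.mem_range.mpr ?_, by omega⟩
                rw [hn1]
                omega
              · have h32 : p % 3 = 2 := by omega
                have hplt : p / 3 < a - d := by
                  by_contra hcon
                  push_neg at hcon
                  apply hne
                  refine ⟨3 * (a - 1 - p / 3) + 1,
                    (hTmem _).mpr ⟨a - 1 - p / 3, by omega, rfl⟩, by omega⟩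
                refine ⟨2, Finset.mem_range.mpr (by omega), ?_⟩
                apply Finset.mem_image.mpr
                refine ⟨p / 3, Finset.mem_range.mpr ?_, by omega⟩
                rw [hn2]
                omega
        refine ⟨c, hcs, ?_⟩
        rw [coreP, hcorebeads]
        symm
        apply ptnOfBeads_betaSet
        rw [dlength hcs]
        omega
      · -- case S1.card < S2.card
        set d := S2.card - S1.card with hdd
        have hd3 : 3 * d ≤ a + 1 := by omega
        have hda : d ≤ a := by omega
        set T := (Finset.range d).image (fun e => 3 * e + 2) with hTd
        have hTmem : ∀ x, x ∈ T ↔ ∃ e < d, 3 * e + 2 = x := by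
          intro x
          rw [hTd, Finset.mem_image]
          constructor
          · rintro ⟨e, he, hee⟩
            exact ⟨e, Finset.mem_range.mp he, hee⟩
          · rintro ⟨e, he, hee⟩
            exact ⟨e, Finset.mem_range.mpr he, hee⟩
        have hTx : ∀ x ∈ T, 0 < x ∧ x ≤ 3 * d - 1 := by
          intro x hx
          obtain ⟨e, he, hee⟩ := (hTmem x).mp hx
          omega
        set c := ptnOfFinset T (fun x hx => (hTx x hx).1) with hcd
        have hcs : c.Strict := ptnOfFinset_strict _ _
        have hclen : c.length = d := by
          rw [hcd, ptnOfFinset_length, hTd, Finset.card_image_of_injective, Finset.card_range]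
          intro x y hxy
          dsimp only at hxy
          omega
        have hcp0 : c.part 0 ≤ 3 * d - 1 := by
          apply part_zero_le_of_forall
          intro x hx
          rw [hcd, ptnOfFinset_mem] at hx
          exact (hTx x hx).2
        have hcond : c.part 0 + c.length ≤ 3 * a := by omega
        have hcorebeads : (Finset.range 3).biUnion
            (fun k => (Finset.range (runnerLevels 3 D k).card).image (fun s => 3 * s + k))
            = betaSet (double c) (3 * a) := by
          rw [betaSet_double c hcs (3 * a) hcond, hcd, ptnOfFinset_toFinset]
          ext p
          rw [Finset.mem_biUnion, Finset.mem_union, Finset.mem_sdiff, Finset.mem_range,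
            Finset.mem_image, Finset.mem_image]
          constructor
          · rintro ⟨k, hk, hpk⟩
            rw [Finset.mem_range] at hk
            obtain ⟨s, hs, hse⟩ := Finset.mem_image.mp hpk
            rw [Finset.mem_range] at hs
            interval_cases k
            · rw [hn0] at hs
              right
              refine ⟨by omega, ?_⟩
              rintro ⟨x, hxT, hxe⟩
              obtain ⟨e, he, hee⟩ := (hTmem x).mp hxT
              omega
            · rw [hn1] at hs
              right
              refine ⟨by omega, ?_⟩
              rintro ⟨x, hxT, hxe⟩
              obtain ⟨e, he, hee⟩ := (hTmem x).mp hxT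
              omega
            · rw [hn2] at hs
              rcases Nat.lt_or_ge s a with hsa | hsa
              · right
                refine ⟨by omega, ?_⟩
                rintro ⟨x, hxT, hxe⟩
                obtain ⟨e, he, hee⟩ := (hTmem x).mp hxT
                omega
              · left
                refine ⟨3 * (s - a) + 2, (hTmem _).mpr ⟨s - a, by omega, rfl⟩, by omega⟩
          · rintro (⟨x, hxT, hxe⟩ | ⟨hlt, hne⟩)
            · obtain ⟨e, he, hee⟩ := (hTmem x).mp hxT
              refine ⟨2, Finset.mem_range.mpr (by omega), ?_⟩
              apply Finset.mem_image.mpr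
              refine ⟨a + e, Finset.mem_range.mpr ?_, by omega⟩
              rw [hn2]
              omega
            · have hp3 := Nat.mod_lt p (show 0 < 3 by omega)
              rcases Nat.lt_trichotomy (p % 3) 1 with h3 | h3 | h3
              · refine ⟨0, Finset.mem_range.mpr (by omega), ?_⟩
                apply Finset.mem_image.mpr
                refine ⟨p / 3, Finset.mem_range.mpr ?_, by omega⟩
                rw [hn0]
                omega
              · have hplt : p / 3 < a - d := by
                  by_contra hcon
                  push_neg at hcon
                  apply hne
                  refine ⟨3 * (a - 1 - p / 3) + 2,
                    (hTmem _).mpr ⟨a - 1 - p / 3, by omega, rfl⟩, by omega⟩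
                refine ⟨1, Finset.mem_range.mpr (by omega), ?_⟩
                apply Finset.mem_image.mpr
                refine ⟨p / 3, Finset.mem_range.mpr ?_, by omega⟩
                rw [hn1]
                omega
              · have h32 : p % 3 = 2 := by omega
                refine ⟨2, Finset.mem_range.mpr (by omega), ?_⟩
                apply Finset.mem_image.mpr
                refine ⟨p / 3, Finset.mem_range.mpr ?_, by omega⟩
                rw [hn2]
                omega
        refine ⟨c, hcs, ?_⟩
        rw [coreP, hcorebeads]
        symm
        apply ptnOfBeads_betaSet
        rw [dlength hcs]
        omega
    -- part (c) : conjugation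
    have hmemL1 : ∀ s, s ∈ L1 ↔
        ((a ≤ s ∧ 3 * (s - a) + 1 ∈ S) ∨ (s < a ∧ ¬ (3 * (a - 1 - s) + 2 ∈ S))) := by
      intro s
      rw [hL1d, Finset.mem_union, Finset.mem_sdiff, Finset.mem_range, Finset.mem_image,
        Finset.mem_image]
      constructor
      · rintro (⟨x, hx, he⟩ | ⟨hlt, hne⟩)
        · have := hS1x x hx
          rw [hS1d, Finset.mem_filter] at hx
          left
          have hxe : 3 * (s - a) + 1 = x := by omega
          rw [hxe]
          exact ⟨by omega, hx.1⟩
        · right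
          refine ⟨hlt, fun hmem => ?_⟩
          apply hne
          refine ⟨3 * (a - 1 - s) + 2, ?_, by omega⟩
          rw [hS2d, Finset.mem_filter]
          exact ⟨hmem, by omega⟩
      · rintro (⟨hsa, hmem⟩ | ⟨hlt, hne⟩)
        · left
          have hle := (hSx _ hmem).2
          refine ⟨3 * (s - a) + 1, ?_, by omega⟩
          rw [hS1d, Finset.mem_filter]
          exact ⟨hmem, by omega⟩
        · right
          refine ⟨hlt, ?_⟩
          rintro ⟨x, hx, he⟩
          have := hS2x x hx
          rw [hS2d, Finset.mem_filter] at hx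
          apply hne
          have hxe : 3 * (a - 1 - s) + 2 = x := by omega
          rw [hxe]
          exact hx.1
    have hmemL2 : ∀ s, s ∈ L2 ↔
        ((a ≤ s ∧ 3 * (s - a) + 2 ∈ S) ∨ (s < a ∧ ¬ (3 * (a - 1 - s) + 1 ∈ S))) := by
      intro s
      rw [hL2d, Finset.mem_union, Finset.mem_sdiff, Finset.mem_range, Finset.mem_image,
        Finset.mem_image]
      constructor
      · rintro (⟨x, hx, he⟩ | ⟨hlt, hne⟩)
        · have := hS2x x hx
          rw [hS2d, Finset.mem_filter] at hx
          left
          have hxe : 3 * (s - a) + 2 = x := by omega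
          rw [hxe]
          exact ⟨by omega, hx.1⟩
        · right
          refine ⟨hlt, fun hmem => ?_⟩
          apply hne
          refine ⟨3 * (a - 1 - s) + 1, ?_, by omega⟩
          rw [hS1d, Finset.mem_filter]
          exact ⟨hmem, by omega⟩
      · rintro (⟨hsa, hmem⟩ | ⟨hlt, hne⟩)
        · left
          have hle := (hSx _ hmem).2
          refine ⟨3 * (s - a) + 2, ?_, by omega⟩
          rw [hS2d, Finset.mem_filter]
          exact ⟨hmem, by omega⟩
        · right
          refine ⟨hlt, ?_⟩
          rintro ⟨x, hx, he⟩
          have := hS1x x hx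
          rw [hS1d, Finset.mem_filter] at hx
          apply hne
          have hxe : 3 * (a - 1 - s) + 1 = x := by omega
          rw [hxe]
          exact hx.1
    have hL1ub : ∀ s ∈ L1, s < 2 * a := by
      intro s hs
      rcases (hmemL1 s).mp hs with ⟨hsa, hmem⟩ | ⟨hlt, _⟩
      · have := (hSx _ hmem).2
        omega
      · omega
    have hL2ub : ∀ s ∈ L2, s < 2 * a := by
      intro s hs
      rcases (hmemL2 s).mp hs with ⟨hsa, hmem⟩ | ⟨hlt, _⟩
      · have := (hSx _ hmem).2
        omega
      · omega
    have hL1sub : L1 ⊆ Finset.range (2 * a) := fun s hs => Finset.mem_range.mpr (hL1ub s hs)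
    have hcompl : L2 = Finset.range (2 * a) \ L1.image (fun y => 2 * a - 1 - y) := by
      ext p
      rw [Finset.mem_sdiff, Finset.mem_range, Finset.mem_image]
      constructor
      · intro hp
        refine ⟨hL2ub p hp, ?_⟩
        rintro ⟨y, hy, hye⟩
        have hyub := hL1ub y hy
        rcases (hmemL1 y).mp hy with ⟨hya, hymem⟩ | ⟨hylt, hyne⟩
        · -- y ≥ a, so p = 2a-1-y < a
          rcases (hmemL2 p).mp hp with ⟨hpa, hpmem⟩ | ⟨hplt, hpne⟩
          · omega
          · apply hpne
            have he : 3 * (a - 1 - p) + 1 = 3 * (y - a) + 1 := by omega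
            rw [he]
            exact hymem
        · -- y < a, so p = 2a-1-y ≥ a
          rcases (hmemL2 p).mp hp with ⟨hpa, hpmem⟩ | ⟨hplt, hpne⟩
          · apply hyne
            have he : 3 * (a - 1 - y) + 2 = 3 * (p - a) + 2 := by omega
            rw [he]
            exact hpmem
          · omega
      · rintro ⟨hp2a, hne⟩
        apply (hmemL2 p).mpr
        rcases Nat.lt_or_ge p a with hpa | hpa
        · right
          refine ⟨hpa, fun hmem => ?_⟩
          apply hne
          refine ⟨2 * a - 1 - p, ?_, by omega⟩
          apply (hmemL1 _).mpr
          left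
          have he : 3 * ((2 * a - 1 - p) - a) + 1 = 3 * (a - 1 - p) + 1 := by omega
          rw [he]
          exact ⟨by omega, hmem⟩
        · left
          refine ⟨hpa, ?_⟩
          by_contra hmem
          apply hne
          refine ⟨2 * a - 1 - p, ?_, by omega⟩
          apply (hmemL1 _).mpr
          right
          have he : 3 * (a - 1 - (2 * a - 1 - p)) + 2 = 3 * (p - a) + 2 := by omega
          rw [he]
          exact ⟨by omega, hmem⟩
    have hconj : quotP 3 D 2 = (quotP 3 D 1).conj := by
      rw [quotP, quotP, hrun1, hrun2, hcompl]
      exact ptnOfBeads_compl (2 * a) L1 hL1sub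
    exact ⟨hcore, hb0, hconj⟩

end PfAux

/-- Proposition 3.5: for a strict partition `λ`, (1) there are strict partitions
`λ^{bc(3)}` and `λ^b[0]` with `D(λ^{bc(3)}) = D(λ)^{c(3)}` and `D(λ^b[0]) = D(λ)[0]`;
(2) `D(λ)[2]` is the conjugate of `D(λ)[1]`. -/
theorem stmt10 (lam : Ptn) (h : lam.Strict) :
    (∃ c : Ptn, c.Strict ∧ double c = coreP 3 (double lam)) ∧
    (∃ b0 : Ptn, b0.Strict ∧ double b0 = quotP 3 (double lam) 0) ∧
    quotP 3 (double lam) 2 = (quotP 3 (double lam) 1).conj := by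
  exact PfAux.main lam h
end
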